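/- arXiv:1912.05054 — 2 statements merged into one kernel-verified Lean document; each statement's English description precedes it below -/
import Mathlib

section
/- Let P be a finite polytopal complex and f : |P| → ℝ a generic PL function (linear on each cell, injective on vertices). If the preimage f⁻¹[a,b] contains no vertex of P, then the sublevel set f_a = {x : f(x) ≤ a} is a strong deformation retract of the sublevel set f_b = {x : f(x) ≤ b}. -/
open Set

section Jensen
variable {E : Type} [AddCommGroup E] [Module ℝ E]

/-- Finite Jensen equality for a function that is affine along segments of a convex set. -/
lemma affine_on_sum {C : Set E} (hC : Convex ℝ C) {f : E → ℝ}
    (haff : ∀ x ∈ C, ∀ y ∈ C, ∀ t ∈ Icc (0 : ℝ) 1,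
      f (t • x + (1 - t) • y) = t * f x + (1 - t) * f y)
    {ι : Type*} (t : Finset ι) (w : ι → ℝ) (v : ι → E) :
    (∀ i ∈ t, 0 ≤ w i) → (∑ i ∈ t, w i) = 1 → (∀ i ∈ t, v i ∈ C) →
    f (∑ i ∈ t, w i • v i) = ∑ i ∈ t, w i * f (v i) := by
  classical
  induction t using Finset.induction_on generalizing w with
  | empty => intro _ h1 _; simp at h1
  | @insert a t ha IH =>
    intro hw hsum hv
    rw [Finset.sum_insert ha] at hsum ⊢
    rw [Finset.sum_insert ha]
    set W : ℝ := ∑ i ∈ t, w i with hW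
    have hwa : 0 ≤ w a := hw a (Finset.mem_insert_self a t)
    have hWnn : 0 ≤ W := Finset.sum_nonneg fun i hi => hw i (Finset.mem_insert_of_mem hi)
    rcases eq_or_lt_of_le hWnn with hW0 | hWpos
    · have hall : ∀ i ∈ t, w i = 0 := by
        intro i hi
        exact (Finset.sum_eq_zero_iff_of_nonneg
          (fun j hj => hw j (Finset.mem_insert_of_mem hj))).mp hW0.symm i hi
      have hwa1 : w a = 1 := by rw [← hW0] at hsum; linarith
      have h1 : ∑ i ∈ t, w i • v i = 0 := Finset.sum_eq_zero fun i hi => by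
        rw [hall i hi, zero_smul]
      have h2 : ∑ i ∈ t, w i * f (v i) = 0 := Finset.sum_eq_zero fun i hi => by
        rw [hall i hi, zero_mul]
      rw [h1, h2, hwa1, one_smul, add_zero, one_mul, add_zero]
    · have hva : v a ∈ C := hv a (Finset.mem_insert_self a t)
      have hw' : ∀ i ∈ t, 0 ≤ w i / W := fun i hi =>
        div_nonneg (hw i (Finset.mem_insert_of_mem hi)) hWnn
      have hsum' : (∑ i ∈ t, w i / W) = 1 := by
        rw [← Finset.sum_div]; exact div_self hWpos.ne'
      have hv' : ∀ i ∈ t, v i ∈ C := fun i hi => hv i (Finset.mem_insert_of_mem hi)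
      set u : E := ∑ i ∈ t, (w i / W) • v i with hu
      have huC : u ∈ C := hC.sum_mem hw' hsum' hv'
      have hWu : W • u = ∑ i ∈ t, w i • v i := by
        rw [hu, Finset.smul_sum]
        refine Finset.sum_congr rfl fun i hi => ?_
        rw [smul_smul, mul_div_cancel₀ _ hWpos.ne']
      have hwaW : w a = 1 - W := by linarith
      have hkey : f (w a • v a + W • u) = w a * f (v a) + W * f u := by
        have h := haff (v a) hva u huC (w a) ⟨hwa, by linarith⟩
        rw [hwaW] at h ⊢
        simpa [sub_sub_cancel] using h
      have hIH := IH (fun i => w i / W) hw' hsum' hv'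
      rw [← hWu, hkey, hIH]
      rw [Finset.mul_sum]
      rw [Finset.sum_congr rfl (fun i hi => by rw [← mul_assoc, mul_div_cancel₀ _ hWpos.ne'] :
        ∀ i ∈ t, W * (w i / W * f (v i)) = w i * f (v i))]

end Jensen

section GraphCont
variable {E : Type} [NormedAddCommGroup E] [NormedSpace ℝ E]

/-- Representation of a point of the hull of a finset. -/
lemma exists_rep {s : Finset E} {x : E} (hx : x ∈ convexHull ℝ (s : Set E)) :
    ∃ w : E → ℝ, (∀ y ∈ s, 0 ≤ w y) ∧ (∑ y ∈ s, w y) = 1 ∧ (∑ y ∈ s, w y • y) = x := by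
  rw [Finset.convexHull_eq] at hx
  obtain ⟨w, hw0, hw1, hwx⟩ := hx
  exact ⟨w, hw0, hw1, by rw [← Finset.centerMass_eq_of_sum_1 _ _ hw1]; exact hwx⟩

/-- A function affine along segments of a polytope is continuous on it. -/
lemma continuousOn_of_affineOn {s : Finset E} {C : Set E} (hCs : C = convexHull ℝ (s : Set E))
    {f : E → ℝ}
    (haff : ∀ x ∈ C, ∀ y ∈ C, ∀ t ∈ Icc (0 : ℝ) 1,
      f (t • x + (1 - t) • y) = t * f x + (1 - t) * f y) :
    ContinuousOn f C := by
  classical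
  have hC : Convex ℝ C := hCs ▸ convex_convexHull ℝ _
  set s' : Finset (E × ℝ) := s.image (fun v => (v, f v)) with hs'
  set G : Set (E × ℝ) := convexHull ℝ (s' : Set (E × ℝ)) with hG
  have hsC : ∀ y ∈ s, y ∈ C := fun y hy => hCs ▸ subset_convexHull ℝ _ hy
  have hGcomp : IsCompact G := (s'.finite_toSet).isCompact_convexHull ℝ
  -- every element of G is a graph point
  have claim1 : ∀ z ∈ G, z.1 ∈ C ∧ z.2 = f z.1 := by
    intro z hz
    obtain ⟨w, hw0, hw1, hwz⟩ := exists_rep hz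
    have hfst : z.1 = ∑ y ∈ s', w y • y.1 := by
      rw [← hwz]; rw [Prod.fst_sum]; exact Finset.sum_congr rfl fun y _ => rfl
    have hsnd : z.2 = ∑ y ∈ s', w y * y.2 := by
      rw [← hwz]; rw [Prod.snd_sum]; exact Finset.sum_congr rfl fun y _ => rfl
    have hy1C : ∀ y ∈ s', y.1 ∈ C := by
      intro y hy
      obtain ⟨v, hv, rfl⟩ := Finset.mem_image.mp hy
      exact hsC v hv
    have hy2 : ∀ y ∈ s', y.2 = f y.1 := by
      intro y hy
      obtain ⟨v, hv, rfl⟩ := Finset.mem_image.mp hy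
      rfl
    constructor
    · rw [hfst]; exact hC.sum_mem (fun i hi => hw0 i hi) hw1 hy1C
    · rw [hsnd, hfst, affine_on_sum hC haff s' w (fun y => y.1) hw0 hw1 hy1C]
      exact Finset.sum_congr rfl fun y hy => by rw [hy2 y hy]
  have claim2 : ∀ x ∈ C, (x, f x) ∈ G := by
    intro x hx
    obtain ⟨w, hw0, hw1, hwx⟩ := exists_rep (hCs ▸ hx)
    have : (x, f x) = ∑ y ∈ s, w y • (y, f y) := by
      have h1 : (∑ y ∈ s, w y • (y, f y)).1 = x := by
        rw [Prod.fst_sum]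
        rw [Finset.sum_congr rfl (fun y _ => rfl : ∀ y ∈ s, (w y • (y, f y)).1 = w y • y)]
        exact hwx
      have h2 : (∑ y ∈ s, w y • (y, f y)).2 = f x := by
        rw [Prod.snd_sum]
        simp only [Prod.smul_snd, smul_eq_mul]
        rw [← affine_on_sum hC haff s w (fun y => y) hw0 hw1 hsC]
        simp only [hwx]
      exact (Prod.ext h1 h2).symm
    rw [this]
    refine Convex.sum_mem (convex_convexHull ℝ _) (fun i hi => hw0 i hi) hw1 ?_
    intro y hy
    exact subset_convexHull ℝ _ (Finset.mem_image_of_mem _ hy)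
  -- the graph is homeomorphic to C via the projection
  have : IsCompact C := hCs ▸ s.finite_toSet.isCompact_convexHull ℝ
  haveI : CompactSpace ↥G := isCompact_iff_compactSpace.mp hGcomp
  let eqv : ↥G ≃ ↥C :=
    { toFun := fun z => ⟨z.1.1, (claim1 z.1 z.2).1⟩
      invFun := fun x => ⟨(x.1, f x.1), claim2 x.1 x.2⟩
      left_inv := by
        rintro ⟨z, hz⟩
        apply Subtype.ext
        exact Prod.ext rfl ((claim1 z hz).2).symm
      right_inv := by rintro ⟨x, hx⟩; rfl }
  have hcont : Continuous eqv := by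
    exact Continuous.subtype_mk (continuous_fst.comp continuous_subtype_val) _
  let homeo := hcont.homeoOfEquivCompactToT2
  rw [continuousOn_iff_continuous_restrict]
  have hre : C.domRestrict f = (fun z : ↥G => z.1.2) ∘ homeo.symm := by
    funext x
    have h1 : (homeo.symm x).1.1 = (x : E) := by
      have := homeo.apply_symm_apply x
      exact congrArg Subtype.val this
    have h2 := (claim1 (homeo.symm x).1 (homeo.symm x).2).2
    simp only [Function.comp_apply, Set.domRestrict_apply]
    rw [h2, h1]
  rw [hre]
  exact (continuous_snd.comp continuous_subtype_val).comp homeo.symm.continuous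

end GraphCont

section Glue
variable {E : Type} [TopologicalSpace E]

/-- Gluing finitely many functions on closed pieces. -/
lemma glue_pieces {ι : Type} (t : Finset ι) (A : ι → Set E) (F : ι → E → E)
    (hcl : ∀ i ∈ t, IsClosed (A i))
    (hcont : ∀ i ∈ t, ContinuousOn (F i) (A i))
    (hagree : ∀ i ∈ t, ∀ j ∈ t, ∀ x, x ∈ A i → x ∈ A j → F i x = F j x) :
    ∃ g : E → E, ContinuousOn g (⋃ i ∈ t, A i) ∧ ∀ i ∈ t, ∀ x ∈ A i, g x = F i x := by
  classical
  set g : E → E := fun x => if h : ∃ i, i ∈ t ∧ x ∈ A i then F h.choose x else x with hg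
  have hgval : ∀ i ∈ t, ∀ x ∈ A i, g x = F i x := by
    intro i hi x hx
    have h : ∃ j, j ∈ t ∧ x ∈ A j := ⟨i, hi, hx⟩
    rw [hg]
    simp only [dif_pos h]
    exact hagree h.choose h.choose_spec.1 i hi x h.choose_spec.2 hx
  refine ⟨g, ?_, hgval⟩
  rw [continuousOn_iff_isClosed]
  intro K hK
  have hu : ∀ i ∈ t, ∃ u, IsClosed u ∧ F i ⁻¹' K ∩ A i = u ∩ A i := by
    intro i hi
    exact (continuousOn_iff_isClosed.mp (hcont i hi)) K hK
  choose! u hucl hueq using hu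
  refine ⟨⋃ i ∈ t, (u i ∩ A i), ?_, ?_⟩
  · exact t.finite_toSet.isClosed_biUnion fun i hi => (hucl i hi).inter (hcl i hi)
  · ext x
    simp only [mem_inter_iff, mem_preimage, mem_iUnion, exists_prop]
    constructor
    · rintro ⟨hxK, i, hi, hxA⟩
      refine ⟨⟨i, hi, ?_⟩, ⟨i, hi, hxA⟩⟩
      have : x ∈ F i ⁻¹' K ∩ A i := ⟨by
        simp only [Set.mem_preimage]; rw [← hgval i hi x hxA]; exact hxK, hxA⟩
      rw [hueq i hi] at this
      exact ⟨this.1, hxA⟩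
    · rintro ⟨⟨i, hi, hxu, hxA⟩, hS⟩
      have : x ∈ F i ⁻¹' K ∩ A i := by rw [hueq i hi]; exact ⟨hxu, hxA⟩
      exact ⟨by rw [hgval i hi x hxA]; exact this.1, hS⟩

end Glue

section Proj
open RealInnerProductSpace
variable {F : Type} [NormedAddCommGroup F] [InnerProductSpace ℝ F]

/-- Continuous nearest-point retraction onto a nonempty compact convex set. -/
lemma exists_proj_retraction {K : Set F} (hne : K.Nonempty) (hcomp : IsCompact K)
    (hconv : Convex ℝ K) :
    ∃ p : F → F, Continuous p ∧ (∀ u, p u ∈ K) ∧ ∀ u ∈ K, p u = u := by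
  classical
  have hex : ∀ u : F, ∃ v ∈ K, ‖u - v‖ = ⨅ w : K, ‖u - (w : F)‖ :=
    exists_norm_eq_iInf_of_complete_convex hne hcomp.isComplete hconv
  set p : F → F := fun u => (hex u).choose with hp
  have hmem : ∀ u, p u ∈ K := fun u => (hex u).choose_spec.1
  have hchar : ∀ u, ∀ w ∈ K, ⟪u - p u, w - p u⟫ ≤ (0 : ℝ) := by
    intro u
    exact (norm_eq_iInf_iff_real_inner_le_zero hconv (hmem u)).mp (hex u).choose_spec.2
  have hlip : ∀ u v : F, ‖p u - p v‖ ≤ ‖u - v‖ := by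
    intro u v
    have h1 : ⟪u - p u, p v - p u⟫ ≤ (0:ℝ) := hchar u (p v) (hmem v)
    have h2 : ⟪v - p v, p u - p v⟫ ≤ (0:ℝ) := hchar v (p u) (hmem u)
    have hkey : ‖p u - p v‖ ^ 2 ≤ ⟪u - v, p u - p v⟫ := by
      have e2 : ⟪v - p v, p u - p v⟫ = ⟪v - u, p u - p v⟫ + ⟪u - p v, p u - p v⟫ := by
        rw [← inner_add_left]; congr 1; abel
      have e25 : ⟪u - p v, p u - p v⟫ = ⟪u - p u, p u - p v⟫ + ⟪p u - p v, p u - p v⟫ := by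
        rw [← inner_add_left]; congr 1; abel
      have e3 : ⟪u - p u, p v - p u⟫ = -⟪u - p u, p u - p v⟫ := by
        rw [← inner_neg_right]; congr 1; abel
      have e4 : ⟪v - u, p u - p v⟫ = -⟪u - v, p u - p v⟫ := by
        rw [← inner_neg_left]; congr 1; abel
      have e5 : ⟪p u - p v, p u - p v⟫ = ‖p u - p v‖ ^ 2 :=
        real_inner_self_eq_norm_sq _
      nlinarith [h1, h2]
    have hcs := real_inner_le_norm (u - v) (p u - p v)
    rcases eq_or_lt_of_le (norm_nonneg (p u - p v)) with h0 | hpos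
    · rw [← h0]; exact norm_nonneg _
    · nlinarith
  have hfix : ∀ u ∈ K, p u = u := by
    intro u hu
    have h := hchar u u hu
    have h2 : ⟪u - p u, u - p u⟫ = ‖u - p u‖ ^ 2 := real_inner_self_eq_norm_sq _
    have h3 : ‖u - p u‖ = 0 := by nlinarith [norm_nonneg (u - p u)]
    exact (norm_sub_eq_zero_iff.mp h3).symm
  refine ⟨p, ?_, hmem, hfix⟩
  have : LipschitzWith 1 p := by
    refine LipschitzWith.of_dist_le_mul fun u v => ?_
    rw [dist_eq_norm, dist_eq_norm, NNReal.coe_one, one_mul]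
    exact hlip u v
  exact this.continuous

end Proj

section Extend
variable {E : Type} [NormedAddCommGroup E] [NormedSpace ℝ E]

/-- Extension of a continuous map with values in a compact convex set `T` lying in a
finite-dimensional affine subspace, from a closed subset `Z` to all of `Q`. -/
lemma exists_extension_into_convex (Q Z T : Set E) (x₀ : E) (V : Submodule ℝ E)
    [FiniteDimensional ℝ ↥V]
    (hZQ : Z ⊆ Q) (hZ : IsClosed Z)
    (ψ : E → E) (hψ : ContinuousOn ψ Z) (hψT : ∀ x ∈ Z, ψ x ∈ T)
    (hTne : T.Nonempty) (hTcomp : IsCompact T) (hTconv : Convex ℝ T)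
    (hTV : ∀ y ∈ T, y - x₀ ∈ V) :
    ∃ g : E → E, ContinuousOn g Q ∧ (∀ x ∈ Z, g x = ψ x) ∧ ∀ x ∈ Q, g x ∈ T := by
  classical
  set n := Module.finrank ℝ ↥V with hn
  set bas : Module.Basis (Fin n) ℝ ↥V := Module.finBasis ℝ ↥V with hbas
  set Z' : Set ↥Q := Subtype.val ⁻¹' Z with hZ'
  have hZ'cl : IsClosed Z' := hZ.preimage continuous_subtype_val
  -- the map into V over Z'
  have hvmem : ∀ q : ↥Z', ψ ((q : ↥Q) : E) - x₀ ∈ V := fun q =>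
    hTV _ (hψT _ q.2)
  set v : ↥Z' → ↥V := fun q => ⟨ψ ((q : ↥Q) : E) - x₀, hvmem q⟩ with hv
  have hvcont : Continuous v := by
    refine Continuous.subtype_mk ?_ _
    refine Continuous.sub ?_ continuous_const
    exact hψ.comp_continuous (continuous_subtype_val.comp continuous_subtype_val)
      (fun q => q.2)
  have hcoordcont : Continuous (fun u : ↥V => bas.equivFun u) :=
    LinearMap.continuous_of_finiteDimensional bas.equivFun.toLinearMap
  -- Tietze extension of each coordinate
  have hext : ∀ i : Fin n, ∃ g : C(↥Q, ℝ), ∀ q : ↥Z', g ((q : ↥Q)) = bas.equivFun (v q) i := by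
    intro i
    have hφ : Continuous (fun q : ↥Z' => bas.equivFun (v q) i) :=
      (continuous_apply i).comp (hcoordcont.comp hvcont)
    obtain ⟨g, hg⟩ := ContinuousMap.exists_restrict_eq (Y := ℝ) hZ'cl ⟨_, hφ⟩
    exact ⟨g, fun q => by
      have := congrFun (congrArg ContinuousMap.toFun hg) q
      simpa using this⟩
  choose Gf hGf using hext
  set w : ↥Q → ↥V := fun q => ∑ i : Fin n, Gf i q • bas i with hw
  have hwcont : Continuous w := by
    refine continuous_finset_sum _ fun i _ => ?_
    exact ((Gf i).continuous).smul continuous_const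
  have hwZ : ∀ q : ↥Q, (hq : (q : E) ∈ Z) → w q = ⟨ψ (q : E) - x₀, hTV _ (hψT _ hq)⟩ := by
    intro q hq
    have hq' : q ∈ Z' := hq
    have : ∀ i, Gf i q = bas.equivFun (v ⟨q, hq'⟩) i := fun i => hGf i ⟨q, hq'⟩
    rw [hw]
    simp only [this]
    exact bas.sum_equivFun (v ⟨q, hq'⟩)
  -- the target set inside V
  set SV : Set ↥V := {u : ↥V | x₀ + (u : E) ∈ T} with hSV
  have hSVconv : Convex ℝ SV := by
    intro u1 h1 u2 h2 α β hα hβ hαβ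
    have hcoe : ((α • u1 + β • u2 : ↥V) : E) = α • (u1 : E) + β • (u2 : E) := by
      push_cast; rfl
    have hrw : x₀ + ((α • u1 + β • u2 : ↥V) : E)
        = α • (x₀ + (u1 : E)) + β • (x₀ + (u2 : E)) := by
      have hx : α • x₀ + β • x₀ = x₀ := by rw [← add_smul, hαβ, one_smul]
      have h1 : α • (x₀ + (u1 : E)) + β • (x₀ + (u2 : E))
          = (α • x₀ + β • x₀) + (α • (u1 : E) + β • (u2 : E)) := by
        rw [smul_add, smul_add]; abel
      rw [hcoe, h1, hx]
    show x₀ + ((α • u1 + β • u2 : ↥V) : E) ∈ T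
    rw [hrw]
    exact hTconv h1 h2 hα hβ hαβ
  have hSVne : SV.Nonempty := by
    obtain ⟨y, hy⟩ := hTne
    exact ⟨⟨y - x₀, hTV y hy⟩, show x₀ + (y - x₀) ∈ T by simpa using hy⟩
  have hSVcomp : IsCompact SV := by
    have himg : IsCompact ((fun y => y - x₀) '' T) :=
      hTcomp.image (continuous_id.sub continuous_const)
    have hVcl : IsClosed (V : Set E) := Submodule.closed_of_finiteDimensional V
    have hemb : Topology.IsClosedEmbedding (Subtype.val : ↥V → E) :=
      Topology.IsClosedEmbedding.subtypeVal hVcl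
    have heq : SV = Subtype.val ⁻¹' ((fun y => y - x₀) '' T) := by
      ext u
      simp only [hSV, mem_setOf_eq, mem_preimage, mem_image]
      constructor
      · intro h; exact ⟨x₀ + (u : E), h, by abel⟩
      · rintro ⟨y, hy, hyu⟩
        have : (u : E) = y - x₀ := hyu.symm
        rw [this]
        simpa using hy
    rw [heq]
    exact hemb.isCompact_preimage himg
  -- transfer to Euclidean space and project
  set ee := toEuclidean (E := ↥V) with hee
  set K : Set (EuclideanSpace ℝ (Fin (Module.finrank ℝ ↥V))) := ee '' SV with hK
  have hKne : K.Nonempty := hSVne.image _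
  have hKcomp : IsCompact K := hSVcomp.image ee.continuous
  have hKconv : Convex ℝ K := by
    have := hSVconv.linear_image (ee.toLinearEquiv.toLinearMap)
    exact this
  obtain ⟨pr, hprcont, hprmem, hprfix⟩ := exists_proj_retraction hKne hKcomp hKconv
  set g : E → E := fun x =>
    if h : x ∈ Q then x₀ + ((ee.symm (pr (ee (w ⟨x, h⟩)))) : E) else x with hg
  have hgval : ∀ x : E, (h : x ∈ Q) → g x = x₀ + ((ee.symm (pr (ee (w ⟨x, h⟩)))) : E) := by
    intro x h
    rw [hg]
    simp only [dif_pos h]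
  have hgT : ∀ x ∈ Q, g x ∈ T := by
    intro x h
    rw [hgval x h]
    have : pr (ee (w ⟨x, h⟩)) ∈ K := hprmem _
    obtain ⟨u, hu, hue⟩ := this
    rw [← hue, ContinuousLinearEquiv.symm_apply_apply]
    exact hu
  have hgZ : ∀ x ∈ Z, g x = ψ x := by
    intro x hx
    have hxQ : x ∈ Q := hZQ hx
    rw [hgval x hxQ]
    rw [hwZ ⟨x, hxQ⟩ hx]
    have hmemSV : (⟨ψ x - x₀, hTV _ (hψT _ hx)⟩ : ↥V) ∈ SV := by
      show x₀ + (ψ x - x₀) ∈ T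
      simpa using hψT x hx
    have : pr (ee ⟨ψ x - x₀, hTV _ (hψT _ hx)⟩) = ee ⟨ψ x - x₀, hTV _ (hψT _ hx)⟩ :=
      hprfix _ ⟨_, hmemSV, rfl⟩
    rw [this, ContinuousLinearEquiv.symm_apply_apply]
    show x₀ + (ψ x - x₀) = ψ x
    abel
  refine ⟨g, ?_, hgZ, hgT⟩
  rw [continuousOn_iff_continuous_restrict]
  have hre : Q.domRestrict g = fun q : ↥Q => x₀ + ((ee.symm (pr (ee (w q)))) : E) := by
    funext q
    rw [Set.domRestrict_apply, hgval (q : E) q.2]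
  rw [hre]
  exact continuous_const.add (continuous_subtype_val.comp
    (ee.symm.continuous.comp (hprcont.comp (ee.continuous.comp hwcont))))

end Extend

/-- A finite polytopal complex in a real normed space: a finite collection of
(nonempty, compact) convex polytopes, closed under passing to (exposed) faces, such
that any two cells meet in a common face. -/
structure PolytopalComplex (E : Type) [NormedAddCommGroup E] [NormedSpace ℝ E] where
  cells : Set (Set E)
  finite : cells.Finite
  nonempty_cell : ∀ C ∈ cells, C.Nonempty
  polytope : ∀ C ∈ cells, ∃ s : Finset E, C = convexHull ℝ (s : Set E)
  face_mem : ∀ C ∈ cells, ∀ F : Set E, IsExposed ℝ C F → F.Nonempty → F ∈ cells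
  inter_face : ∀ C ∈ cells, ∀ D ∈ cells, (C ∩ D).Nonempty → IsExposed ℝ C (C ∩ D)

namespace PolytopalComplex

variable {E : Type} [NormedAddCommGroup E] [NormedSpace ℝ E]

/-- The underlying space of the complex. -/
def space (P : PolytopalComplex E) : Set E := ⋃ C ∈ P.cells, C

/-- The vertices: the zero-dimensional cells. -/
def vertices (P : PolytopalComplex E) : Set E := {v | {v} ∈ P.cells}

/-- A function is generic PL on `P` if it is affine on each cell and assigns
distinct values to distinct vertices. -/
structure IsGenericPL (P : PolytopalComplex E) (f : E → ℝ) : Prop where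
  affineOn : ∀ C ∈ P.cells, ∀ x ∈ C, ∀ y ∈ C, ∀ t ∈ Icc (0 : ℝ) 1,
    f (t • x + (1 - t) • y) = t * f x + (1 - t) * f y
  injOn : Set.InjOn f P.vertices

/-- The sublevel set `f_a` of `f` in the space of `P`. -/
def sublevel (P : PolytopalComplex E) (f : E → ℝ) (a : ℝ) : Set E :=
  {x ∈ P.space | f x ≤ a}

end PolytopalComplex

section Cells
variable {E : Type} [NormedAddCommGroup E] [NormedSpace ℝ E]
variable {P : PolytopalComplex E} {f : E → ℝ}

lemma cell_convex {C : Set E} (hC : C ∈ P.cells) : Convex ℝ C := by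
  obtain ⟨s, rfl⟩ := P.polytope C hC
  exact convex_convexHull ℝ _

lemma cell_compact {C : Set E} (hC : C ∈ P.cells) : IsCompact C := by
  obtain ⟨s, rfl⟩ := P.polytope C hC
  exact s.finite_toSet.isCompact_convexHull ℝ

lemma cell_continuousOn (hf : P.IsGenericPL f) {C : Set E} (hC : C ∈ P.cells) :
    ContinuousOn f C := by
  obtain ⟨s, hs⟩ := P.polytope C hC
  exact continuousOn_of_affineOn hs (hf.affineOn C hC)

/-- The vectorSpan of a cell is finite dimensional. -/
lemma cell_fd {C : Set E} (hC : C ∈ P.cells) :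
    FiniteDimensional ℝ ↥(vectorSpan ℝ C) := by
  obtain ⟨s, rfl⟩ := P.polytope C hC
  have h1 : vectorSpan ℝ (convexHull ℝ (s : Set E)) = vectorSpan ℝ (s : Set E) := by
    rw [← direction_affineSpan, ← direction_affineSpan, affineSpan_convexHull]
  rw [h1, vectorSpan_def]
  exact FiniteDimensional.span_of_finite ℝ (s.finite_toSet.vsub s.finite_toSet)

/-- An exposed proper face of a cell has strictly smaller dimension. -/
lemma dim_lt_of_exposed {C F : Set E} (hC : C ∈ P.cells)
    (hF : IsExposed ℝ C F) (hFne : F.Nonempty) (hne : F ≠ C) :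
    Module.finrank ℝ ↥(vectorSpan ℝ F) < Module.finrank ℝ ↥(vectorSpan ℝ C) := by
  haveI := cell_fd hC
  have hFC : F ⊆ C := hF.subset
  have hle : vectorSpan ℝ F ≤ vectorSpan ℝ C := vectorSpan_mono ℝ hFC
  by_contra hcon
  push_neg at hcon
  have heq : vectorSpan ℝ F = vectorSpan ℝ C :=
    Submodule.eq_of_le_of_finrank_le hle hcon
  obtain ⟨l, hl⟩ := hF hFne
  have hker : ∀ u ∈ vectorSpan ℝ F, l u = 0 := by
    have hgen : (F -ᵥ F) ⊆ (LinearMap.ker (l : E →ₗ[ℝ] ℝ) : Set E) := by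
      rintro u ⟨y1, hy1, y2, hy2, rfl⟩
      have h1 : l y1 ≤ l y2 := by rw [hl] at hy2; exact hy2.2 y1 (hl ▸ hy1).1
      have h2 : l y2 ≤ l y1 := by rw [hl] at hy1; exact hy1.2 y2 (hl ▸ hy2).1
      have : l y1 = l y2 := le_antisymm h1 h2
      simp only [SetLike.mem_coe, LinearMap.mem_ker, ContinuousLinearMap.coe_coe]
      rw [vsub_eq_sub, map_sub]
      linarith
    intro u hu
    have : vectorSpan ℝ F ≤ LinearMap.ker (l : E →ₗ[ℝ] ℝ) := by
      rw [vectorSpan_def]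
      exact Submodule.span_le.mpr hgen
    exact this hu
  -- then l is constant on C, so F = C
  have hCF : C ⊆ F := by
    intro x hx
    rw [hl]
    refine ⟨hx, fun y hy => ?_⟩
    have : y - x ∈ vectorSpan ℝ C := by
      rw [vectorSpan_def]
      exact Submodule.subset_span ⟨y, hy, x, hx, rfl⟩
    rw [← heq] at this
    have := hker _ this
    rw [map_sub] at this
    linarith
  exact hne (le_antisymm hFC hCF)

/-- A zero-dimensional cell is a singleton. -/
lemma cell_dim_zero {C : Set E} (hC : C ∈ P.cells)
    (h0 : Module.finrank ℝ ↥(vectorSpan ℝ C) = 0) : ∃ v, C = {v} := by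
  haveI := cell_fd hC
  have hbot : vectorSpan ℝ C = ⊥ := Submodule.finrank_eq_zero.mp h0
  obtain ⟨v, hv⟩ := P.nonempty_cell C hC
  refine ⟨v, ?_⟩
  ext x
  simp only [mem_singleton_iff]
  constructor
  · intro hx
    have : x - v ∈ vectorSpan ℝ C := by
      rw [vectorSpan_def]
      exact Submodule.subset_span ⟨x, hx, v, hv, rfl⟩
    rw [hbot] at this
    have := Submodule.mem_bot ℝ |>.mp this
    have : x = v := by rwa [sub_eq_zero] at this
    exact this
  · rintro rfl; exact hv

end Cells

section Vertex
variable {E : Type} [NormedAddCommGroup E] [NormedSpace ℝ E]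
variable {P : PolytopalComplex E} {f : E → ℝ}

lemma linear_comb (l : E →L[ℝ] ℝ) (t : Finset E) (w : E → ℝ) :
    l (∑ z ∈ t, w z • z) = ∑ z ∈ t, w z * l z := by
  rw [map_sum]
  exact Finset.sum_congr rfl fun z _ => by rw [map_smul, smul_eq_mul]

/-- Every extreme point of a cell is a singleton cell of the complex. -/
lemma extremePoint_cell {C : Set E} (hC : C ∈ P.cells) {y₀ : E}
    (hy₀ : y₀ ∈ extremePoints ℝ C) : {y₀} ∈ P.cells := by
  classical
  obtain ⟨s, hCs⟩ := P.polytope C hC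
  have hCconv : Convex ℝ C := cell_convex hC
  have hCcomp : IsCompact C := cell_compact hC
  have hextsub : extremePoints ℝ C ⊆ (s : Set E) := by
    rw [hCs]; exact extremePoints_convexHull_subset
  have hextfin : (extremePoints ℝ C).Finite := s.finite_toSet.subset hextsub
  set extF : Finset E := hextfin.toFinset with hextF
  have hextFcoe : (extF : Set E) = extremePoints ℝ C := hextfin.coe_toFinset
  have hextC : ∀ z ∈ extF, z ∈ C := by
    intro z hz
    have hz' : z ∈ (extF : Set E) := hz
    rw [hextFcoe] at hz'
    exact extremePoints_subset hz'
  have hKM : convexHull ℝ (extF : Set E) = C := by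
    have h1 := closure_convexHull_extremePoints hCcomp hCconv
    have h2 : IsClosed (convexHull ℝ (extremePoints ℝ C)) :=
      (hextfin.isCompact_convexHull ℝ).isClosed
    rw [hextFcoe, ← h2.closure_eq, h1]
  have hy₀C : y₀ ∈ C := extremePoints_subset hy₀
  have hy₀F : y₀ ∈ extF := by rw [← hextFcoe] at hy₀; exact hy₀
  -- y₀ is not in the hull of the other extreme points
  have hy₀notin : y₀ ∉ convexHull ℝ ((extF.erase y₀ : Finset E) : Set E) := by
    intro hmem
    obtain ⟨w, hw0, hw1, hwx⟩ := exists_rep hmem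
    obtain ⟨z₀, hz₀mem, hz₀ne⟩ : ∃ z₀ ∈ extF.erase y₀, w z₀ ≠ 0 := by
      by_contra hcon
      push_neg at hcon
      rw [Finset.sum_eq_zero hcon] at hw1
      norm_num at hw1
    have hz₀pos : 0 < w z₀ := lt_of_le_of_ne (hw0 z₀ hz₀mem) (Ne.symm hz₀ne)
    have hz₀y₀ : z₀ ≠ y₀ := Finset.ne_of_mem_erase hz₀mem
    have hz₀C : z₀ ∈ C := hextC z₀ (Finset.mem_of_mem_erase hz₀mem)
    set c := w z₀ with hc
    have hc1 : c ≤ 1 := by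
      rw [← hw1]
      exact Finset.single_le_sum (fun i hi => hw0 i hi) hz₀mem
    have hsplit : c • z₀ + ∑ z ∈ (extF.erase y₀).erase z₀, w z • z = y₀ := by
      have h := Finset.add_sum_erase (extF.erase y₀) (fun z => w z • z) hz₀mem
      rw [hwx] at h
      rw [hc]
      exact h
    have hsum' : ∑ z ∈ (extF.erase y₀).erase z₀, w z = 1 - c := by
      have h := Finset.add_sum_erase (extF.erase y₀) w hz₀mem
      rw [hw1] at h
      rw [hc]
      linarith
    rcases eq_or_lt_of_le hc1 with hceq | hclt
    · -- all remaining weight vanishes, y₀ = z₀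
      have hrest : ∀ z ∈ (extF.erase y₀).erase z₀, w z = 0 := by
        have h0 : ∑ z ∈ (extF.erase y₀).erase z₀, w z = 0 := by rw [hsum', ← hceq]; ring
        exact fun z hz => (Finset.sum_eq_zero_iff_of_nonneg
          (fun i hi => hw0 i (Finset.mem_of_mem_erase hi))).mp h0 z hz
      have : y₀ = z₀ := by
        rw [← hsplit, Finset.sum_eq_zero (fun z hz => by rw [hrest z hz, zero_smul]),
          add_zero, hceq, one_smul]
      exact hz₀y₀ this.symm
    · -- y₀ is in the open segment from z₀ to the rest
      set m : E := (1 - c)⁻¹ • ∑ z ∈ (extF.erase y₀).erase z₀, w z • z with hm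
      have hcne : (1 : ℝ) - c ≠ 0 := by linarith
      have hmC : m ∈ C := by
        have : m = ∑ z ∈ (extF.erase y₀).erase z₀, ((1 - c)⁻¹ * w z) • z := by
          rw [hm, Finset.smul_sum]
          exact Finset.sum_congr rfl fun z _ => by rw [smul_smul]
        rw [this]
        refine hCconv.sum_mem (fun i hi => ?_) ?_ (fun i hi =>
          hextC i (Finset.mem_of_mem_erase (Finset.mem_of_mem_erase hi)))
        · exact mul_nonneg (inv_nonneg.mpr (by linarith)) (hw0 i (Finset.mem_of_mem_erase hi))
        · rw [← Finset.mul_sum, hsum', inv_mul_cancel₀ hcne]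
      have hseg : y₀ ∈ openSegment ℝ z₀ m := by
        refine ⟨c, 1 - c, hz₀pos, by linarith, by ring, ?_⟩
        rw [hm, smul_inv_smul₀ hcne]
        exact hsplit
      have := (mem_extremePoints.mp hy₀).2 z₀ hz₀C m hmC hseg
      exact hz₀y₀ this.1
  -- separate y₀ from the others
  have hhullconv : Convex ℝ (convexHull ℝ ((extF.erase y₀ : Finset E) : Set E)) :=
    convex_convexHull ℝ _
  have hhullcl : IsClosed (convexHull ℝ ((extF.erase y₀ : Finset E) : Set E)) :=
    ((extF.erase y₀).finite_toSet.isCompact_convexHull ℝ).isClosed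
  obtain ⟨l, u, hlu, hlz⟩ := geometric_hahn_banach_point_closed hhullconv hhullcl hy₀notin
  set l' : E →L[ℝ] ℝ := -l with hl'
  have hkey : ∀ z ∈ extF, z ≠ y₀ → l' z < l' y₀ := by
    intro z hz hzne
    have hzhull : z ∈ convexHull ℝ ((extF.erase y₀ : Finset E) : Set E) :=
      subset_convexHull ℝ _ (Finset.mem_erase.mpr ⟨hzne, hz⟩)
    have := hlz z hzhull
    simp only [hl', ContinuousLinearMap.neg_apply]
    linarith
  have hmax : ∀ yy ∈ C, l' yy ≤ l' y₀ := by
    intro yy hyy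
    obtain ⟨w, hw0, hw1, hwx⟩ := exists_rep (hKM ▸ hyy)
    rw [← hwx, linear_comb]
    calc ∑ z ∈ extF, w z * l' z ≤ ∑ z ∈ extF, w z * l' y₀ := by
          refine Finset.sum_le_sum fun z hz => ?_
          rcases eq_or_ne z y₀ with rfl | hne
          · exact le_rfl
          · exact mul_le_mul_of_nonneg_left (le_of_lt (hkey z hz hne)) (hw0 z hz)
      _ = l' y₀ := by rw [← Finset.sum_mul, hw1, one_mul]
  have hexp : IsExposed ℝ C {y₀} := by
    intro _
    refine ⟨l', ?_⟩
    ext x'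
    simp only [mem_singleton_iff, mem_setOf_eq]
    constructor
    · rintro rfl
      exact ⟨hy₀C, hmax⟩
    · rintro ⟨hx'C, hx'max⟩
      have heq : l' x' = l' y₀ := le_antisymm (hmax x' hx'C) (hx'max y₀ hy₀C)
      by_contra hne
      obtain ⟨w, hw0, hw1, hwx⟩ := exists_rep (hKM ▸ hx'C)
      obtain ⟨z₁, hz₁mem, hz₁ne, hz₁pos⟩ :
          ∃ z₁ ∈ extF, z₁ ≠ y₀ ∧ 0 < w z₁ := by
        by_contra hcon
        push_neg at hcon
        have hall : ∀ z ∈ extF, z ≠ y₀ → w z = 0 := fun z hz hzne =>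
          le_antisymm (hcon z hz hzne) (hw0 z hz)
        have hx'eq : x' = w y₀ • y₀ := by
          rw [← hwx, ← Finset.add_sum_erase _ _ hy₀F]
          rw [Finset.sum_eq_zero (fun z hz => by
            rw [hall z (Finset.mem_of_mem_erase hz) (Finset.ne_of_mem_erase hz), zero_smul]),
            add_zero]
        have hwy₀ : w y₀ = 1 := by
          rw [← Finset.add_sum_erase _ _ hy₀F] at hw1
          rw [Finset.sum_eq_zero (fun z hz =>
            hall z (Finset.mem_of_mem_erase hz) (Finset.ne_of_mem_erase hz)), add_zero] at hw1
          exact hw1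
        rw [hwy₀, one_smul] at hx'eq
        exact hne hx'eq
      have hstrict : l' x' < l' y₀ := by
        rw [← hwx, linear_comb]
        calc ∑ z ∈ extF, w z * l' z < ∑ z ∈ extF, w z * l' y₀ := by
              refine Finset.sum_lt_sum (fun z hz => ?_) ⟨z₁, hz₁mem, ?_⟩
              · rcases eq_or_ne z y₀ with rfl | hne'
                · exact le_rfl
                · exact mul_le_mul_of_nonneg_left (le_of_lt (hkey z hz hne')) (hw0 z hz)
              · exact mul_lt_mul_of_pos_left (hkey z₁ hz₁mem hz₁ne) hz₁pos
          _ = l' y₀ := by rw [← Finset.sum_mul, hw1, one_mul]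
      linarith [heq ▸ hstrict]
  exact P.face_mem C hC {y₀} hexp ⟨y₀, rfl⟩

/-- Every cell meeting the sublevel set of `b` contains a vertex with value `< a`,
provided no vertex has value in `[a,b]`. -/
lemma exists_low_point (hf : P.IsGenericPL f) {a b : ℝ}
    (hno : ∀ v ∈ P.vertices, f v ∉ Set.Icc a b)
    {C : Set E} (hC : C ∈ P.cells) {x : E} (hx : x ∈ C) (hxb : f x ≤ b) :
    ∃ v ∈ C, f v < a := by
  classical
  obtain ⟨s, hCs⟩ := P.polytope C hC
  have hCconv : Convex ℝ C := cell_convex hC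
  have hCcomp : IsCompact C := cell_compact hC
  have hextsub : extremePoints ℝ C ⊆ (s : Set E) := by
    rw [hCs]; exact extremePoints_convexHull_subset
  have hextfin : (extremePoints ℝ C).Finite := s.finite_toSet.subset hextsub
  set extF : Finset E := hextfin.toFinset with hextF
  have hextFcoe : (extF : Set E) = extremePoints ℝ C := hextfin.coe_toFinset
  have hextC : ∀ z ∈ extF, z ∈ C := by
    intro z hz
    have hz' : z ∈ (extF : Set E) := hz
    rw [hextFcoe] at hz'
    exact extremePoints_subset hz'
  have hKM : convexHull ℝ (extF : Set E) = C := by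
    have h1 := closure_convexHull_extremePoints hCcomp hCconv
    have h2 : IsClosed (convexHull ℝ (extremePoints ℝ C)) :=
      (hextfin.isCompact_convexHull ℝ).isClosed
    rw [hextFcoe, ← h2.closure_eq, h1]
  obtain ⟨w, hw0, hw1, hwx⟩ := exists_rep (hKM ▸ hx)
  have hfx : f x = ∑ z ∈ extF, w z * f z := by
    rw [← hwx]
    exact affine_on_sum hCconv (hf.affineOn C hC) extF w _ hw0 hw1 hextC
  -- some extreme point with positive weight has value ≤ f x
  obtain ⟨z₀, hz₀mem, hz₀pos, hz₀le⟩ :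
      ∃ z₀ ∈ extF, 0 < w z₀ ∧ f z₀ ≤ f x := by
    by_contra hcon
    push_neg at hcon
    have : f x < f x := by
      calc f x = ∑ z ∈ extF, w z * f z := hfx
        _ > ∑ z ∈ extF, w z * f x := by
            obtain ⟨z₁, hz₁mem, hz₁ne⟩ : ∃ z₁ ∈ extF, w z₁ ≠ 0 := by
              by_contra hcon2
              push_neg at hcon2
              rw [Finset.sum_eq_zero hcon2] at hw1
              norm_num at hw1
            have hz₁pos : 0 < w z₁ := lt_of_le_of_ne (hw0 z₁ hz₁mem) (Ne.symm hz₁ne)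
            refine Finset.sum_lt_sum (fun z hz => ?_) ⟨z₁, hz₁mem, ?_⟩
            · rcases eq_or_lt_of_le (hw0 z hz) with h0 | hpos
              · rw [← h0]; simp
              · exact mul_le_mul_of_nonneg_left
                  (le_of_lt (hcon z hz hpos)) (le_of_lt hpos)
            · exact mul_lt_mul_of_pos_left (hcon z₁ hz₁mem hz₁pos) hz₁pos
        _ = f x := by rw [← Finset.sum_mul, hw1, one_mul]
    exact lt_irrefl _ this
  have hz₀ext : z₀ ∈ extremePoints ℝ C := by rw [← hextFcoe]; exact hz₀mem
  have hz₀cell : {z₀} ∈ P.cells := extremePoint_cell hC hz₀ext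
  have hz₀vert : z₀ ∈ P.vertices := hz₀cell
  have hz₀no := hno z₀ hz₀vert
  have hz₀b : f z₀ ≤ b := le_trans hz₀le hxb
  have hz₀a : f z₀ < a := by
    by_contra hcon
    push_neg at hcon
    exact hz₀no ⟨hcon, hz₀b⟩
  exact ⟨z₀, hextC z₀ hz₀mem, hz₀a⟩

end Vertex

section Assembly
variable {E : Type} [NormedAddCommGroup E] [NormedSpace ℝ E]
variable {P : PolytopalComplex E} {f : E → ℝ}

/-- dimension of a cell -/
noncomputable def cdim (C : Set E) : ℕ := Module.finrank ℝ ↥(vectorSpan ℝ C)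

lemma cell_sub_compact (hf : P.IsGenericPL f) {C : Set E} (hC : C ∈ P.cells) (c : ℝ) :
    IsCompact {x ∈ C | f x ≤ c} := by
  have hrc : Continuous (C.restrict f) :=
    continuousOn_iff_continuous_restrict.mp (cell_continuousOn hf hC)
  haveI : CompactSpace ↥C := isCompact_iff_compactSpace.mp (cell_compact hC)
  have hcl : IsClosed {q : ↥C | f ↑q ≤ c} := isClosed_le hrc continuous_const
  have hcomp : IsCompact {q : ↥C | f ↑q ≤ c} := hcl.isCompact
  have himg := hcomp.image continuous_subtype_val
  have heq : {x ∈ C | f x ≤ c} = Subtype.val '' {q : ↥C | f ↑q ≤ c} := by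
    ext x
    simp only [mem_setOf_eq, mem_image, Subtype.exists, exists_and_right, exists_eq_right]
    exact ⟨fun h => ⟨h.1, h.2⟩, fun ⟨h1, h2⟩ => ⟨h1, h2⟩⟩
  rw [heq]
  exact himg

lemma sublevel_eq (c : ℝ) : P.sublevel f c = ⋃ C ∈ P.cells, {x ∈ C | f x ≤ c} := by
  ext x
  constructor
  · rintro ⟨hsp, hfx⟩
    obtain ⟨C, hC, hxC⟩ := Set.mem_iUnion₂.mp hsp
    exact Set.mem_biUnion hC ⟨hxC, hfx⟩
  · intro hx
    obtain ⟨C, hC, hxC, hfx⟩ := Set.mem_iUnion₂.mp hx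
    exact ⟨Set.mem_biUnion hC hxC, hfx⟩

lemma sublevel_compact (hf : P.IsGenericPL f) (c : ℝ) : IsCompact (P.sublevel f c) := by
  rw [sublevel_eq]
  exact P.finite.isCompact_biUnion fun C hC => cell_sub_compact hf hC c

/-- the `k`-th stage set of the sweep -/
def Yset (P : PolytopalComplex E) (f : E → ℝ) (a b : ℝ) (k : ℕ) : Set E :=
  P.sublevel f a ∪
  (⋃ C ∈ {D ∈ P.cells | cdim D ≤ k}, {x ∈ C | f x ≤ b})

lemma Yset_compact (hf : P.IsGenericPL f) (a b : ℝ) (k : ℕ) :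
    IsCompact (Yset P f a b k) := by
  refine (sublevel_compact hf a).union ?_
  refine Set.Finite.isCompact_biUnion (P.finite.subset (fun D hD => hD.1)) ?_
  exact fun C hC => cell_sub_compact hf hC.1 b

lemma Yset_subset_space (a b : ℝ) (k : ℕ) : Yset P f a b k ⊆ P.space := by
  rintro x (hx | hx)
  · exact hx.1
  · simp only [mem_iUnion, exists_prop] at hx
    obtain ⟨C, ⟨hC, _⟩, hxC, _⟩ := hx
    exact Set.mem_biUnion hC hxC

lemma Yset_mono (a b : ℝ) {k k' : ℕ} (hk : k ≤ k') :
    Yset P f a b k ⊆ Yset P f a b k' := by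
  refine Set.union_subset_union_right _ ?_
  intro x hx
  simp only [mem_iUnion, exists_prop, mem_setOf_eq] at hx ⊢
  obtain ⟨C, ⟨hC, hd⟩, h⟩ := hx
  exact ⟨C, ⟨hC, le_trans hd hk⟩, h⟩

lemma sublevel_subset_Yset (a b : ℝ) (hab : a ≤ b) (k : ℕ) :
    P.sublevel f a ⊆ Yset P f a b k := Set.subset_union_left

end Assembly

section Stage
variable {E : Type} [NormedAddCommGroup E] [NormedSpace ℝ E]
variable {P : PolytopalComplex E} {f : E → ℝ}

lemma Yset_cases {a b : ℝ} {k : ℕ} {x : E} (hx : x ∈ Yset P f a b k) :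
    x ∈ P.sublevel f a ∨ ∃ C ∈ P.cells, cdim C ≤ k ∧ x ∈ C ∧ f x ≤ b := by
  rcases hx with h | h
  · exact Or.inl h
  · obtain ⟨C, hC, hxC⟩ := Set.mem_iUnion₂.mp h
    exact Or.inr ⟨C, hC.1, hC.2, hxC.1, hxC.2⟩

lemma Yset_intro_left {a b : ℝ} {k : ℕ} {x : E} (hx : x ∈ P.sublevel f a) :
    x ∈ Yset P f a b k := Or.inl hx

lemma Yset_intro_right {a b : ℝ} {k : ℕ} {x : E} {C : Set E} (hC : C ∈ P.cells)
    (hd : cdim C ≤ k) (hxC : x ∈ C) (hfb : f x ≤ b) : x ∈ Yset P f a b k :=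
  Or.inr (Set.mem_biUnion (⟨hC, hd⟩ : C ∈ {D ∈ P.cells | cdim D ≤ k}) ⟨hxC, hfb⟩)

/-- Main inductive construction of the retraction on the `k`-skeleton part. -/
lemma stage (hf : P.IsGenericPL f) {a b : ℝ} (hab : a ≤ b)
    (hno : ∀ v ∈ P.vertices, f v ∉ Set.Icc a b) (k : ℕ) :
    ∃ r : E → E,
      ContinuousOn r (Yset P f a b k) ∧
      (∀ x ∈ Yset P f a b k, f x ≤ a → r x = x) ∧
      (∀ x ∈ Yset P f a b k, r x ∈ P.sublevel f a) ∧
      (∀ x ∈ Yset P f a b k, ∀ C ∈ P.cells, x ∈ C → r x ∈ C) := by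
  classical
  induction k with
  | zero =>
    refine ⟨id, continuousOn_id, fun x _ _ => rfl, ?_, fun x _ C _ hxC => hxC⟩
    intro x hx
    rcases Yset_cases hx with h | ⟨C, hC, hd, hxC, hfb⟩
    · exact h
    · have h0 : cdim C = 0 := Nat.le_zero.mp hd
      obtain ⟨v, hCv⟩ := cell_dim_zero hC h0
      have hxv : x = v := by rw [hCv] at hxC; exact hxC
      have hvcell : {v} ∈ P.cells := by rw [← hCv]; exact hC
      have hvvert : v ∈ P.vertices := hvcell
      have hva : f v < a := by
        have hvb : f v ≤ b := by rw [← hxv]; exact hfb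
        by_contra hcon
        push_neg at hcon
        exact hno v hvvert ⟨hcon, hvb⟩
      exact ⟨Set.mem_biUnion hC hxC, by rw [hxv]; exact le_of_lt hva⟩
  | succ k IH =>
    obtain ⟨r, hr1, hr2, hr3, hr4⟩ := IH
    -- active cells of dimension k+1 meeting the sublevel set of b
    set Act : Set (Set E) := {C | C ∈ P.cells ∧ cdim C = k + 1 ∧ ∃ x, x ∈ C ∧ f x ≤ b}
      with hActdef
    have hActfin : Act.Finite := P.finite.subset fun C hC => hC.1
    have hZYk : ∀ C ∈ Act, ({y ∈ C | f y ≤ a} ∪ ({y ∈ C | f y ≤ b} ∩ Yset P f a b k))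
        ⊆ Yset P f a b k := by
      rintro C hC x (hx | hx)
      · exact Yset_intro_left ⟨Set.mem_biUnion hC.1 hx.1, hx.2⟩
      · exact hx.2
    have hZC : ∀ C ∈ Act, ({y ∈ C | f y ≤ a} ∪ ({y ∈ C | f y ≤ b} ∩ Yset P f a b k))
        ⊆ C := by
      rintro C hC x (hx | hx)
      · exact hx.1
      · exact hx.1.1
    -- extension over each active cell
    have hext : ∀ C ∈ Act, ∃ g : E → E,
        ContinuousOn g {y ∈ C | f y ≤ b} ∧
        (∀ x ∈ ({y ∈ C | f y ≤ a} ∪ ({y ∈ C | f y ≤ b} ∩ Yset P f a b k)), g x = r x) ∧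
        (∀ x ∈ {y ∈ C | f y ≤ b}, g x ∈ {y ∈ C | f y ≤ a}) := by
      intro C hC
      obtain ⟨hCcell, hCdim, x₀, hx₀C, hx₀b⟩ := hC
      have hCAct : C ∈ Act := ⟨hCcell, hCdim, x₀, hx₀C, hx₀b⟩
      obtain ⟨v, hvC, hva⟩ := exists_low_point hf hno hCcell hx₀C hx₀b
      haveI := cell_fd hCcell
      have hZQ : ({y ∈ C | f y ≤ a} ∪ ({y ∈ C | f y ≤ b} ∩ Yset P f a b k))
          ⊆ {y ∈ C | f y ≤ b} := by
        rintro x (hx | hx)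
        · exact ⟨hx.1, le_trans hx.2 hab⟩
        · exact hx.1
      have hZcl : IsClosed ({y ∈ C | f y ≤ a} ∪ ({y ∈ C | f y ≤ b} ∩ Yset P f a b k)) :=
        ((cell_sub_compact hf hCcell a).union
          ((cell_sub_compact hf hCcell b).inter (Yset_compact hf a b k))).isClosed
      have hψ : ContinuousOn r
          ({y ∈ C | f y ≤ a} ∪ ({y ∈ C | f y ≤ b} ∩ Yset P f a b k)) :=
        hr1.mono (hZYk C hCAct)
      have hψT : ∀ x ∈ ({y ∈ C | f y ≤ a} ∪ ({y ∈ C | f y ≤ b} ∩ Yset P f a b k)),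
          r x ∈ {y ∈ C | f y ≤ a} := by
        intro x hx
        have hxY : x ∈ Yset P f a b k := hZYk C hCAct hx
        have h1 := hr3 x hxY
        have h2 := hr4 x hxY C hCcell (hZC C hCAct hx)
        exact ⟨h2, h1.2⟩
      have hTne : ({y ∈ C | f y ≤ a}).Nonempty := ⟨v, hvC, le_of_lt hva⟩
      have hTcomp : IsCompact {y ∈ C | f y ≤ a} := cell_sub_compact hf hCcell a
      have hTconv : Convex ℝ {y ∈ C | f y ≤ a} := by
        intro y1 h1 y2 h2 α β hα hβ hαβ
        have hβα : β = 1 - α := by linarith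
        refine ⟨cell_convex hCcell h1.1 h2.1 hα hβ hαβ, ?_⟩
        rw [hβα]
        rw [hf.affineOn C hCcell y1 h1.1 y2 h2.1 α ⟨hα, by linarith⟩]
        have := h1.2; have := h2.2
        nlinarith [h1.2, h2.2]
      have hTV : ∀ y ∈ {y ∈ C | f y ≤ a}, y - v ∈ vectorSpan ℝ C := by
        intro y hy
        rw [vectorSpan_def]
        exact Submodule.subset_span ⟨y, hy.1, v, hvC, rfl⟩
      exact exists_extension_into_convex {y ∈ C | f y ≤ b}
        ({y ∈ C | f y ≤ a} ∪ ({y ∈ C | f y ≤ b} ∩ Yset P f a b k))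
        {y ∈ C | f y ≤ a} v (vectorSpan ℝ C) hZQ hZcl r hψ hψT hTne hTcomp hTconv hTV
    choose! gfun hg1 hg2 hg3 using hext
    -- glue the pieces
    set ActF : Finset (Set E) := hActfin.toFinset with hActF
    set t : Finset (Option (Set E)) := insert none (ActF.image some) with ht
    set A : Option (Set E) → Set E :=
      fun o => o.elim (Yset P f a b k) (fun C => {y ∈ C | f y ≤ b}) with hA
    set Fn : Option (Set E) → E → E := fun o => o.elim r gfun with hFn
    have hmemt : ∀ C ∈ Act, some C ∈ t := by
      intro C hC
      exact Finset.mem_insert_of_mem (Finset.mem_image_of_mem some (hActfin.mem_toFinset.mpr hC))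
    have hsomeAct : ∀ o ∈ t, ∀ C, o = some C → C ∈ Act := by
      intro o ho C hoC
      rw [hoC] at ho
      rcases Finset.mem_insert.mp ho with h | h
      · exact absurd h (by simp)
      · obtain ⟨D, hD, hDeq⟩ := Finset.mem_image.mp h
        have : D = C := by injection hDeq
        rw [← this]
        exact hActfin.mem_toFinset.mp hD
    have hglue := glue_pieces t A Fn ?_ ?_ ?_
    · obtain ⟨g, hgcont, hgval⟩ := hglue
      have hcover : (⋃ i ∈ t, A i) = Yset P f a b (k + 1) := by
        apply Set.Subset.antisymm
        · intro x hx
          obtain ⟨i, hit, hxi⟩ := Set.mem_iUnion₂.mp hx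
          match i with
          | none => exact Yset_mono a b (Nat.le_succ k) hxi
          | some C =>
            have hCAct : C ∈ Act := hsomeAct _ hit C rfl
            exact Yset_intro_right hCAct.1 (le_of_eq hCAct.2.1) hxi.1 hxi.2
        · intro x hx
          rcases Yset_cases hx with h | ⟨C, hC, hd, hxC, hfb⟩
          · exact Set.mem_biUnion (Finset.mem_insert_self none _)
              (Yset_intro_left (P := P) (f := f) (b := b) (k := k) h)
          · rcases Nat.lt_or_ge k (cdim C) with hgt | hle
            · have hdeq : cdim C = k + 1 := le_antisymm hd hgt
              have hCAct : C ∈ Act := ⟨hC, hdeq, x, hxC, hfb⟩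
              exact Set.mem_biUnion (hmemt C hCAct) ⟨hxC, hfb⟩
            · exact Set.mem_biUnion (Finset.mem_insert_self none _)
                (Yset_intro_right (b := b) hC hle hxC hfb)
      have hgYk : ∀ x ∈ Yset P f a b k, g x = r x := fun x hx =>
        hgval none (Finset.mem_insert_self none _) x hx
      refine ⟨g, ?_, ?_, ?_, ?_⟩
      · rw [← hcover]; exact hgcont
      · intro x hx hfa
        have hxsp : x ∈ P.space := Yset_subset_space a b (k+1) hx
        have hxk : x ∈ Yset P f a b k := Yset_intro_left ⟨hxsp, hfa⟩
        rw [hgYk x hxk]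
        exact hr2 x hxk hfa
      · intro x hx
        by_cases hxk : x ∈ Yset P f a b k
        · rw [hgYk x hxk]; exact hr3 x hxk
        · rcases Yset_cases hx with h | ⟨C, hC, hd, hxC, hfb⟩
          · exact absurd (Yset_intro_left (b := b) (k := k) h) hxk
          · have hnotle : ¬ cdim C ≤ k := fun hle =>
              hxk (Yset_intro_right hC hle hxC hfb)
            have hdeq : cdim C = k + 1 := le_antisymm hd (Nat.lt_of_not_le hnotle)
            have hCAct : C ∈ Act := ⟨hC, hdeq, x, hxC, hfb⟩
            have hval : g x = gfun C x := hgval (some C) (hmemt C hCAct) x ⟨hxC, hfb⟩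
            have := hg3 C hCAct x ⟨hxC, hfb⟩
            rw [hval]
            exact ⟨Set.mem_biUnion hC this.1, this.2⟩
      · intro x hx C'' hC'' hxC''
        by_cases hxk : x ∈ Yset P f a b k
        · rw [hgYk x hxk]; exact hr4 x hxk C'' hC'' hxC''
        · rcases Yset_cases hx with h | ⟨C, hC, hd, hxC, hfb⟩
          · exact absurd (Yset_intro_left (b := b) (k := k) h) hxk
          · have hnotle : ¬ cdim C ≤ k := fun hle =>
              hxk (Yset_intro_right hC hle hxC hfb)
            have hdeq : cdim C = k + 1 := le_antisymm hd (Nat.lt_of_not_le hnotle)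
            have hCAct : C ∈ Act := ⟨hC, hdeq, x, hxC, hfb⟩
            have hval : g x = gfun C x := hgval (some C) (hmemt C hCAct) x ⟨hxC, hfb⟩
            have hginT := hg3 C hCAct x ⟨hxC, hfb⟩
            by_cases hCeq : C = C''
            · rw [hval, ← hCeq]; exact hginT.1
            · -- C ∩ C'' is a cell of smaller dimension unless C ⊆ C''
              have hinterne : (C ∩ C'').Nonempty := ⟨x, hxC, hxC''⟩
              have hexp : IsExposed ℝ C (C ∩ C'') := P.inter_face C hC C'' hC'' hinterne
              by_cases hCC : C ∩ C'' = C
              · have hsub : C ⊆ C'' := by rw [← hCC]; exact Set.inter_subset_right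
                rw [hval]
                exact hsub hginT.1
              · have hlt : cdim (C ∩ C'') < cdim C :=
                  dim_lt_of_exposed hC hexp hinterne hCC
                rw [hdeq] at hlt
                have hfacecell : C ∩ C'' ∈ P.cells :=
                  P.face_mem C hC (C ∩ C'') hexp hinterne
                have : x ∈ Yset P f a b k :=
                  Yset_intro_right hfacecell (Nat.lt_succ_iff.mp hlt) ⟨hxC, hxC''⟩ hfb
                exact absurd this hxk
    -- the three side goals of glue_pieces
    · intro i hi
      match i with
      | none => exact (Yset_compact hf a b k).isClosed
      | some C =>
        have hCAct : C ∈ Act := hsomeAct _ hi C rfl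
        exact (cell_sub_compact hf hCAct.1 b).isClosed
    · intro i hi
      match i with
      | none => exact hr1
      | some C =>
        have hCAct : C ∈ Act := hsomeAct _ hi C rfl
        exact hg1 C hCAct
    · intro i hi j hj x hxi hxj
      match i, j with
      | none, none => rfl
      | none, some C =>
        have hCAct : C ∈ Act := hsomeAct _ hj C rfl
        have hxZ : x ∈ ({y ∈ C | f y ≤ a} ∪ ({y ∈ C | f y ≤ b} ∩ Yset P f a b k)) := by
          rcases Yset_cases hxi with h | _
          · exact Or.inl ⟨hxj.1, h.2⟩
          · exact Or.inr ⟨hxj, hxi⟩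
        exact (hg2 C hCAct x hxZ).symm
      | some C, none =>
        have hCAct : C ∈ Act := hsomeAct _ hi C rfl
        have hxZ : x ∈ ({y ∈ C | f y ≤ a} ∪ ({y ∈ C | f y ≤ b} ∩ Yset P f a b k)) := by
          rcases Yset_cases hxj with h | _
          · exact Or.inl ⟨hxi.1, h.2⟩
          · exact Or.inr ⟨hxi, hxj⟩
        exact hg2 C hCAct x hxZ
      | some C, some C' =>
        by_cases hCC' : C = C'
        · rw [hCC']
        · have hCAct : C ∈ Act := hsomeAct _ hi C rfl
          have hC'Act : C' ∈ Act := hsomeAct _ hj C' rfl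
          have hxC : x ∈ C := hxi.1
          have hxC' : x ∈ C' := hxj.1
          have hinterne : (C ∩ C').Nonempty := ⟨x, hxC, hxC'⟩
          have hexp : IsExposed ℝ C (C ∩ C') := P.inter_face C hCAct.1 C' hC'Act.1 hinterne
          have hfacecell : C ∩ C' ∈ P.cells := P.face_mem C hCAct.1 (C ∩ C') hexp hinterne
          have hdlt : cdim (C ∩ C') ≤ k := by
            by_cases hCC : C ∩ C' = C
            · -- then C ⊆ C', so C = C' ∩ C is a proper exposed face of C', contradiction
              exfalso
              have hsub : C ⊆ C' := by rw [← hCC]; exact Set.inter_subset_right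
              have hinterne' : (C' ∩ C).Nonempty := ⟨x, hxC', hxC⟩
              have hexp' : IsExposed ℝ C' (C' ∩ C) :=
                P.inter_face C' hC'Act.1 C hCAct.1 hinterne'
              have hC'C : C' ∩ C = C := by
                apply Set.Subset.antisymm Set.inter_subset_right
                intro y hy
                exact ⟨hsub hy, hy⟩
              have hne : C' ∩ C ≠ C' := by rw [hC'C]; exact hCC'
              have hlt : cdim (C' ∩ C) < cdim C' :=
                dim_lt_of_exposed hC'Act.1 hexp' hinterne' hne
              rw [hC'C, hCAct.2.1, hC'Act.2.1] at hlt
              exact lt_irrefl _ hlt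
            · have hlt : cdim (C ∩ C') < cdim C :=
                dim_lt_of_exposed hCAct.1 hexp hinterne hCC
              rw [hCAct.2.1] at hlt
              exact Nat.lt_succ_iff.mp hlt
          have hxY : x ∈ Yset P f a b k :=
            Yset_intro_right hfacecell hdlt ⟨hxC, hxC'⟩ hxi.2
          have hxZ : x ∈ ({y ∈ C | f y ≤ a} ∪ ({y ∈ C | f y ≤ b} ∩ Yset P f a b k)) :=
            Or.inr ⟨hxi, hxY⟩
          have hxZ' : x ∈ ({y ∈ C' | f y ≤ a} ∪ ({y ∈ C' | f y ≤ b} ∩ Yset P f a b k)) :=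
            Or.inr ⟨hxj, hxY⟩
          show gfun C x = gfun C' x
          rw [hg2 C hCAct x hxZ, hg2 C' hC'Act x hxZ']

end Stage

section Final
variable {E : Type} [NormedAddCommGroup E] [NormedSpace ℝ E]
variable {P : PolytopalComplex E} {f : E → ℝ}

lemma exists_retraction (hf : P.IsGenericPL f) {a b : ℝ} (hab : a ≤ b)
    (hno : ∀ v ∈ P.vertices, f v ∉ Set.Icc a b) :
    ∃ r : E → E,
      ContinuousOn r (P.sublevel f b) ∧
      (∀ x ∈ P.sublevel f b, f x ≤ a → r x = x) ∧
      (∀ x ∈ P.sublevel f b, r x ∈ P.sublevel f a) ∧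
      (∀ x ∈ P.sublevel f b, ∀ C ∈ P.cells, x ∈ C → r x ∈ C) := by
  classical
  set N := P.finite.toFinset.sup cdim with hN
  have hsub : P.sublevel f b ⊆ Yset P f a b N := by
    rintro x ⟨hsp, hfb⟩
    obtain ⟨C, hC, hxC⟩ := Set.mem_iUnion₂.mp hsp
    exact Yset_intro_right hC (Finset.le_sup (P.finite.mem_toFinset.mpr hC)) hxC hfb
  obtain ⟨r, h1, h2, h3, h4⟩ := stage hf hab hno N
  exact ⟨r, h1.mono hsub, fun x hx => h2 x (hsub hx), fun x hx => h3 x (hsub hx),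
    fun x hx => h4 x (hsub hx)⟩

end Final

/-- **Lemma (regular interval).** If `f` is a generic PL function on a finite polytopal
complex `P` and `f⁻¹[a,b]` contains no vertex of `P`, then the sublevel set
`f_a` is a strong deformation retract of the sublevel set `f_b`: there is a homotopy
`H` on `f_b` starting at the identity, ending in `f_a`, and fixing `f_a` pointwise
throughout. -/
theorem sublevel_strong_deformation_retract_of_no_vertex
    {E : Type} [NormedAddCommGroup E] [NormedSpace ℝ E]
    (P : PolytopalComplex E) (f : E → ℝ) (hf : P.IsGenericPL f)
    (a b : ℝ) (hab : a ≤ b)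
    (hno : ∀ v ∈ P.vertices, f v ∉ Set.Icc a b) :
    ∃ H : C(↥(P.sublevel f b) × ↥unitInterval, ↥(P.sublevel f b)),
      (∀ x, H (x, 0) = x) ∧
      (∀ x, f (H (x, 1) : E) ≤ a) ∧
      (∀ x : ↥(P.sublevel f b), f (x : E) ≤ a → ∀ t, H (x, t) = x) := by
  classical
  obtain ⟨r, hr1, hr2, hr3, hr4⟩ := exists_retraction hf hab hno
  -- membership of the straight-line homotopy in the sublevel set
  have hmem : ∀ (x : ↥(P.sublevel f b)) (t : ↥unitInterval),
      (t : ℝ) • r (x : E) + (1 - (t : ℝ)) • (x : E) ∈ P.sublevel f b := by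
    intro x t
    obtain ⟨hsp, hfb⟩ := x.2
    obtain ⟨C, hC, hxC⟩ := Set.mem_iUnion₂.mp hsp
    have hrC : r (x : E) ∈ C := hr4 (x : E) x.2 C hC hxC
    have hz : (t : ℝ) • r (x : E) + (1 - (t : ℝ)) • (x : E) ∈ C :=
      cell_convex hC hrC hxC t.2.1 (by linarith [t.2.2]) (by ring)
    have hfz : f ((t : ℝ) • r (x : E) + (1 - (t : ℝ)) • (x : E))
        = (t : ℝ) * f (r (x : E)) + (1 - (t : ℝ)) * f (x : E) :=
      hf.affineOn C hC (r (x : E)) hrC (x : E) hxC (t : ℝ) ⟨t.2.1, t.2.2⟩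
    have hra : f (r (x : E)) ≤ a := (hr3 (x : E) x.2).2
    refine ⟨Set.mem_biUnion hC hz, ?_⟩
    rw [hfz]
    nlinarith [t.2.1, t.2.2]
  set Hfun : ↥(P.sublevel f b) × ↥unitInterval → ↥(P.sublevel f b) :=
    fun q => ⟨(q.2 : ℝ) • r (q.1 : E) + (1 - (q.2 : ℝ)) • (q.1 : E), hmem q.1 q.2⟩
    with hHfun
  have hcont : Continuous Hfun := by
    refine Continuous.subtype_mk ?_ _
    have hrc : Continuous fun q : ↥(P.sublevel f b) × ↥unitInterval => r (q.1 : E) :=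
      hr1.comp_continuous (continuous_subtype_val.comp continuous_fst) fun q => q.1.2
    have htc : Continuous fun q : ↥(P.sublevel f b) × ↥unitInterval => (q.2 : ℝ) :=
      continuous_subtype_val.comp continuous_snd
    exact (htc.smul hrc).add ((continuous_const.sub htc).smul
      (continuous_subtype_val.comp continuous_fst))
  refine ⟨⟨Hfun, hcont⟩, ?_, ?_, ?_⟩
  · intro x
    apply Subtype.ext
    show ((0 : ↥unitInterval) : ℝ) • r (x : E) + (1 - ((0 : ↥unitInterval) : ℝ)) • (x : E)
      = (x : E)
    norm_num
  · intro x
    have hval : ((Hfun (x, 1)) : E) = r (x : E) := by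
      show ((1 : ↥unitInterval) : ℝ) • r (x : E) + (1 - ((1 : ↥unitInterval) : ℝ)) • (x : E)
        = r (x : E)
      norm_num
    show f ((Hfun (x, 1)) : E) ≤ a
    rw [hval]
    exact (hr3 (x : E) x.2).2
  · intro x hfa t
    have hrx : r (x : E) = (x : E) := hr2 (x : E) x.2 hfa
    apply Subtype.ext
    show (t : ℝ) • r (x : E) + (1 - (t : ℝ)) • (x : E) = (x : E)
    rw [hrx, ← add_smul]
    norm_num
end

section
/- The 17-triangle simplicial complex on vertex set {1,…,8} with triangles 124, 234, 346, 136, 126, 256, 235, 135, 127, 147, 278, 457, 578, 238, 138, 158, 456 is a triangulation of the dunce hat, and every one of its triangles contains either vertex 1, or vertex 8, or two vertices with consecutive labels j, j+1; consequently (by Gale's evenness condition) this complex embeds as a subcomplex of the boundary complex of the cyclic 5-polytope C₅(8) with vertices labeled 1,…,8 in natural order. -/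
noncomputable section
/-- Unit vectors: the vertices of the standard triangle. -/
def triVert (i : Fin 3) : Fin 3 → ℝ := fun j => if i = j then 1 else 0

/-- The point at parameter `t` on the directed edge from vertex `i` to vertex `j`
of the standard triangle. -/
def triSeg (i j : Fin 3) (t : ℝ) : Fin 3 → ℝ := (1 - t) • triVert i + t • triVert j

/-- The edge identifications of the dunce hat: the three directed boundary edges
`e₀e₁`, `e₁e₂`, `e₀e₂` are identified with each other (two coherently, one reversed,
realizing the boundary word `x·x·x⁻¹`). -/
def dunceRel (x y : ↥(stdSimplex ℝ (Fin 3))) : Prop :=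
  ∃ t ∈ Set.Icc (0 : ℝ) 1,
    ((x : Fin 3 → ℝ) = triSeg 0 1 t ∧ (y : Fin 3 → ℝ) = triSeg 1 2 t) ∨
    ((x : Fin 3 → ℝ) = triSeg 0 1 t ∧ (y : Fin 3 → ℝ) = triSeg 0 2 t)

/-- The dunce hat: the quotient of a solid triangle identifying all three boundary
edges, two coherently and one with reversed orientation. -/
def DunceHat : Type := Quot dunceRel

instance : TopologicalSpace DunceHat := instTopologicalSpaceQuot

/-- A finite family of faces collapses to a point: a sequence of elementary collapses,
each removing a free face together with the unique face properly containing it. -/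
inductive CollapsesToPoint {E : Type} : Set (Finset E) → Prop
  | point (v : E) : CollapsesToPoint {{v}}
  | step (F : Set (Finset E)) (s t : Finset E) (hs : s ∈ F) (ht : t ∈ F) (hst : s ⊂ t)
      (hfree : ∀ u ∈ F, s ⊂ u → u = t) (hprev : CollapsesToPoint (F \ {s, t})) :
      CollapsesToPoint F
end
open Geometry

/-- The 17 triangles of the 8-vertex dunce hat. -/
def duncehatTriangles : Finset (Finset ℕ) :=
  { {1,2,4}, {2,3,4}, {3,4,6}, {1,3,6}, {1,2,6}, {2,5,6}, {2,3,5}, {1,3,5},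
    {1,2,7}, {1,4,7}, {2,7,8}, {4,5,7}, {5,7,8}, {2,3,8}, {1,3,8}, {1,5,8},
    {4,5,6} }

/-- The geometric realization of the vertex label `n` as a unit vector. -/
def duncehatVertex (n : ℕ) : Fin 9 → ℝ := fun j => if (j : ℕ) = n then 1 else 0

/-- Gale's evenness condition for a subset `S ⊆ {1,…,8}`: `S` spans a facet of the
cyclic polytope `C₅(8)` iff any two elements outside `S` are separated by an even
number of elements of `S`. -/
def GaleEven (S : Finset ℕ) : Prop :=
  ∀ i ∈ Finset.Icc 1 8, ∀ j ∈ Finset.Icc 1 8, i < j → i ∉ S → j ∉ S →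
    Even ((S.filter fun k => i < k ∧ k < j).card)

set_option maxHeartbeats 1000000


namespace DH
/-- 9 × barycentric coordinates of the 14 subdivision vertices. -/
def VZ : Fin 14 → Fin 3 → ℤ :=
  ![![9,0,0], ![0,9,0], ![0,0,9], ![6,3,0], ![3,6,0], ![0,6,3],
    ![0,3,6], ![6,0,3], ![3,0,6], ![4,4,1], ![3,3,3], ![3,5,1], ![5,2,2], ![3,1,5]]

def lbl : Fin 14 → ℕ := ![1,1,1,2,3,2,3,2,3,4,5,6,7,8]

def tv : Fin 17 → Fin 3 → Fin 14 :=
  ![![0,3,9],![3,4,9],![4,11,9],![4,1,11],![1,5,11],![5,10,11],![5,6,10],![6,2,10],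
    ![7,0,12],![0,9,12],![7,12,13],![9,10,12],![12,10,13],![8,7,13],![2,8,13],
    ![10,2,13],![9,11,10]]

/-- 20 × the barycentric-coordinate functionals of the 17 triangles. -/
def lamZ : Fin 17 → Fin 3 → Fin 3 → ℤ :=
  ![![![20, -40, 80], ![0, 60, -240], ![0, 0, 180]],
    ![![40, -20, -80], ![-20, 40, -80], ![0, 0, 180]],
    ![![20, 20, -160], ![-120, 60, 240], ![120, -60, -60]],
    ![![60, 0, -180], ![-40, 20, 20], ![0, 0, 180]],
    ![![-20, 20, -40], ![-20, 0, 60], ![60, 0, 0]],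
    ![![-40, 20, 20], ![30, -30, 60], ![30, 30, -60]],
    ![![-20, 40, -20], ![-20, -20, 40], ![60, 0, 0]],
    ![![-60, 60, 0], ![20, -40, 20], ![60, 0, 0]],
    ![![0, -60, 60], ![20, -10, -40], ![0, 90, 0]],
    ![![20, -10, -40], ![0, 60, -60], ![0, -30, 120]],
    ![![32, -76, -4], ![12, 84, -24], ![-24, 12, 48]],
    ![![0, 60, -60], ![-40, 20, 80], ![60, -60, 0]],
    ![![60, -30, -30], ![-40, 95, 5], ![0, -45, 45]],
    ![![-20, -140, 40], ![40, -20, -20], ![0, 180, 0]],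
    ![![-40, 20, 20], ![60, -180, 0], ![0, 180, 0]],
    ![![-30, 90, 0], ![-40, 20, 20], ![90, -90, 0]],
    ![![120, -60, -60], ![-90, 90, 0], ![-10, -10, 80]]]

def dotZ (c v : Fin 3 → ℤ) : ℤ := c 0 * v 0 + c 1 * v 1 + c 2 * v 2

lemma Q0 : ∀ (i : Fin 17) (j j' : Fin 3),
    VZ (tv i 0) j * lamZ i 0 j' + VZ (tv i 1) j * lamZ i 1 j' + VZ (tv i 2) j * lamZ i 2 j'
      = if j = j' then 180 else 0 := by decide

lemma Q1 : ∀ (i : Fin 17) (k k' : Fin 3),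
    dotZ (lamZ i k) (VZ (tv i k')) = if k = k' then 180 else 0 := by decide

lemma Q2 : ∀ (i : Fin 17) (k : Fin 3) (j : Fin 17) (k2 : Fin 3), tv j k2 = tv i k →
    ∀ k' : Fin 3, (if k = k' then (180:ℤ) else 0) ≤ dotZ (lamZ j k2) (VZ (tv i k')) := by decide

lemma Q3 : ∀ (i : Fin 17) (v : Fin 14), (∀ k, tv i k ≠ v) →
    ∃ (j : Fin 17) (k2 : Fin 3), tv j k2 = v ∧
      ∀ k' : Fin 3, dotZ (lamZ j k2) (VZ (tv i k')) ≤ 0 := by decide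

lemma Q5 : ∀ (i : Fin 17) (j : Fin 3), lamZ i 0 j + lamZ i 1 j + lamZ i 2 j = 20 := by decide

lemma Q8 : ∀ (i j : Fin 17) (k0 k02 : Fin 3), tv i k0 = tv j k02 → 4 ≤ lbl (tv i k0) →
    ∀ (k k2 : Fin 3), lbl (tv i k) = lbl (tv j k2) → tv i k = tv j k2 := by decide

lemma Qdist : ∀ i : Fin 17, tv i 0 ≠ tv i 1 ∧ tv i 0 ≠ tv i 2 ∧ tv i 1 ≠ tv i 2 := by decide

lemma QlblDist : ∀ i : Fin 17, lbl (tv i 0) ≠ lbl (tv i 1) ∧ lbl (tv i 0) ≠ lbl (tv i 2) ∧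
    lbl (tv i 1) ≠ lbl (tv i 2) := by decide

lemma Qlbl_lt : ∀ v : Fin 14, lbl v < 9 ∧ 1 ≤ lbl v := by decide


noncomputable def VR (v : Fin 14) : Fin 3 → ℝ := fun j => (VZ v j : ℝ) / 9

noncomputable def evR (c : Fin 3 → ℤ) (x : Fin 3 → ℝ) : ℝ :=
  (c 0 : ℝ) * x 0 + (c 1 : ℝ) * x 1 + (c 2 : ℝ) * x 2

noncomputable def cmb (i : Fin 17) (co : Fin 3 → ℝ) : Fin 3 → ℝ :=
  co 0 • VR (tv i 0) + co 1 • VR (tv i 1) + co 2 • VR (tv i 2)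

lemma evR_cmb (c : Fin 3 → ℤ) (i : Fin 17) (co : Fin 3 → ℝ) :
    evR c (cmb i co) = (co 0 * (dotZ c (VZ (tv i 0)) : ℝ) + co 1 * (dotZ c (VZ (tv i 1)) : ℝ)
      + co 2 * (dotZ c (VZ (tv i 2)) : ℝ)) / 9 := by
  simp only [evR, cmb, dotZ, VR, Pi.add_apply, Pi.smul_apply, smul_eq_mul]
  push_cast
  ring

lemma continuous_evR (c : Fin 3 → ℤ) : Continuous fun x : Fin 3 → ℝ => evR c x := by
  unfold evR
  continuity

noncomputable def hat (v : Fin 14) (x : Fin 3 → ℝ) : ℝ :=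
  max 0 (Finset.univ.inf' ⟨((0 : Fin 17), (0 : Fin 3)), Finset.mem_univ _⟩
    fun p : Fin 17 × Fin 3 => if tv p.1 p.2 = v then evR (lamZ p.1 p.2) x / 20 else 1)

lemma continuous_inf' {ι X : Type*} [TopologicalSpace X] (s : Finset ι) (hs : s.Nonempty)
    (f : ι → X → ℝ) (hf : ∀ i, Continuous (f i)) :
    Continuous fun x => s.inf' hs fun i => f i x := by
  induction hs using Finset.Nonempty.cons_induction with
  | singleton a => simpa using hf a
  | cons a s h hs ih =>
      have e : (fun x => (Finset.cons a s h).inf' (Finset.cons_nonempty h) fun i => f i x)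
          = fun x => min (f a x) (s.inf' hs fun i => f i x) := by
        funext x; rw [Finset.inf'_cons]
      rw [e]
      exact (hf a).min ih

lemma continuous_hat (v : Fin 14) : Continuous (hat v) := by
  refine continuous_const.max (continuous_inf' _ _ _ fun p => ?_)
  by_cases h : tv p.1 p.2 = v
  · simpa [h] using (continuous_evR (lamZ p.1 p.2)).div_const 20
  · simpa [h] using continuous_const

noncomputable def Fm (x : Fin 3 → ℝ) : Fin 9 → ℝ :=
  fun n => ∑ v : Fin 14, if (n : ℕ) = lbl v then hat v x else 0

lemma continuous_Fm : Continuous Fm := by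
  refine continuous_pi fun n => continuous_finset_sum _ fun v _ => ?_
  by_cases h : (n : ℕ) = lbl v
  · simpa [h] using continuous_hat v
  · simpa [h] using continuous_const

section values
variable {i : Fin 17} {co : Fin 3 → ℝ}

lemma co_le_one (hco : ∀ k, 0 ≤ co k) (hsum : co 0 + co 1 + co 2 = 1) (k : Fin 3) :
    co k ≤ 1 := by
  have h0 := hco 0; have h1 := hco 1; have h2 := hco 2
  fin_cases k <;> (try simp) <;> linarith

lemma hat_at (hco : ∀ k, 0 ≤ co k) (hsum : co 0 + co 1 + co 2 = 1) (k : Fin 3) :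
    hat (tv i k) (cmb i co) = co k := by
  have hQ1 : ∀ k' : Fin 3, ((dotZ (lamZ i k) (VZ (tv i k')) : ℤ) : ℝ)
      = if k = k' then 180 else 0 := by
    intro k'; rw [Q1]; split <;> norm_num
  have hval : evR (lamZ i k) (cmb i co) / 20 = co k := by
    rw [evR_cmb, hQ1 0, hQ1 1, hQ1 2]
    fin_cases k <;> simp <;> ring
  have hmin : (Finset.univ.inf' ⟨((0 : Fin 17), (0 : Fin 3)), Finset.mem_univ _⟩
      fun p : Fin 17 × Fin 3 => if tv p.1 p.2 = tv i k then evR (lamZ p.1 p.2) (cmb i co) / 20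
        else 1) = co k := by
    apply le_antisymm
    · calc _ ≤ _ := Finset.inf'_le _ (Finset.mem_univ (i, k))
        _ = co k := by simpa using hval
    · apply Finset.le_inf'
      intro p _
      by_cases hp : tv p.1 p.2 = tv i k
      · simp only [hp, if_true]
        have hQ2 : ∀ k' : Fin 3, (if k = k' then (180:ℝ) else 0)
            ≤ ((dotZ (lamZ p.1 p.2) (VZ (tv i k')) : ℤ) : ℝ) := by
          intro k'
          have := Q2 i k p.1 p.2 hp k'
          calc (if k = k' then (180:ℝ) else 0)
              = ((if k = k' then (180:ℤ) else 0 : ℤ) : ℝ) := by split <;> norm_num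
            _ ≤ _ := by exact_mod_cast this
        rw [evR_cmb]
        have m0 := mul_le_mul_of_nonneg_left (hQ2 0) (hco 0)
        have m1 := mul_le_mul_of_nonneg_left (hQ2 1) (hco 1)
        have m2 := mul_le_mul_of_nonneg_left (hQ2 2) (hco 2)
        have : co k * 180 ≤ co 0 * ((dotZ (lamZ p.1 p.2) (VZ (tv i 0)) : ℤ) : ℝ)
            + co 1 * ((dotZ (lamZ p.1 p.2) (VZ (tv i 1)) : ℤ) : ℝ)
            + co 2 * ((dotZ (lamZ p.1 p.2) (VZ (tv i 2)) : ℤ) : ℝ) := by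
          have hk : co k * 180 = co 0 * (if k = 0 then (180:ℝ) else 0)
              + co 1 * (if k = 1 then (180:ℝ) else 0) + co 2 * (if k = 2 then (180:ℝ) else 0) := by
            fin_cases k <;> simp <;> ring
          rw [hk]; linarith
        linarith
      · simp only [hp, if_false]
        exact co_le_one hco hsum k
  unfold hat
  rw [hmin]
  exact max_eq_right (hco k)

lemma hat_not (v : Fin 14) (hv : ∀ k, tv i k ≠ v) (hco : ∀ k, 0 ≤ co k) :
    hat v (cmb i co) = 0 := by
  obtain ⟨j, k2, hjk, hle⟩ := Q3 i v hv
  have hmem : (if tv j k2 = v then evR (lamZ j k2) (cmb i co) / 20 else 1)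
      = evR (lamZ j k2) (cmb i co) / 20 := by simp [hjk]
  have hle' : evR (lamZ j k2) (cmb i co) / 20 ≤ 0 := by
    rw [evR_cmb]
    have t : ∀ k' : Fin 3, co k' * ((dotZ (lamZ j k2) (VZ (tv i k')) : ℤ) : ℝ) ≤ 0 := by
      intro k'
      apply mul_nonpos_of_nonneg_of_nonpos (hco k')
      exact_mod_cast hle k'
    have := t 0; have := t 1; have := t 2
    have h9 : (0:ℝ) < 9 := by norm_num
    have h20 : (0:ℝ) < 20 := by norm_num
    apply div_nonpos_of_nonpos_of_nonneg _ (by norm_num)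
    apply div_nonpos_of_nonpos_of_nonneg _ (by norm_num)
    linarith [t 0, t 1, t 2]
  unfold hat
  apply max_eq_left
  have hub := Finset.inf'_le (fun p : Fin 17 × Fin 3 =>
    if tv p.1 p.2 = v then evR (lamZ p.1 p.2) (cmb i co) / 20 else 1) (Finset.mem_univ (j, k2))
  rw [hmem] at hub
  exact le_trans hub hle'

end values

lemma QVnn : ∀ (v : Fin 14) (j : Fin 3), 0 ≤ VZ v j := by decide
lemma QVsum : ∀ v : Fin 14, VZ v 0 + VZ v 1 + VZ v 2 = 9 := by decide

section claimA
variable {i : Fin 17} {co : Fin 3 → ℝ}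

lemma hat_bary (hco : ∀ k, 0 ≤ co k) (hsum : co 0 + co 1 + co 2 = 1) (v : Fin 14) :
    hat v (cmb i co) = (if v = tv i 0 then co 0 else 0) + (if v = tv i 1 then co 1 else 0)
      + (if v = tv i 2 then co 2 else 0) := by
  obtain ⟨d01, d02, d12⟩ := Qdist i
  by_cases h0 : v = tv i 0
  · subst h0
    rw [hat_at hco hsum 0]
    simp [d01, d02]
  by_cases h1 : v = tv i 1
  · subst h1
    rw [hat_at hco hsum 1]
    simp [d01.symm, d12]
  by_cases h2 : v = tv i 2
  · subst h2
    rw [hat_at hco hsum 2]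
    simp [d02.symm, d12.symm]
  · have hv : ∀ k : Fin 3, tv i k ≠ v := by
      intro k
      fin_cases k
      · exact fun h => h0 h.symm
      · exact fun h => h1 h.symm
      · exact fun h => h2 h.symm
    rw [hat_not v hv hco]
    simp [h0, h1, h2]

lemma claimA (hco : ∀ k, 0 ≤ co k) (hsum : co 0 + co 1 + co 2 = 1) (n : Fin 9) :
    Fm (cmb i co) n = co 0 * (if (n : ℕ) = lbl (tv i 0) then 1 else 0)
      + co 1 * (if (n : ℕ) = lbl (tv i 1) then 1 else 0)
      + co 2 * (if (n : ℕ) = lbl (tv i 2) then 1 else 0) := by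
  unfold Fm
  have step : ∀ v : Fin 14, (if (n : ℕ) = lbl v then hat v (cmb i co) else 0)
      = (if v = tv i 0 then (if (n : ℕ) = lbl v then co 0 else 0) else 0)
      + (if v = tv i 1 then (if (n : ℕ) = lbl v then co 1 else 0) else 0)
      + (if v = tv i 2 then (if (n : ℕ) = lbl v then co 2 else 0) else 0) := by
    intro v
    rw [hat_bary hco hsum]
    by_cases h : (n : ℕ) = lbl v <;> simp [h]
  rw [Finset.sum_congr rfl fun v _ => step v, Finset.sum_add_distrib, Finset.sum_add_distrib,
    Finset.sum_ite_eq' Finset.univ (tv i 0), Finset.sum_ite_eq' Finset.univ (tv i 1),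
    Finset.sum_ite_eq' Finset.univ (tv i 2)]
  simp only [Finset.mem_univ, if_true]
  by_cases e0 : (n : ℕ) = lbl (tv i 0) <;> by_cases e1 : (n : ℕ) = lbl (tv i 1) <;>
    by_cases e2 : (n : ℕ) = lbl (tv i 2) <;> simp [e0, e1, e2]

lemma VZcast_nn (v : Fin 14) (j : Fin 3) : (0:ℝ) ≤ (VZ v j : ℝ) := by
  exact_mod_cast QVnn v j

lemma cmb_apply (j : Fin 3) : cmb i co j
    = co 0 * ((VZ (tv i 0) j : ℝ) / 9) + co 1 * ((VZ (tv i 1) j : ℝ) / 9)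
      + co 2 * ((VZ (tv i 2) j : ℝ) / 9) := by
  simp [cmb, VR]

lemma cmb_mem (hco : ∀ k, 0 ≤ co k) (hsum : co 0 + co 1 + co 2 = 1) :
    cmb i co ∈ stdSimplex ℝ (Fin 3) := by
  constructor
  · intro j
    rw [cmb_apply]
    have n0 := VZcast_nn (tv i 0) j
    have n1 := VZcast_nn (tv i 1) j
    have n2 := VZcast_nn (tv i 2) j
    have c0 := hco 0; have c1 := hco 1; have c2 := hco 2
    positivity
  · rw [Fin.sum_univ_three, cmb_apply, cmb_apply, cmb_apply]
    have s0 : (VZ (tv i 0) 0 : ℝ) + (VZ (tv i 0) 1 : ℝ) + (VZ (tv i 0) 2 : ℝ) = 9 := by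
      exact_mod_cast QVsum (tv i 0)
    have s1 : (VZ (tv i 1) 0 : ℝ) + (VZ (tv i 1) 1 : ℝ) + (VZ (tv i 1) 2 : ℝ) = 9 := by
      exact_mod_cast QVsum (tv i 1)
    have s2 : (VZ (tv i 2) 0 : ℝ) + (VZ (tv i 2) 1 : ℝ) + (VZ (tv i 2) 2 : ℝ) = 9 := by
      exact_mod_cast QVsum (tv i 2)
    linear_combination (co 0 / 9) * s0 + (co 1 / 9) * s1 + (co 2 / 9) * s2 + hsum

end claimA

lemma Q0cast (i : Fin 17) (j j' : Fin 3) :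
    (VZ (tv i 0) j : ℝ) * (lamZ i 0 j' : ℝ) + (VZ (tv i 1) j : ℝ) * (lamZ i 1 j' : ℝ)
      + (VZ (tv i 2) j : ℝ) * (lamZ i 2 j' : ℝ) = if j = j' then 180 else 0 := by
  have := Q0 i j j'
  split
  · rename_i h; rw [h] at this ⊢; rw [if_pos rfl] at this; exact_mod_cast this
  · rename_i h; rw [if_neg h] at this; exact_mod_cast this

lemma Q5cast (i : Fin 17) (j : Fin 3) :
    (lamZ i 0 j : ℝ) + (lamZ i 1 j : ℝ) + (lamZ i 2 j : ℝ) = 20 := by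
  exact_mod_cast Q5 i j

lemma leaf (i : Fin 17) (x : Fin 3 → ℝ) (hs : x 0 + x 1 + x 2 = 1)
    (h0 : 0 ≤ evR (lamZ i 0) x) (h1 : 0 ≤ evR (lamZ i 1) x) (h2 : 0 ≤ evR (lamZ i 2) x) :
    ∃ co : Fin 3 → ℝ, (∀ k, 0 ≤ co k) ∧ co 0 + co 1 + co 2 = 1 ∧ x = cmb i co := by
  have h20 : (0:ℝ) ≤ 20 := by norm_num
  refine ⟨![evR (lamZ i 0) x / 20, evR (lamZ i 1) x / 20, evR (lamZ i 2) x / 20], ?_, ?_, ?_⟩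
  · intro k
    fin_cases k
    · simpa using div_nonneg h0 h20
    · simpa using div_nonneg h1 h20
    · simpa using div_nonneg h2 h20
  · show evR (lamZ i 0) x / 20 + evR (lamZ i 1) x / 20 + evR (lamZ i 2) x / 20 = 1
    simp only [evR]
    linear_combination (x 0 / 20) * Q5cast i 0 + (x 1 / 20) * Q5cast i 1
      + (x 2 / 20) * Q5cast i 2 + hs
  · have leafco : ∀ (j : Fin 3) (d0 d1 d2 : ℝ),
        ((VZ (tv i 0) j : ℝ) * (lamZ i 0 0 : ℝ) + (VZ (tv i 1) j : ℝ) * (lamZ i 1 0 : ℝ)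
          + (VZ (tv i 2) j : ℝ) * (lamZ i 2 0 : ℝ) = d0) →
        ((VZ (tv i 0) j : ℝ) * (lamZ i 0 1 : ℝ) + (VZ (tv i 1) j : ℝ) * (lamZ i 1 1 : ℝ)
          + (VZ (tv i 2) j : ℝ) * (lamZ i 2 1 : ℝ) = d1) →
        ((VZ (tv i 0) j : ℝ) * (lamZ i 0 2 : ℝ) + (VZ (tv i 1) j : ℝ) * (lamZ i 1 2 : ℝ)
          + (VZ (tv i 2) j : ℝ) * (lamZ i 2 2 : ℝ) = d2) →
        (x 0 * d0 + x 1 * d1 + x 2 * d2 = 180 * x j) →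
        x j = evR (lamZ i 0) x / 20 * ((VZ (tv i 0) j : ℝ) / 9)
          + evR (lamZ i 1) x / 20 * ((VZ (tv i 1) j : ℝ) / 9)
          + evR (lamZ i 2) x / 20 * ((VZ (tv i 2) j : ℝ) / 9) := by
      intro j d0 d1 d2 p0 p1 p2 hx
      simp only [evR]
      linear_combination (-(x 0) / 180) * p0 + (-(x 1) / 180) * p1 + (-(x 2) / 180) * p2 - hx / 180
    funext j
    fin_cases j
    · rw [cmb_apply]
      exact leafco 0 180 0 0
        (by have := Q0cast i 0 0; rwa [if_pos rfl] at this)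
        (by have := Q0cast i 0 1; rwa [if_neg (by decide)] at this)
        (by have := Q0cast i 0 2; rwa [if_neg (by decide)] at this) (by ring)
    · rw [cmb_apply]
      exact leafco 1 0 180 0
        (by have := Q0cast i 1 0; rwa [if_neg (by decide)] at this)
        (by have := Q0cast i 1 1; rwa [if_pos rfl] at this)
        (by have := Q0cast i 1 2; rwa [if_neg (by decide)] at this) (by ring)
    · rw [cmb_apply]
      exact leafco 2 0 0 180
        (by have := Q0cast i 2 0; rwa [if_neg (by decide)] at this)
        (by have := Q0cast i 2 1; rwa [if_neg (by decide)] at this)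
        (by have := Q0cast i 2 2; rwa [if_pos rfl] at this) (by ring)
lemma evR_eval (c : Fin 3 → ℤ) (a b d : ℤ) (h0 : c 0 = a) (h1 : c 1 = b) (h2 : c 2 = d)
    (x : Fin 3 → ℝ) : evR c x = (a:ℝ) * x 0 + (b:ℝ) * x 1 + (d:ℝ) * x 2 := by
  simp [evR, h0, h1, h2]

lemma cover (x : Fin 3 → ℝ) (hnn : ∀ j, 0 ≤ x j) (hs : x 0 + x 1 + x 2 = 1) :
    ∃ (i : Fin 17) (co : Fin 3 → ℝ), (∀ k, 0 ≤ co k) ∧ co 0 + co 1 + co 2 = 1 ∧ x = cmb i co := by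
  have hx0 := hnn 0; have hx1 := hnn 1; have hx2 := hnn 2
  rcases le_total 0 ((2) * x 0 + (-1) * x 1 + (-4) * x 2) with hL1 | hL1
  · -- L1 ≥ 0
    rcases le_total 0 ((0) * x 0 + (1) * x 1 + (-4) * x 2) with hP4 | hP4
    · -- P4 ≥ 0
      rcases le_total 0 ((1) * x 0 + (-2) * x 1 + (4) * x 2) with ha24 | ha24
      · -- a24 ≥ 0
        refine ⟨0, leaf 0 x hs ?_ ?_ ?_⟩
        · rw [evR_eval (lamZ 0 0) (20) (-40) (80) (by decide) (by decide) (by decide)]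
          push_cast
          linarith
        · rw [evR_eval (lamZ 0 1) (0) (60) (-240) (by decide) (by decide) (by decide)]
          push_cast
          linarith
        · rw [evR_eval (lamZ 0 2) (0) (0) (180) (by decide) (by decide) (by decide)]
          push_cast
          linarith
      · -- a24 ≤ 0
        refine ⟨1, leaf 1 x hs ?_ ?_ ?_⟩
        · rw [evR_eval (lamZ 1 0) (40) (-20) (-80) (by decide) (by decide) (by decide)]
          push_cast
          linarith
        · rw [evR_eval (lamZ 1 1) (-20) (40) (-80) (by decide) (by decide) (by decide)]
          push_cast
          linarith
        · rw [evR_eval (lamZ 1 2) (0) (0) (180) (by decide) (by decide) (by decide)]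
          push_cast
          linarith
    · -- P4 ≤ 0
      rcases le_total 0 ((0) * x 0 + (1) * x 1 + (-1) * x 2) with hP7 | hP7
      · -- P7 ≥ 0
        refine ⟨9, leaf 9 x hs ?_ ?_ ?_⟩
        · rw [evR_eval (lamZ 9 0) (20) (-10) (-40) (by decide) (by decide) (by decide)]
          push_cast
          linarith
        · rw [evR_eval (lamZ 9 1) (0) (60) (-60) (by decide) (by decide) (by decide)]
          push_cast
          linarith
        · rw [evR_eval (lamZ 9 2) (0) (-30) (120) (by decide) (by decide) (by decide)]
          push_cast
          linarith
      · -- P7 ≤ 0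
        refine ⟨8, leaf 8 x hs ?_ ?_ ?_⟩
        · rw [evR_eval (lamZ 8 0) (0) (-60) (60) (by decide) (by decide) (by decide)]
          push_cast
          linarith
        · rw [evR_eval (lamZ 8 1) (20) (-10) (-40) (by decide) (by decide) (by decide)]
          push_cast
          linarith
        · rw [evR_eval (lamZ 8 2) (0) (90) (0) (by decide) (by decide) (by decide)]
          push_cast
          linarith
  · -- L1 ≤ 0
    rcases le_total 0 ((2) * x 0 + (-1) * x 1 + (-1) * x 2) with hL2 | hL2
    · -- L2 ≥ 0
      rcases le_total 0 ((1) * x 0 + (-1) * x 1 + (0) * x 2) with h45 | h45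
      · -- 45 ≥ 0
        rcases le_total 0 ((0) * x 0 + (1) * x 1 + (-1) * x 2) with h57 | h57
        · -- 57 ≥ 0
          refine ⟨11, leaf 11 x hs ?_ ?_ ?_⟩
          · rw [evR_eval (lamZ 11 0) (0) (60) (-60) (by decide) (by decide) (by decide)]
            push_cast
            linarith
          · rw [evR_eval (lamZ 11 1) (-40) (20) (80) (by decide) (by decide) (by decide)]
            push_cast
            linarith
          · rw [evR_eval (lamZ 11 2) (60) (-60) (0) (by decide) (by decide) (by decide)]
            push_cast
            linarith
        · -- 57 ≤ 0
          rcases le_total 0 ((-8) * x 0 + (19) * x 1 + (1) * x 2) with h78 | h78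
          · -- 78 ≥ 0
            refine ⟨12, leaf 12 x hs ?_ ?_ ?_⟩
            · rw [evR_eval (lamZ 12 0) (60) (-30) (-30) (by decide) (by decide) (by decide)]
              push_cast
              linarith
            · rw [evR_eval (lamZ 12 1) (-40) (95) (5) (by decide) (by decide) (by decide)]
              push_cast
              linarith
            · rw [evR_eval (lamZ 12 2) (0) (-45) (45) (by decide) (by decide) (by decide)]
              push_cast
              linarith
          · -- 78 ≤ 0
            rcases le_total 0 ((1) * x 0 + (7) * x 1 + (-2) * x 2) with hc28 | hc28
            · -- c28 ≥ 0
              refine ⟨10, leaf 10 x hs ?_ ?_ ?_⟩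
              · rw [evR_eval (lamZ 10 0) (32) (-76) (-4) (by decide) (by decide) (by decide)]
                push_cast
                linarith
              · rw [evR_eval (lamZ 10 1) (12) (84) (-24) (by decide) (by decide) (by decide)]
                push_cast
                linarith
              · rw [evR_eval (lamZ 10 2) (-24) (12) (48) (by decide) (by decide) (by decide)]
                push_cast
                linarith
            · -- c28 ≤ 0
              refine ⟨13, leaf 13 x hs ?_ ?_ ?_⟩
              · rw [evR_eval (lamZ 13 0) (-20) (-140) (40) (by decide) (by decide) (by decide)]
                push_cast
                linarith
              · rw [evR_eval (lamZ 13 1) (40) (-20) (-20) (by decide) (by decide) (by decide)]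
                push_cast
                linarith
              · rw [evR_eval (lamZ 13 2) (0) (180) (0) (by decide) (by decide) (by decide)]
                push_cast
                linarith
      · -- 45 ≤ 0
        rcases le_total 0 ((1) * x 0 + (1) * x 1 + (-8) * x 2) with h46 | h46
        · -- 46 ≥ 0
          refine ⟨2, leaf 2 x hs ?_ ?_ ?_⟩
          · rw [evR_eval (lamZ 2 0) (20) (20) (-160) (by decide) (by decide) (by decide)]
            push_cast
            linarith
          · rw [evR_eval (lamZ 2 1) (-120) (60) (240) (by decide) (by decide) (by decide)]
            push_cast
            linarith
          · rw [evR_eval (lamZ 2 2) (120) (-60) (-60) (by decide) (by decide) (by decide)]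
            push_cast
            linarith
        · -- 46 ≤ 0
          refine ⟨16, leaf 16 x hs ?_ ?_ ?_⟩
          · rw [evR_eval (lamZ 16 0) (120) (-60) (-60) (by decide) (by decide) (by decide)]
            push_cast
            linarith
          · rw [evR_eval (lamZ 16 1) (-90) (90) (0) (by decide) (by decide) (by decide)]
            push_cast
            linarith
          · rw [evR_eval (lamZ 16 2) (-10) (-10) (80) (by decide) (by decide) (by decide)]
            push_cast
            linarith
    · -- L2 ≤ 0
      rcases le_total 0 ((1) * x 0 + (1) * x 1 + (-2) * x 2) with hb25 | hb25
      · -- b25 ≥ 0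
        rcases le_total 0 ((1) * x 0 + (0) * x 1 + (-3) * x 2) with hQ6 | hQ6
        · -- Q6 ≥ 0
          refine ⟨3, leaf 3 x hs ?_ ?_ ?_⟩
          · rw [evR_eval (lamZ 3 0) (60) (0) (-180) (by decide) (by decide) (by decide)]
            push_cast
            linarith
          · rw [evR_eval (lamZ 3 1) (-40) (20) (20) (by decide) (by decide) (by decide)]
            push_cast
            linarith
          · rw [evR_eval (lamZ 3 2) (0) (0) (180) (by decide) (by decide) (by decide)]
            push_cast
            linarith
        · -- Q6 ≤ 0
          rcases le_total 0 ((-1) * x 0 + (1) * x 1 + (-2) * x 2) with hb26 | hb26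
          · -- b26 ≥ 0
            refine ⟨4, leaf 4 x hs ?_ ?_ ?_⟩
            · rw [evR_eval (lamZ 4 0) (-20) (20) (-40) (by decide) (by decide) (by decide)]
              push_cast
              linarith
            · rw [evR_eval (lamZ 4 1) (-20) (0) (60) (by decide) (by decide) (by decide)]
              push_cast
              linarith
            · rw [evR_eval (lamZ 4 2) (60) (0) (0) (by decide) (by decide) (by decide)]
              push_cast
              linarith
          · -- b26 ≤ 0
            refine ⟨5, leaf 5 x hs ?_ ?_ ?_⟩
            · rw [evR_eval (lamZ 5 0) (-40) (20) (20) (by decide) (by decide) (by decide)]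
              push_cast
              linarith
            · rw [evR_eval (lamZ 5 1) (30) (-30) (60) (by decide) (by decide) (by decide)]
              push_cast
              linarith
            · rw [evR_eval (lamZ 5 2) (30) (30) (-60) (by decide) (by decide) (by decide)]
              push_cast
              linarith
      · -- b25 ≤ 0
        rcases le_total 0 ((1) * x 0 + (-1) * x 1 + (0) * x 2) with h5R | h5R
        · -- 5R ≥ 0
          rcases le_total 0 ((1) * x 0 + (-3) * x 1 + (0) * x 2) with hR8 | hR8
          · -- R8 ≥ 0
            refine ⟨14, leaf 14 x hs ?_ ?_ ?_⟩
            · rw [evR_eval (lamZ 14 0) (-40) (20) (20) (by decide) (by decide) (by decide)]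
              push_cast
              linarith
            · rw [evR_eval (lamZ 14 1) (60) (-180) (0) (by decide) (by decide) (by decide)]
              push_cast
              linarith
            · rw [evR_eval (lamZ 14 2) (0) (180) (0) (by decide) (by decide) (by decide)]
              push_cast
              linarith
          · -- R8 ≤ 0
            refine ⟨15, leaf 15 x hs ?_ ?_ ?_⟩
            · rw [evR_eval (lamZ 15 0) (-30) (90) (0) (by decide) (by decide) (by decide)]
              push_cast
              linarith
            · rw [evR_eval (lamZ 15 1) (-40) (20) (20) (by decide) (by decide) (by decide)]
              push_cast
              linarith
            · rw [evR_eval (lamZ 15 2) (90) (-90) (0) (by decide) (by decide) (by decide)]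
              push_cast
              linarith
        · -- 5R ≤ 0
          rcases le_total 0 ((1) * x 0 + (-2) * x 1 + (1) * x 2) with hb35 | hb35
          · -- b35 ≥ 0
            refine ⟨7, leaf 7 x hs ?_ ?_ ?_⟩
            · rw [evR_eval (lamZ 7 0) (-60) (60) (0) (by decide) (by decide) (by decide)]
              push_cast
              linarith
            · rw [evR_eval (lamZ 7 1) (20) (-40) (20) (by decide) (by decide) (by decide)]
              push_cast
              linarith
            · rw [evR_eval (lamZ 7 2) (60) (0) (0) (by decide) (by decide) (by decide)]
              push_cast
              linarith
          · -- b35 ≤ 0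
            refine ⟨6, leaf 6 x hs ?_ ?_ ?_⟩
            · rw [evR_eval (lamZ 6 0) (-20) (40) (-20) (by decide) (by decide) (by decide)]
              push_cast
              linarith
            · rw [evR_eval (lamZ 6 1) (-20) (-20) (40) (by decide) (by decide) (by decide)]
              push_cast
              linarith
            · rw [evR_eval (lamZ 6 2) (60) (0) (0) (by decide) (by decide) (by decide)]
              push_cast
              linarith


lemma cmb_eq_pt (i : Fin 17) (co : Fin 3 → ℝ) (z : Fin 3 → ℝ)
    (h0 : co 0 * (VZ (tv i 0) 0 : ℝ) + co 1 * (VZ (tv i 1) 0 : ℝ)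
        + co 2 * (VZ (tv i 2) 0 : ℝ) = 9 * z 0)
    (h1 : co 0 * (VZ (tv i 0) 1 : ℝ) + co 1 * (VZ (tv i 1) 1 : ℝ)
        + co 2 * (VZ (tv i 2) 1 : ℝ) = 9 * z 1)
    (h2 : co 0 * (VZ (tv i 0) 2 : ℝ) + co 1 * (VZ (tv i 1) 2 : ℝ)
        + co 2 * (VZ (tv i 2) 2 : ℝ) = 9 * z 2) : cmb i co = z := by
  have g : ∀ jj : Fin 3, (co 0 * (VZ (tv i 0) jj : ℝ) + co 1 * (VZ (tv i 1) jj : ℝ)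
      + co 2 * (VZ (tv i 2) jj : ℝ) = 9 * z jj) → cmb i co jj = z jj := by
    intro jj h
    rw [cmb_apply]
    linarith
  funext j
  fin_cases j
  · exact g 0 h0
  · exact g 1 h1
  · exact g 2 h2

lemma memA {t : ℝ} (h0 : 0 ≤ t) (h1 : t ≤ 1) : triSeg 0 1 t ∈ stdSimplex ℝ (Fin 3) := by
  constructor
  · intro j; fin_cases j <;> simp [triSeg, triVert, Fin.ext_iff] <;> linarith
  · rw [Fin.sum_univ_three]; simp [triSeg, triVert, Fin.ext_iff]

lemma memB {t : ℝ} (h0 : 0 ≤ t) (h1 : t ≤ 1) : triSeg 1 2 t ∈ stdSimplex ℝ (Fin 3) := by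
  constructor
  · intro j; fin_cases j <;> simp [triSeg, triVert, Fin.ext_iff] <;> linarith
  · rw [Fin.sum_univ_three]; simp [triSeg, triVert, Fin.ext_iff]

lemma memC {t : ℝ} (h0 : 0 ≤ t) (h1 : t ≤ 1) : triSeg 0 2 t ∈ stdSimplex ℝ (Fin 3) := by
  constructor
  · intro j; fin_cases j <;> simp [triSeg, triVert, Fin.ext_iff] <;> linarith
  · rw [Fin.sum_univ_three]; simp [triSeg, triVert, Fin.ext_iff]

noncomputable def ptA (t : ℝ) (h0 : 0 ≤ t) (h1 : t ≤ 1) : ↥(stdSimplex ℝ (Fin 3)) :=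
  ⟨triSeg 0 1 t, memA h0 h1⟩
noncomputable def ptB (t : ℝ) (h0 : 0 ≤ t) (h1 : t ≤ 1) : ↥(stdSimplex ℝ (Fin 3)) :=
  ⟨triSeg 1 2 t, memB h0 h1⟩
noncomputable def ptC (t : ℝ) (h0 : 0 ≤ t) (h1 : t ≤ 1) : ↥(stdSimplex ℝ (Fin 3)) :=
  ⟨triSeg 0 2 t, memC h0 h1⟩

lemma ptA_val (t : ℝ) (h0 : 0 ≤ t) (h1 : t ≤ 1) : (ptA t h0 h1).val = triSeg 0 1 t := rfl

lemma relAB (t : ℝ) (h0 : 0 ≤ t) (h1 : t ≤ 1) : dunceRel (ptA t h0 h1) (ptB t h0 h1) :=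
  ⟨t, ⟨h0, h1⟩, Or.inl ⟨rfl, rfl⟩⟩
lemma relAC (t : ℝ) (h0 : 0 ≤ t) (h1 : t ≤ 1) : dunceRel (ptA t h0 h1) (ptC t h0 h1) :=
  ⟨t, ⟨h0, h1⟩, Or.inr ⟨rfl, rfl⟩⟩

lemma ptA_eq {t t' : ℝ} (h0 : 0 ≤ t) (h1 : t ≤ 1) (h0' : 0 ≤ t') (h1' : t' ≤ 1)
    (h : t = t') : ptA t h0 h1 = ptA t' h0' h1' := by subst h; rfl

lemma linkPQ (g0 : (0:ℝ) ≤ 1) (g1 : (1:ℝ) ≤ 1) :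
    Relation.EqvGen dunceRel (ptA 0 le_rfl zero_le_one) (ptA 1 g0 g1) := by
  have e : ptB 0 le_rfl zero_le_one = ptA 1 g0 g1 :=
    Subtype.ext (by
      show triSeg 1 2 0 = triSeg 0 1 1
      funext j; fin_cases j <;> simp [triSeg, triVert, Fin.ext_iff])
  exact e ▸ Relation.EqvGen.rel _ _ (relAB 0 le_rfl zero_le_one)


lemma claimA3 (i : Fin 17) {A B C : ℝ} (ha : 0 ≤ A) (hb : 0 ≤ B) (hc : 0 ≤ C)
    (h : A + B + C = 1) (n : Fin 9) :
    Fm (cmb i ![A,B,C]) n = A * (if (n : ℕ) = lbl (tv i 0) then 1 else 0)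
      + B * (if (n : ℕ) = lbl (tv i 1) then 1 else 0)
      + C * (if (n : ℕ) = lbl (tv i 2) then 1 else 0) := by
  have hco : ∀ k : Fin 3, 0 ≤ (![A,B,C] : Fin 3 → ℝ) k := by
    intro k; fin_cases k <;> simpa
  have hsum : (![A,B,C] : Fin 3 → ℝ) 0 + (![A,B,C] : Fin 3 → ℝ) 1
      + (![A,B,C] : Fin 3 → ℝ) 2 = 1 := by simpa
  have := claimA (i := i) hco hsum n
  have e0 : (![A,B,C] : Fin 3 → ℝ) 0 = A := rfl
  have e1 : (![A,B,C] : Fin 3 → ℝ) 1 = B := rfl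
  have e2 : (![A,B,C] : Fin 3 → ℝ) 2 = C := rfl
  rw [e0, e1, e2] at this
  exact this

lemma cmb3_mem (i : Fin 17) {A B C : ℝ} (ha : 0 ≤ A) (hb : 0 ≤ B) (hc : 0 ≤ C)
    (h : A + B + C = 1) : cmb i ![A,B,C] ∈ stdSimplex ℝ (Fin 3) :=
  cmb_mem (by intro k; fin_cases k <;> simpa) (by simpa)

lemma segA_low (t : ℝ) : cmb 0 ![(1-3*t), (3*t), 0] = triSeg 0 1 t := by
  have m0 : (![(1-3*t), (3*t), 0] : Fin 3 → ℝ) 0 = (1-3*t) := rfl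
  have m1 : (![(1-3*t), (3*t), 0] : Fin 3 → ℝ) 1 = (3*t) := rfl
  have m2 : (![(1-3*t), (3*t), 0] : Fin 3 → ℝ) 2 = 0 := rfl
  apply cmb_eq_pt
  · have e0 : VZ (tv 0 0) 0 = 9 := by decide
    have e1 : VZ (tv 0 1) 0 = 6 := by decide
    have e2 : VZ (tv 0 2) 0 = 4 := by decide
    rw [m0, m1, m2, e0, e1, e2]
    simp only [triSeg, triVert, Pi.add_apply, Pi.smul_apply, smul_eq_mul]
    norm_num [Fin.ext_iff]
    try ring
  · have e0 : VZ (tv 0 0) 1 = 0 := by decide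
    have e1 : VZ (tv 0 1) 1 = 3 := by decide
    have e2 : VZ (tv 0 2) 1 = 4 := by decide
    rw [m0, m1, m2, e0, e1, e2]
    simp only [triSeg, triVert, Pi.add_apply, Pi.smul_apply, smul_eq_mul]
    norm_num [Fin.ext_iff]
    try ring
  · have e0 : VZ (tv 0 0) 2 = 0 := by decide
    have e1 : VZ (tv 0 1) 2 = 0 := by decide
    have e2 : VZ (tv 0 2) 2 = 1 := by decide
    rw [m0, m1, m2, e0, e1, e2]
    simp only [triSeg, triVert, Pi.add_apply, Pi.smul_apply, smul_eq_mul]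
    norm_num [Fin.ext_iff]
    try ring

lemma segA_mid (t : ℝ) : cmb 1 ![(2-3*t), (3*t-1), 0] = triSeg 0 1 t := by
  have m0 : (![(2-3*t), (3*t-1), 0] : Fin 3 → ℝ) 0 = (2-3*t) := rfl
  have m1 : (![(2-3*t), (3*t-1), 0] : Fin 3 → ℝ) 1 = (3*t-1) := rfl
  have m2 : (![(2-3*t), (3*t-1), 0] : Fin 3 → ℝ) 2 = 0 := rfl
  apply cmb_eq_pt
  · have e0 : VZ (tv 1 0) 0 = 6 := by decide
    have e1 : VZ (tv 1 1) 0 = 3 := by decide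
    have e2 : VZ (tv 1 2) 0 = 4 := by decide
    rw [m0, m1, m2, e0, e1, e2]
    simp only [triSeg, triVert, Pi.add_apply, Pi.smul_apply, smul_eq_mul]
    norm_num [Fin.ext_iff]
    try ring
  · have e0 : VZ (tv 1 0) 1 = 3 := by decide
    have e1 : VZ (tv 1 1) 1 = 6 := by decide
    have e2 : VZ (tv 1 2) 1 = 4 := by decide
    rw [m0, m1, m2, e0, e1, e2]
    simp only [triSeg, triVert, Pi.add_apply, Pi.smul_apply, smul_eq_mul]
    norm_num [Fin.ext_iff]
    try ring
  · have e0 : VZ (tv 1 0) 2 = 0 := by decide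
    have e1 : VZ (tv 1 1) 2 = 0 := by decide
    have e2 : VZ (tv 1 2) 2 = 1 := by decide
    rw [m0, m1, m2, e0, e1, e2]
    simp only [triSeg, triVert, Pi.add_apply, Pi.smul_apply, smul_eq_mul]
    norm_num [Fin.ext_iff]
    try ring

lemma segA_high (t : ℝ) : cmb 3 ![(3-3*t), (3*t-2), 0] = triSeg 0 1 t := by
  have m0 : (![(3-3*t), (3*t-2), 0] : Fin 3 → ℝ) 0 = (3-3*t) := rfl
  have m1 : (![(3-3*t), (3*t-2), 0] : Fin 3 → ℝ) 1 = (3*t-2) := rfl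
  have m2 : (![(3-3*t), (3*t-2), 0] : Fin 3 → ℝ) 2 = 0 := rfl
  apply cmb_eq_pt
  · have e0 : VZ (tv 3 0) 0 = 3 := by decide
    have e1 : VZ (tv 3 1) 0 = 0 := by decide
    have e2 : VZ (tv 3 2) 0 = 3 := by decide
    rw [m0, m1, m2, e0, e1, e2]
    simp only [triSeg, triVert, Pi.add_apply, Pi.smul_apply, smul_eq_mul]
    norm_num [Fin.ext_iff]
    try ring
  · have e0 : VZ (tv 3 0) 1 = 6 := by decide
    have e1 : VZ (tv 3 1) 1 = 9 := by decide
    have e2 : VZ (tv 3 2) 1 = 5 := by decide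
    rw [m0, m1, m2, e0, e1, e2]
    simp only [triSeg, triVert, Pi.add_apply, Pi.smul_apply, smul_eq_mul]
    norm_num [Fin.ext_iff]
    try ring
  · have e0 : VZ (tv 3 0) 2 = 0 := by decide
    have e1 : VZ (tv 3 1) 2 = 0 := by decide
    have e2 : VZ (tv 3 2) 2 = 1 := by decide
    rw [m0, m1, m2, e0, e1, e2]
    simp only [triSeg, triVert, Pi.add_apply, Pi.smul_apply, smul_eq_mul]
    norm_num [Fin.ext_iff]
    try ring

lemma segB_low (t : ℝ) : cmb 4 ![(1-3*t), (3*t), 0] = triSeg 1 2 t := by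
  have m0 : (![(1-3*t), (3*t), 0] : Fin 3 → ℝ) 0 = (1-3*t) := rfl
  have m1 : (![(1-3*t), (3*t), 0] : Fin 3 → ℝ) 1 = (3*t) := rfl
  have m2 : (![(1-3*t), (3*t), 0] : Fin 3 → ℝ) 2 = 0 := rfl
  apply cmb_eq_pt
  · have e0 : VZ (tv 4 0) 0 = 0 := by decide
    have e1 : VZ (tv 4 1) 0 = 0 := by decide
    have e2 : VZ (tv 4 2) 0 = 3 := by decide
    rw [m0, m1, m2, e0, e1, e2]
    simp only [triSeg, triVert, Pi.add_apply, Pi.smul_apply, smul_eq_mul]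
    norm_num [Fin.ext_iff]
    try ring
  · have e0 : VZ (tv 4 0) 1 = 9 := by decide
    have e1 : VZ (tv 4 1) 1 = 6 := by decide
    have e2 : VZ (tv 4 2) 1 = 5 := by decide
    rw [m0, m1, m2, e0, e1, e2]
    simp only [triSeg, triVert, Pi.add_apply, Pi.smul_apply, smul_eq_mul]
    norm_num [Fin.ext_iff]
    try ring
  · have e0 : VZ (tv 4 0) 2 = 0 := by decide
    have e1 : VZ (tv 4 1) 2 = 3 := by decide
    have e2 : VZ (tv 4 2) 2 = 1 := by decide
    rw [m0, m1, m2, e0, e1, e2]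
    simp only [triSeg, triVert, Pi.add_apply, Pi.smul_apply, smul_eq_mul]
    norm_num [Fin.ext_iff]
    try ring

lemma segB_mid (t : ℝ) : cmb 6 ![(2-3*t), (3*t-1), 0] = triSeg 1 2 t := by
  have m0 : (![(2-3*t), (3*t-1), 0] : Fin 3 → ℝ) 0 = (2-3*t) := rfl
  have m1 : (![(2-3*t), (3*t-1), 0] : Fin 3 → ℝ) 1 = (3*t-1) := rfl
  have m2 : (![(2-3*t), (3*t-1), 0] : Fin 3 → ℝ) 2 = 0 := rfl
  apply cmb_eq_pt
  · have e0 : VZ (tv 6 0) 0 = 0 := by decide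
    have e1 : VZ (tv 6 1) 0 = 0 := by decide
    have e2 : VZ (tv 6 2) 0 = 3 := by decide
    rw [m0, m1, m2, e0, e1, e2]
    simp only [triSeg, triVert, Pi.add_apply, Pi.smul_apply, smul_eq_mul]
    norm_num [Fin.ext_iff]
    try ring
  · have e0 : VZ (tv 6 0) 1 = 6 := by decide
    have e1 : VZ (tv 6 1) 1 = 3 := by decide
    have e2 : VZ (tv 6 2) 1 = 3 := by decide
    rw [m0, m1, m2, e0, e1, e2]
    simp only [triSeg, triVert, Pi.add_apply, Pi.smul_apply, smul_eq_mul]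
    norm_num [Fin.ext_iff]
    try ring
  · have e0 : VZ (tv 6 0) 2 = 3 := by decide
    have e1 : VZ (tv 6 1) 2 = 6 := by decide
    have e2 : VZ (tv 6 2) 2 = 3 := by decide
    rw [m0, m1, m2, e0, e1, e2]
    simp only [triSeg, triVert, Pi.add_apply, Pi.smul_apply, smul_eq_mul]
    norm_num [Fin.ext_iff]
    try ring

lemma segB_high (t : ℝ) : cmb 7 ![(3-3*t), (3*t-2), 0] = triSeg 1 2 t := by
  have m0 : (![(3-3*t), (3*t-2), 0] : Fin 3 → ℝ) 0 = (3-3*t) := rfl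
  have m1 : (![(3-3*t), (3*t-2), 0] : Fin 3 → ℝ) 1 = (3*t-2) := rfl
  have m2 : (![(3-3*t), (3*t-2), 0] : Fin 3 → ℝ) 2 = 0 := rfl
  apply cmb_eq_pt
  · have e0 : VZ (tv 7 0) 0 = 0 := by decide
    have e1 : VZ (tv 7 1) 0 = 0 := by decide
    have e2 : VZ (tv 7 2) 0 = 3 := by decide
    rw [m0, m1, m2, e0, e1, e2]
    simp only [triSeg, triVert, Pi.add_apply, Pi.smul_apply, smul_eq_mul]
    norm_num [Fin.ext_iff]
    try ring
  · have e0 : VZ (tv 7 0) 1 = 3 := by decide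
    have e1 : VZ (tv 7 1) 1 = 0 := by decide
    have e2 : VZ (tv 7 2) 1 = 3 := by decide
    rw [m0, m1, m2, e0, e1, e2]
    simp only [triSeg, triVert, Pi.add_apply, Pi.smul_apply, smul_eq_mul]
    norm_num [Fin.ext_iff]
    try ring
  · have e0 : VZ (tv 7 0) 2 = 6 := by decide
    have e1 : VZ (tv 7 1) 2 = 9 := by decide
    have e2 : VZ (tv 7 2) 2 = 3 := by decide
    rw [m0, m1, m2, e0, e1, e2]
    simp only [triSeg, triVert, Pi.add_apply, Pi.smul_apply, smul_eq_mul]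
    norm_num [Fin.ext_iff]
    try ring

lemma segC_low (t : ℝ) : cmb 8 ![(3*t), (1-3*t), 0] = triSeg 0 2 t := by
  have m0 : (![(3*t), (1-3*t), 0] : Fin 3 → ℝ) 0 = (3*t) := rfl
  have m1 : (![(3*t), (1-3*t), 0] : Fin 3 → ℝ) 1 = (1-3*t) := rfl
  have m2 : (![(3*t), (1-3*t), 0] : Fin 3 → ℝ) 2 = 0 := rfl
  apply cmb_eq_pt
  · have e0 : VZ (tv 8 0) 0 = 6 := by decide
    have e1 : VZ (tv 8 1) 0 = 9 := by decide
    have e2 : VZ (tv 8 2) 0 = 5 := by decide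
    rw [m0, m1, m2, e0, e1, e2]
    simp only [triSeg, triVert, Pi.add_apply, Pi.smul_apply, smul_eq_mul]
    norm_num [Fin.ext_iff]
    try ring
  · have e0 : VZ (tv 8 0) 1 = 0 := by decide
    have e1 : VZ (tv 8 1) 1 = 0 := by decide
    have e2 : VZ (tv 8 2) 1 = 2 := by decide
    rw [m0, m1, m2, e0, e1, e2]
    simp only [triSeg, triVert, Pi.add_apply, Pi.smul_apply, smul_eq_mul]
    norm_num [Fin.ext_iff]
    try ring
  · have e0 : VZ (tv 8 0) 2 = 3 := by decide
    have e1 : VZ (tv 8 1) 2 = 0 := by decide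
    have e2 : VZ (tv 8 2) 2 = 2 := by decide
    rw [m0, m1, m2, e0, e1, e2]
    simp only [triSeg, triVert, Pi.add_apply, Pi.smul_apply, smul_eq_mul]
    norm_num [Fin.ext_iff]
    try ring

lemma segC_mid (t : ℝ) : cmb 13 ![(3*t-1), (2-3*t), 0] = triSeg 0 2 t := by
  have m0 : (![(3*t-1), (2-3*t), 0] : Fin 3 → ℝ) 0 = (3*t-1) := rfl
  have m1 : (![(3*t-1), (2-3*t), 0] : Fin 3 → ℝ) 1 = (2-3*t) := rfl
  have m2 : (![(3*t-1), (2-3*t), 0] : Fin 3 → ℝ) 2 = 0 := rfl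
  apply cmb_eq_pt
  · have e0 : VZ (tv 13 0) 0 = 3 := by decide
    have e1 : VZ (tv 13 1) 0 = 6 := by decide
    have e2 : VZ (tv 13 2) 0 = 3 := by decide
    rw [m0, m1, m2, e0, e1, e2]
    simp only [triSeg, triVert, Pi.add_apply, Pi.smul_apply, smul_eq_mul]
    norm_num [Fin.ext_iff]
    try ring
  · have e0 : VZ (tv 13 0) 1 = 0 := by decide
    have e1 : VZ (tv 13 1) 1 = 0 := by decide
    have e2 : VZ (tv 13 2) 1 = 1 := by decide
    rw [m0, m1, m2, e0, e1, e2]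
    simp only [triSeg, triVert, Pi.add_apply, Pi.smul_apply, smul_eq_mul]
    norm_num [Fin.ext_iff]
    try ring
  · have e0 : VZ (tv 13 0) 2 = 6 := by decide
    have e1 : VZ (tv 13 1) 2 = 3 := by decide
    have e2 : VZ (tv 13 2) 2 = 5 := by decide
    rw [m0, m1, m2, e0, e1, e2]
    simp only [triSeg, triVert, Pi.add_apply, Pi.smul_apply, smul_eq_mul]
    norm_num [Fin.ext_iff]
    try ring

lemma segC_high (t : ℝ) : cmb 14 ![(3*t-2), (3-3*t), 0] = triSeg 0 2 t := by
  have m0 : (![(3*t-2), (3-3*t), 0] : Fin 3 → ℝ) 0 = (3*t-2) := rfl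
  have m1 : (![(3*t-2), (3-3*t), 0] : Fin 3 → ℝ) 1 = (3-3*t) := rfl
  have m2 : (![(3*t-2), (3-3*t), 0] : Fin 3 → ℝ) 2 = 0 := rfl
  apply cmb_eq_pt
  · have e0 : VZ (tv 14 0) 0 = 0 := by decide
    have e1 : VZ (tv 14 1) 0 = 3 := by decide
    have e2 : VZ (tv 14 2) 0 = 3 := by decide
    rw [m0, m1, m2, e0, e1, e2]
    simp only [triSeg, triVert, Pi.add_apply, Pi.smul_apply, smul_eq_mul]
    norm_num [Fin.ext_iff]
    try ring
  · have e0 : VZ (tv 14 0) 1 = 0 := by decide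
    have e1 : VZ (tv 14 1) 1 = 0 := by decide
    have e2 : VZ (tv 14 2) 1 = 1 := by decide
    rw [m0, m1, m2, e0, e1, e2]
    simp only [triSeg, triVert, Pi.add_apply, Pi.smul_apply, smul_eq_mul]
    norm_num [Fin.ext_iff]
    try ring
  · have e0 : VZ (tv 14 0) 2 = 9 := by decide
    have e1 : VZ (tv 14 1) 2 = 6 := by decide
    have e2 : VZ (tv 14 2) 2 = 5 := by decide
    rw [m0, m1, m2, e0, e1, e2]
    simp only [triSeg, triVert, Pi.add_apply, Pi.smul_apply, smul_eq_mul]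
    norm_num [Fin.ext_iff]
    try ring


lemma conB (t : ℝ) (h0 : 0 ≤ t) (h1 : t ≤ 1) : Fm (triSeg 1 2 t) = Fm (triSeg 0 1 t) := by
  rcases le_total t (1/3) with hr | hr
  · rw [← segA_low, ← segB_low]
    funext n
    rw [claimA3 0 (by linarith) (by linarith) le_rfl (by ring),
        claimA3 4 (by linarith) (by linarith) le_rfl (by ring),
        show lbl (tv 0 0) = 1 from by decide, show lbl (tv 0 1) = 2 from by decide, show lbl (tv 0 2) = 4 from by decide, show lbl (tv 4 0) = 1 from by decide, show lbl (tv 4 1) = 2 from by decide, show lbl (tv 4 2) = 6 from by decide]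
    norm_num
  · rcases le_total t (2/3) with hr2 | hr2
    · rw [← segA_mid, ← segB_mid]
      funext n
      rw [claimA3 1 (by linarith) (by linarith) le_rfl (by ring),
          claimA3 6 (by linarith) (by linarith) le_rfl (by ring),
          show lbl (tv 1 0) = 2 from by decide, show lbl (tv 1 1) = 3 from by decide, show lbl (tv 1 2) = 4 from by decide, show lbl (tv 6 0) = 2 from by decide, show lbl (tv 6 1) = 3 from by decide, show lbl (tv 6 2) = 5 from by decide]
      norm_num
    · rw [← segA_high, ← segB_high]
      funext n
      rw [claimA3 3 (by linarith) (by linarith) le_rfl (by ring),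
          claimA3 7 (by linarith) (by linarith) le_rfl (by ring),
          show lbl (tv 3 0) = 3 from by decide, show lbl (tv 3 1) = 1 from by decide, show lbl (tv 3 2) = 6 from by decide, show lbl (tv 7 0) = 3 from by decide, show lbl (tv 7 1) = 1 from by decide, show lbl (tv 7 2) = 5 from by decide]
      norm_num

lemma conC (t : ℝ) (h0 : 0 ≤ t) (h1 : t ≤ 1) : Fm (triSeg 0 2 t) = Fm (triSeg 0 1 t) := by
  rcases le_total t (1/3) with hr | hr
  · rw [← segA_low, ← segC_low]
    funext n
    rw [claimA3 0 (by linarith) (by linarith) le_rfl (by ring),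
        claimA3 8 (by linarith) (by linarith) le_rfl (by ring),
        show lbl (tv 0 0) = 1 from by decide, show lbl (tv 0 1) = 2 from by decide, show lbl (tv 0 2) = 4 from by decide, show lbl (tv 8 0) = 2 from by decide, show lbl (tv 8 1) = 1 from by decide, show lbl (tv 8 2) = 7 from by decide]
    norm_num
    ring
  · rcases le_total t (2/3) with hr2 | hr2
    · rw [← segA_mid, ← segC_mid]
      funext n
      rw [claimA3 1 (by linarith) (by linarith) le_rfl (by ring),
          claimA3 13 (by linarith) (by linarith) le_rfl (by ring),
          show lbl (tv 1 0) = 2 from by decide, show lbl (tv 1 1) = 3 from by decide, show lbl (tv 1 2) = 4 from by decide, show lbl (tv 13 0) = 3 from by decide, show lbl (tv 13 1) = 2 from by decide, show lbl (tv 13 2) = 8 from by decide]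
      norm_num
      ring
    · rw [← segA_high, ← segC_high]
      funext n
      rw [claimA3 3 (by linarith) (by linarith) le_rfl (by ring),
          claimA3 14 (by linarith) (by linarith) le_rfl (by ring),
          show lbl (tv 3 0) = 3 from by decide, show lbl (tv 3 1) = 1 from by decide, show lbl (tv 3 2) = 6 from by decide, show lbl (tv 14 0) = 1 from by decide, show lbl (tv 14 1) = 3 from by decide, show lbl (tv 14 2) = 8 from by decide]
      norm_num
      ring

lemma Fm_eqvGen {a b : ↥(stdSimplex ℝ (Fin 3))} (h : Relation.EqvGen dunceRel a b) :
    Fm a.val = Fm b.val := by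
  induction h with
  | rel x y hxy =>
      obtain ⟨t, ht, hc⟩ := hxy
      rcases hc with ⟨hx, hy⟩ | ⟨hx, hy⟩
      · rw [show x.val = triSeg 0 1 t from hx, show y.val = triSeg 1 2 t from hy, conB t ht.1 ht.2]
      · rw [show x.val = triSeg 0 1 t from hx, show y.val = triSeg 0 2 t from hy, conC t ht.1 ht.2]
  | refl _ => rfl
  | symm _ _ _ ih => exact ih.symm
  | trans _ _ _ _ _ ih1 ih2 => exact ih1.trans ih2


lemma valLow {s : ℝ} (h0 : 0 ≤ s) (h1 : s ≤ 1/3) :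
    Fm (triSeg 0 1 s) 1 = 1 - 3*s ∧ Fm (triSeg 0 1 s) 2 = 3*s ∧ Fm (triSeg 0 1 s) 3 = 0 := by
  rw [← segA_low]
  refine ⟨?_, ?_, ?_⟩ <;>
    rw [claimA3 0 (by linarith) (by linarith) le_rfl (by ring),
      show lbl (tv 0 0) = 1 from by decide, show lbl (tv 0 1) = 2 from by decide, show lbl (tv 0 2) = 4 from by decide] <;>
    norm_num [show ((1:Fin 9):ℕ) = 1 from rfl, show ((2:Fin 9):ℕ) = 2 from rfl,
      show ((3:Fin 9):ℕ) = 3 from rfl]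

lemma valMid {s : ℝ} (h0 : 1/3 ≤ s) (h1 : s ≤ 2/3) :
    Fm (triSeg 0 1 s) 1 = 0 ∧ Fm (triSeg 0 1 s) 2 = 2 - 3*s ∧ Fm (triSeg 0 1 s) 3 = 3*s - 1 := by
  rw [← segA_mid]
  refine ⟨?_, ?_, ?_⟩ <;>
    rw [claimA3 1 (by linarith) (by linarith) le_rfl (by ring),
      show lbl (tv 1 0) = 2 from by decide, show lbl (tv 1 1) = 3 from by decide, show lbl (tv 1 2) = 4 from by decide] <;>
    norm_num [show ((1:Fin 9):ℕ) = 1 from rfl, show ((2:Fin 9):ℕ) = 2 from rfl,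
      show ((3:Fin 9):ℕ) = 3 from rfl]

lemma valHigh {s : ℝ} (h0 : 2/3 ≤ s) (h1 : s ≤ 1) :
    Fm (triSeg 0 1 s) 1 = 3*s - 2 ∧ Fm (triSeg 0 1 s) 2 = 0 ∧ Fm (triSeg 0 1 s) 3 = 3 - 3*s := by
  rw [← segA_high]
  refine ⟨?_, ?_, ?_⟩ <;>
    rw [claimA3 3 (by linarith) (by linarith) le_rfl (by ring),
      show lbl (tv 3 0) = 3 from by decide, show lbl (tv 3 1) = 1 from by decide, show lbl (tv 3 2) = 6 from by decide] <;>
    norm_num [show ((1:Fin 9):ℕ) = 1 from rfl, show ((2:Fin 9):ℕ) = 2 from rfl,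
      show ((3:Fin 9):ℕ) = 3 from rfl]

lemma seg_inj {t t' : ℝ} (h0 : 0 ≤ t) (h1 : t ≤ 1) (h0' : 0 ≤ t') (h1' : t' ≤ 1)
    (h : Fm (triSeg 0 1 t) = Fm (triSeg 0 1 t')) :
    t = t' ∨ (t = 0 ∧ t' = 1) ∨ (t = 1 ∧ t' = 0) := by
  have E1 := congrFun h 1
  have E2 := congrFun h 2
  have E3 := congrFun h 3
  rcases le_total t (1/3) with r1 | r1
  · obtain ⟨a1, a2, a3⟩ := valLow h0 r1
    rcases le_total t' (1/3) with s1 | s1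
    · obtain ⟨b1, b2, b3⟩ := valLow h0' s1
      rw [a2, b2] at E2; left; linarith
    rcases le_total t' (2/3) with s2 | s2
    · obtain ⟨b1, b2, b3⟩ := valMid s1 s2
      rw [a1, b1] at E1; rw [a2, b2] at E2; left; linarith
    · obtain ⟨b1, b2, b3⟩ := valHigh s2 h1'
      rw [a1, b1] at E1; rw [a2, b2] at E2; rw [a3, b3] at E3
      right; left; constructor <;> linarith
  rcases le_total t (2/3) with r2 | r2
  · obtain ⟨a1, a2, a3⟩ := valMid r1 r2
    rcases le_total t' (1/3) with s1 | s1
    · obtain ⟨b1, b2, b3⟩ := valLow h0' s1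
      rw [a1, b1] at E1; rw [a2, b2] at E2; left; linarith
    rcases le_total t' (2/3) with s2 | s2
    · obtain ⟨b1, b2, b3⟩ := valMid s1 s2
      rw [a2, b2] at E2; left; linarith
    · obtain ⟨b1, b2, b3⟩ := valHigh s2 h1'
      rw [a2, b2] at E2; rw [a3, b3] at E3; left; linarith
  · obtain ⟨a1, a2, a3⟩ := valHigh r2 h1
    rcases le_total t' (1/3) with s1 | s1
    · obtain ⟨b1, b2, b3⟩ := valLow h0' s1
      rw [a1, b1] at E1; rw [a2, b2] at E2; rw [a3, b3] at E3
      right; right; constructor <;> linarith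
    rcases le_total t' (2/3) with s2 | s2
    · obtain ⟨b1, b2, b3⟩ := valMid s1 s2
      rw [a2, b2] at E2; rw [a3, b3] at E3; left; linarith
    · obtain ⟨b1, b2, b3⟩ := valHigh s2 h1'
      rw [a3, b3] at E3; left; linarith


lemma Q6 : ∀ (i j : Fin 17) (k k2 : Fin 3),
    lbl (tv i k) = lbl (tv j k2) → 4 ≤ lbl (tv i k) → tv i k = tv j k2 := by decide

lemma Fm_at (i : Fin 17) {co : Fin 3 → ℝ} (hco : ∀ k, 0 ≤ co k)
    (hsum : co 0 + co 1 + co 2 = 1) (k : Fin 3) :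
    Fm (cmb i co) ⟨lbl (tv i k), (Qlbl_lt _).1⟩ = co k := by
  rw [claimA hco hsum]
  obtain ⟨d01, d02, d12⟩ := QlblDist i
  have n01 := d01; have n10 := d01.symm; have n02 := d02; have n20 := d02.symm
  have n12 := d12; have n21 := d12.symm
  fin_cases k <;> simp_all

lemma Fm_zero' (i : Fin 17) {co : Fin 3 → ℝ} (hco : ∀ k, 0 ≤ co k)
    (hsum : co 0 + co 1 + co 2 = 1) (n : Fin 9)
    (h : ∀ k : Fin 3, (n : ℕ) ≠ lbl (tv i k)) : Fm (cmb i co) n = 0 := by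
  rw [claimA hco hsum]
  simp [h 0, h 1, h 2]

lemma eq_of_shared_big (i j : Fin 17) (co co' : Fin 3 → ℝ)
    (hco : ∀ k, 0 ≤ co k) (hsum : co 0 + co 1 + co 2 = 1)
    (hco' : ∀ k, 0 ≤ co' k) (hsum' : co' 0 + co' 1 + co' 2 = 1)
    (hF : Fm (cmb i co) = Fm (cmb j co'))
    (n0 : Fin 9) (h4 : 4 ≤ (n0 : ℕ)) (hx0 : Fm (cmb i co) n0 ≠ 0) :
    cmb i co = cmb j co' := by
  have hki : ∃ k : Fin 3, (n0 : ℕ) = lbl (tv i k) := by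
    by_contra h; push_neg at h; exact hx0 (Fm_zero' i hco hsum n0 h)
  have hkj : ∃ k : Fin 3, (n0 : ℕ) = lbl (tv j k) := by
    by_contra h; push_neg at h
    exact hx0 (by rw [hF]; exact Fm_zero' j hco' hsum' n0 h)
  obtain ⟨k0, hk0⟩ := hki
  obtain ⟨k0', hk0'⟩ := hkj
  have hshare : tv i k0 = tv j k0' := Q6 i j k0 k0' (hk0.symm.trans hk0') (hk0 ▸ h4)
  have hmatch := Q8 i j k0 k0' hshare (hk0 ▸ h4)
  have hED : ∀ k' : Fin 3, co' k' = Fm (cmb i co) ⟨lbl (tv j k'), (Qlbl_lt _).1⟩ := by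
    intro k'; rw [hF]; exact (Fm_at j hco' hsum' k').symm
  have hEC : ∀ k : Fin 3, co k = Fm (cmb j co') ⟨lbl (tv i k), (Qlbl_lt _).1⟩ := by
    intro k; rw [← hF]; exact (Fm_at i hco hsum k).symm
  have T : ∀ k : Fin 3, co k • VR (tv i k)
      = (if lbl (tv i k) = lbl (tv j 0) then co k • VR (tv j 0) else 0)
      + (if lbl (tv i k) = lbl (tv j 1) then co k • VR (tv j 1) else 0)
      + (if lbl (tv i k) = lbl (tv j 2) then co k • VR (tv j 2) else 0) := by
    intro k
    obtain ⟨e01, e02, e12⟩ := QlblDist j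
    by_cases c0 : lbl (tv i k) = lbl (tv j 0)
    · have hv := hmatch k 0 c0
      have c1 : ¬ lbl (tv i k) = lbl (tv j 1) := by rw [c0]; exact e01
      have c2 : ¬ lbl (tv i k) = lbl (tv j 2) := by rw [c0]; exact e02
      rw [if_pos c0, if_neg c1, if_neg c2, hv]; simp
    by_cases c1 : lbl (tv i k) = lbl (tv j 1)
    · have hv := hmatch k 1 c1
      have c2 : ¬ lbl (tv i k) = lbl (tv j 2) := by rw [c1]; exact e12
      rw [if_neg c0, if_pos c1, if_neg c2, hv]; simp
    by_cases c2 : lbl (tv i k) = lbl (tv j 2)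
    · have hv := hmatch k 2 c2
      rw [if_neg c0, if_neg c1, if_pos c2, hv]; simp
    · have hz : co k = 0 := by
        rw [hEC k]
        apply Fm_zero' j hco' hsum'
        intro k'
        fin_cases k'
        · exact c0
        · exact c1
        · exact c2
      rw [if_neg c0, if_neg c1, if_neg c2, hz]; simp
  have S : ∀ k' : Fin 3,
      (if lbl (tv i 0) = lbl (tv j k') then co 0 • VR (tv j k') else 0)
      + (if lbl (tv i 1) = lbl (tv j k') then co 1 • VR (tv j k') else 0)
      + (if lbl (tv i 2) = lbl (tv j k') then co 2 • VR (tv j k') else 0)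
      = co' k' • VR (tv j k') := by
    intro k'
    obtain ⟨f01, f02, f12⟩ := QlblDist i
    have hval := hED k'
    by_cases c0 : lbl (tv i 0) = lbl (tv j k')
    · have c1 : ¬ lbl (tv i 1) = lbl (tv j k') := by rw [← c0]; exact fun h => f01 h.symm
      have c2 : ¬ lbl (tv i 2) = lbl (tv j k') := by rw [← c0]; exact fun h => f02 h.symm
      have : co' k' = co 0 := by
        rw [hval, claimA hco hsum]
        simp [c0.symm, f01, f02]
      rw [if_pos c0, if_neg c1, if_neg c2, this]; simp
    by_cases c1 : lbl (tv i 1) = lbl (tv j k')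
    · have c2 : ¬ lbl (tv i 2) = lbl (tv j k') := by rw [← c1]; exact fun h => f12 h.symm
      have : co' k' = co 1 := by
        rw [hval, claimA hco hsum]
        simp [c1.symm, f01.symm, f12]
      rw [if_neg c0, if_pos c1, if_neg c2, this]; simp
    by_cases c2 : lbl (tv i 2) = lbl (tv j k')
    · have : co' k' = co 2 := by
        rw [hval, claimA hco hsum]
        simp [c2.symm, f02.symm, f12.symm]
      rw [if_neg c0, if_neg c1, if_pos c2, this]; simp
    · have : co' k' = 0 := by
        rw [hval]
        apply Fm_zero' i hco hsum
        intro k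
        fin_cases k
        · exact fun h => c0 h.symm
        · exact fun h => c1 h.symm
        · exact fun h => c2 h.symm
      rw [if_neg c0, if_neg c1, if_neg c2, this]; simp
  show co 0 • VR (tv i 0) + co 1 • VR (tv i 1) + co 2 • VR (tv i 2)
    = co' 0 • VR (tv j 0) + co' 1 • VR (tv j 1) + co' 2 • VR (tv j 2)
  rw [T 0, T 1, T 2, ← S 0, ← S 1, ← S 2]
  abel

lemma bdry0 (co : Fin 3 → ℝ) (hco : ∀ k, 0 ≤ co k) (hsum : co 0 + co 1 + co 2 = 1)
    (hz : ∀ k : Fin 3, 4 ≤ lbl (tv 0 k) → co k = 0) :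
    ∃ t, ∃ (h0 : 0 ≤ t) (h1 : t ≤ 1),
      Relation.EqvGen dunceRel ⟨cmb 0 co, cmb_mem hco hsum⟩ (ptA t h0 h1) := by
  have c0 := hco 0; have c1 := hco 1; have c2 := hco 2
  have z2 : co 2 = 0 := hz 2 (by decide)
  have hT0 : 0 ≤ co 1 / 3 := by linarith
  have hT1 : co 1 / 3 ≤ 1 := by linarith
  refine ⟨co 1 / 3, hT0, hT1, ?_⟩
  have hpt : cmb 0 co = triSeg 0 1 (co 1 / 3) := by
    apply cmb_eq_pt
    · have e0 : VZ (tv 0 0) 0 = 9 := by decide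
      have e1 : VZ (tv 0 1) 0 = 6 := by decide
      have e2 : VZ (tv 0 2) 0 = 4 := by decide
      rw [e0, e1, e2]
      simp only [triSeg, triVert, Pi.add_apply, Pi.smul_apply, smul_eq_mul]
      norm_num [Fin.ext_iff]
      linarith
    · have e0 : VZ (tv 0 0) 1 = 0 := by decide
      have e1 : VZ (tv 0 1) 1 = 3 := by decide
      have e2 : VZ (tv 0 2) 1 = 4 := by decide
      rw [e0, e1, e2]
      simp only [triSeg, triVert, Pi.add_apply, Pi.smul_apply, smul_eq_mul]
      norm_num [Fin.ext_iff]
      linarith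
    · have e0 : VZ (tv 0 0) 2 = 0 := by decide
      have e1 : VZ (tv 0 1) 2 = 0 := by decide
      have e2 : VZ (tv 0 2) 2 = 1 := by decide
      rw [e0, e1, e2]
      simp only [triSeg, triVert, Pi.add_apply, Pi.smul_apply, smul_eq_mul]
      norm_num [Fin.ext_iff]
      linarith
  rw [show (⟨cmb 0 co, cmb_mem hco hsum⟩ : ↥(stdSimplex ℝ (Fin 3)))
      = ptA (co 1 / 3) hT0 hT1 from Subtype.ext hpt]
  exact Relation.EqvGen.refl _

lemma bdry1 (co : Fin 3 → ℝ) (hco : ∀ k, 0 ≤ co k) (hsum : co 0 + co 1 + co 2 = 1)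
    (hz : ∀ k : Fin 3, 4 ≤ lbl (tv 1 k) → co k = 0) :
    ∃ t, ∃ (h0 : 0 ≤ t) (h1 : t ≤ 1),
      Relation.EqvGen dunceRel ⟨cmb 1 co, cmb_mem hco hsum⟩ (ptA t h0 h1) := by
  have c0 := hco 0; have c1 := hco 1; have c2 := hco 2
  have z2 : co 2 = 0 := hz 2 (by decide)
  have hT0 : 0 ≤ (1 + co 1) / 3 := by linarith
  have hT1 : (1 + co 1) / 3 ≤ 1 := by linarith
  refine ⟨(1 + co 1) / 3, hT0, hT1, ?_⟩
  have hpt : cmb 1 co = triSeg 0 1 ((1 + co 1) / 3) := by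
    apply cmb_eq_pt
    · have e0 : VZ (tv 1 0) 0 = 6 := by decide
      have e1 : VZ (tv 1 1) 0 = 3 := by decide
      have e2 : VZ (tv 1 2) 0 = 4 := by decide
      rw [e0, e1, e2]
      simp only [triSeg, triVert, Pi.add_apply, Pi.smul_apply, smul_eq_mul]
      norm_num [Fin.ext_iff]
      linarith
    · have e0 : VZ (tv 1 0) 1 = 3 := by decide
      have e1 : VZ (tv 1 1) 1 = 6 := by decide
      have e2 : VZ (tv 1 2) 1 = 4 := by decide
      rw [e0, e1, e2]
      simp only [triSeg, triVert, Pi.add_apply, Pi.smul_apply, smul_eq_mul]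
      norm_num [Fin.ext_iff]
      linarith
    · have e0 : VZ (tv 1 0) 2 = 0 := by decide
      have e1 : VZ (tv 1 1) 2 = 0 := by decide
      have e2 : VZ (tv 1 2) 2 = 1 := by decide
      rw [e0, e1, e2]
      simp only [triSeg, triVert, Pi.add_apply, Pi.smul_apply, smul_eq_mul]
      norm_num [Fin.ext_iff]
      linarith
  rw [show (⟨cmb 1 co, cmb_mem hco hsum⟩ : ↥(stdSimplex ℝ (Fin 3)))
      = ptA ((1 + co 1) / 3) hT0 hT1 from Subtype.ext hpt]
  exact Relation.EqvGen.refl _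

lemma bdry2 (co : Fin 3 → ℝ) (hco : ∀ k, 0 ≤ co k) (hsum : co 0 + co 1 + co 2 = 1)
    (hz : ∀ k : Fin 3, 4 ≤ lbl (tv 2 k) → co k = 0) :
    ∃ t, ∃ (h0 : 0 ≤ t) (h1 : t ≤ 1),
      Relation.EqvGen dunceRel ⟨cmb 2 co, cmb_mem hco hsum⟩ (ptA t h0 h1) := by
  have c0 := hco 0; have c1 := hco 1; have c2 := hco 2
  have z1 : co 1 = 0 := hz 1 (by decide)
  have z2 : co 2 = 0 := hz 2 (by decide)
  have hT0 : 0 ≤ (2:ℝ)/3 := by linarith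
  have hT1 : (2:ℝ)/3 ≤ 1 := by linarith
  refine ⟨(2:ℝ)/3, hT0, hT1, ?_⟩
  have hpt : cmb 2 co = triSeg 0 1 ((2:ℝ)/3) := by
    apply cmb_eq_pt
    · have e0 : VZ (tv 2 0) 0 = 3 := by decide
      have e1 : VZ (tv 2 1) 0 = 3 := by decide
      have e2 : VZ (tv 2 2) 0 = 4 := by decide
      rw [e0, e1, e2]
      simp only [triSeg, triVert, Pi.add_apply, Pi.smul_apply, smul_eq_mul]
      norm_num [Fin.ext_iff]
      linarith
    · have e0 : VZ (tv 2 0) 1 = 6 := by decide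
      have e1 : VZ (tv 2 1) 1 = 5 := by decide
      have e2 : VZ (tv 2 2) 1 = 4 := by decide
      rw [e0, e1, e2]
      simp only [triSeg, triVert, Pi.add_apply, Pi.smul_apply, smul_eq_mul]
      norm_num [Fin.ext_iff]
      linarith
    · have e0 : VZ (tv 2 0) 2 = 0 := by decide
      have e1 : VZ (tv 2 1) 2 = 1 := by decide
      have e2 : VZ (tv 2 2) 2 = 1 := by decide
      rw [e0, e1, e2]
      simp only [triSeg, triVert, Pi.add_apply, Pi.smul_apply, smul_eq_mul]
      norm_num [Fin.ext_iff]
      linarith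
  rw [show (⟨cmb 2 co, cmb_mem hco hsum⟩ : ↥(stdSimplex ℝ (Fin 3)))
      = ptA ((2:ℝ)/3) hT0 hT1 from Subtype.ext hpt]
  exact Relation.EqvGen.refl _

lemma bdry3 (co : Fin 3 → ℝ) (hco : ∀ k, 0 ≤ co k) (hsum : co 0 + co 1 + co 2 = 1)
    (hz : ∀ k : Fin 3, 4 ≤ lbl (tv 3 k) → co k = 0) :
    ∃ t, ∃ (h0 : 0 ≤ t) (h1 : t ≤ 1),
      Relation.EqvGen dunceRel ⟨cmb 3 co, cmb_mem hco hsum⟩ (ptA t h0 h1) := by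
  have c0 := hco 0; have c1 := hco 1; have c2 := hco 2
  have z2 : co 2 = 0 := hz 2 (by decide)
  have hT0 : 0 ≤ (2 + co 1) / 3 := by linarith
  have hT1 : (2 + co 1) / 3 ≤ 1 := by linarith
  refine ⟨(2 + co 1) / 3, hT0, hT1, ?_⟩
  have hpt : cmb 3 co = triSeg 0 1 ((2 + co 1) / 3) := by
    apply cmb_eq_pt
    · have e0 : VZ (tv 3 0) 0 = 3 := by decide
      have e1 : VZ (tv 3 1) 0 = 0 := by decide
      have e2 : VZ (tv 3 2) 0 = 3 := by decide
      rw [e0, e1, e2]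
      simp only [triSeg, triVert, Pi.add_apply, Pi.smul_apply, smul_eq_mul]
      norm_num [Fin.ext_iff]
      linarith
    · have e0 : VZ (tv 3 0) 1 = 6 := by decide
      have e1 : VZ (tv 3 1) 1 = 9 := by decide
      have e2 : VZ (tv 3 2) 1 = 5 := by decide
      rw [e0, e1, e2]
      simp only [triSeg, triVert, Pi.add_apply, Pi.smul_apply, smul_eq_mul]
      norm_num [Fin.ext_iff]
      linarith
    · have e0 : VZ (tv 3 0) 2 = 0 := by decide
      have e1 : VZ (tv 3 1) 2 = 0 := by decide
      have e2 : VZ (tv 3 2) 2 = 1 := by decide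
      rw [e0, e1, e2]
      simp only [triSeg, triVert, Pi.add_apply, Pi.smul_apply, smul_eq_mul]
      norm_num [Fin.ext_iff]
      linarith
  rw [show (⟨cmb 3 co, cmb_mem hco hsum⟩ : ↥(stdSimplex ℝ (Fin 3)))
      = ptA ((2 + co 1) / 3) hT0 hT1 from Subtype.ext hpt]
  exact Relation.EqvGen.refl _

lemma bdry4 (co : Fin 3 → ℝ) (hco : ∀ k, 0 ≤ co k) (hsum : co 0 + co 1 + co 2 = 1)
    (hz : ∀ k : Fin 3, 4 ≤ lbl (tv 4 k) → co k = 0) :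
    ∃ t, ∃ (h0 : 0 ≤ t) (h1 : t ≤ 1),
      Relation.EqvGen dunceRel ⟨cmb 4 co, cmb_mem hco hsum⟩ (ptA t h0 h1) := by
  have c0 := hco 0; have c1 := hco 1; have c2 := hco 2
  have z2 : co 2 = 0 := hz 2 (by decide)
  have hT0 : 0 ≤ co 1 / 3 := by linarith
  have hT1 : co 1 / 3 ≤ 1 := by linarith
  refine ⟨co 1 / 3, hT0, hT1, ?_⟩
  have hpt : cmb 4 co = triSeg 1 2 (co 1 / 3) := by
    apply cmb_eq_pt
    · have e0 : VZ (tv 4 0) 0 = 0 := by decide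
      have e1 : VZ (tv 4 1) 0 = 0 := by decide
      have e2 : VZ (tv 4 2) 0 = 3 := by decide
      rw [e0, e1, e2]
      simp only [triSeg, triVert, Pi.add_apply, Pi.smul_apply, smul_eq_mul]
      norm_num [Fin.ext_iff]
      linarith
    · have e0 : VZ (tv 4 0) 1 = 9 := by decide
      have e1 : VZ (tv 4 1) 1 = 6 := by decide
      have e2 : VZ (tv 4 2) 1 = 5 := by decide
      rw [e0, e1, e2]
      simp only [triSeg, triVert, Pi.add_apply, Pi.smul_apply, smul_eq_mul]
      norm_num [Fin.ext_iff]
      linarith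
    · have e0 : VZ (tv 4 0) 2 = 0 := by decide
      have e1 : VZ (tv 4 1) 2 = 3 := by decide
      have e2 : VZ (tv 4 2) 2 = 1 := by decide
      rw [e0, e1, e2]
      simp only [triSeg, triVert, Pi.add_apply, Pi.smul_apply, smul_eq_mul]
      norm_num [Fin.ext_iff]
      linarith
  rw [show (⟨cmb 4 co, cmb_mem hco hsum⟩ : ↥(stdSimplex ℝ (Fin 3)))
      = ptB (co 1 / 3) hT0 hT1 from Subtype.ext hpt]
  exact Relation.EqvGen.symm _ _ (Relation.EqvGen.rel _ _ (relAB (co 1 / 3) hT0 hT1))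

lemma bdry5 (co : Fin 3 → ℝ) (hco : ∀ k, 0 ≤ co k) (hsum : co 0 + co 1 + co 2 = 1)
    (hz : ∀ k : Fin 3, 4 ≤ lbl (tv 5 k) → co k = 0) :
    ∃ t, ∃ (h0 : 0 ≤ t) (h1 : t ≤ 1),
      Relation.EqvGen dunceRel ⟨cmb 5 co, cmb_mem hco hsum⟩ (ptA t h0 h1) := by
  have c0 := hco 0; have c1 := hco 1; have c2 := hco 2
  have z1 : co 1 = 0 := hz 1 (by decide)
  have z2 : co 2 = 0 := hz 2 (by decide)
  have hT0 : 0 ≤ (1:ℝ)/3 := by linarith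
  have hT1 : (1:ℝ)/3 ≤ 1 := by linarith
  refine ⟨(1:ℝ)/3, hT0, hT1, ?_⟩
  have hpt : cmb 5 co = triSeg 1 2 ((1:ℝ)/3) := by
    apply cmb_eq_pt
    · have e0 : VZ (tv 5 0) 0 = 0 := by decide
      have e1 : VZ (tv 5 1) 0 = 3 := by decide
      have e2 : VZ (tv 5 2) 0 = 3 := by decide
      rw [e0, e1, e2]
      simp only [triSeg, triVert, Pi.add_apply, Pi.smul_apply, smul_eq_mul]
      norm_num [Fin.ext_iff]
      linarith
    · have e0 : VZ (tv 5 0) 1 = 6 := by decide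
      have e1 : VZ (tv 5 1) 1 = 3 := by decide
      have e2 : VZ (tv 5 2) 1 = 5 := by decide
      rw [e0, e1, e2]
      simp only [triSeg, triVert, Pi.add_apply, Pi.smul_apply, smul_eq_mul]
      norm_num [Fin.ext_iff]
      linarith
    · have e0 : VZ (tv 5 0) 2 = 3 := by decide
      have e1 : VZ (tv 5 1) 2 = 3 := by decide
      have e2 : VZ (tv 5 2) 2 = 1 := by decide
      rw [e0, e1, e2]
      simp only [triSeg, triVert, Pi.add_apply, Pi.smul_apply, smul_eq_mul]
      norm_num [Fin.ext_iff]
      linarith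
  rw [show (⟨cmb 5 co, cmb_mem hco hsum⟩ : ↥(stdSimplex ℝ (Fin 3)))
      = ptB ((1:ℝ)/3) hT0 hT1 from Subtype.ext hpt]
  exact Relation.EqvGen.symm _ _ (Relation.EqvGen.rel _ _ (relAB ((1:ℝ)/3) hT0 hT1))

lemma bdry6 (co : Fin 3 → ℝ) (hco : ∀ k, 0 ≤ co k) (hsum : co 0 + co 1 + co 2 = 1)
    (hz : ∀ k : Fin 3, 4 ≤ lbl (tv 6 k) → co k = 0) :
    ∃ t, ∃ (h0 : 0 ≤ t) (h1 : t ≤ 1),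
      Relation.EqvGen dunceRel ⟨cmb 6 co, cmb_mem hco hsum⟩ (ptA t h0 h1) := by
  have c0 := hco 0; have c1 := hco 1; have c2 := hco 2
  have z2 : co 2 = 0 := hz 2 (by decide)
  have hT0 : 0 ≤ (1 + co 1) / 3 := by linarith
  have hT1 : (1 + co 1) / 3 ≤ 1 := by linarith
  refine ⟨(1 + co 1) / 3, hT0, hT1, ?_⟩
  have hpt : cmb 6 co = triSeg 1 2 ((1 + co 1) / 3) := by
    apply cmb_eq_pt
    · have e0 : VZ (tv 6 0) 0 = 0 := by decide
      have e1 : VZ (tv 6 1) 0 = 0 := by decide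
      have e2 : VZ (tv 6 2) 0 = 3 := by decide
      rw [e0, e1, e2]
      simp only [triSeg, triVert, Pi.add_apply, Pi.smul_apply, smul_eq_mul]
      norm_num [Fin.ext_iff]
      linarith
    · have e0 : VZ (tv 6 0) 1 = 6 := by decide
      have e1 : VZ (tv 6 1) 1 = 3 := by decide
      have e2 : VZ (tv 6 2) 1 = 3 := by decide
      rw [e0, e1, e2]
      simp only [triSeg, triVert, Pi.add_apply, Pi.smul_apply, smul_eq_mul]
      norm_num [Fin.ext_iff]
      linarith
    · have e0 : VZ (tv 6 0) 2 = 3 := by decide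
      have e1 : VZ (tv 6 1) 2 = 6 := by decide
      have e2 : VZ (tv 6 2) 2 = 3 := by decide
      rw [e0, e1, e2]
      simp only [triSeg, triVert, Pi.add_apply, Pi.smul_apply, smul_eq_mul]
      norm_num [Fin.ext_iff]
      linarith
  rw [show (⟨cmb 6 co, cmb_mem hco hsum⟩ : ↥(stdSimplex ℝ (Fin 3)))
      = ptB ((1 + co 1) / 3) hT0 hT1 from Subtype.ext hpt]
  exact Relation.EqvGen.symm _ _ (Relation.EqvGen.rel _ _ (relAB ((1 + co 1) / 3) hT0 hT1))

lemma bdry7 (co : Fin 3 → ℝ) (hco : ∀ k, 0 ≤ co k) (hsum : co 0 + co 1 + co 2 = 1)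
    (hz : ∀ k : Fin 3, 4 ≤ lbl (tv 7 k) → co k = 0) :
    ∃ t, ∃ (h0 : 0 ≤ t) (h1 : t ≤ 1),
      Relation.EqvGen dunceRel ⟨cmb 7 co, cmb_mem hco hsum⟩ (ptA t h0 h1) := by
  have c0 := hco 0; have c1 := hco 1; have c2 := hco 2
  have z2 : co 2 = 0 := hz 2 (by decide)
  have hT0 : 0 ≤ (2 + co 1) / 3 := by linarith
  have hT1 : (2 + co 1) / 3 ≤ 1 := by linarith
  refine ⟨(2 + co 1) / 3, hT0, hT1, ?_⟩
  have hpt : cmb 7 co = triSeg 1 2 ((2 + co 1) / 3) := by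
    apply cmb_eq_pt
    · have e0 : VZ (tv 7 0) 0 = 0 := by decide
      have e1 : VZ (tv 7 1) 0 = 0 := by decide
      have e2 : VZ (tv 7 2) 0 = 3 := by decide
      rw [e0, e1, e2]
      simp only [triSeg, triVert, Pi.add_apply, Pi.smul_apply, smul_eq_mul]
      norm_num [Fin.ext_iff]
      linarith
    · have e0 : VZ (tv 7 0) 1 = 3 := by decide
      have e1 : VZ (tv 7 1) 1 = 0 := by decide
      have e2 : VZ (tv 7 2) 1 = 3 := by decide
      rw [e0, e1, e2]
      simp only [triSeg, triVert, Pi.add_apply, Pi.smul_apply, smul_eq_mul]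
      norm_num [Fin.ext_iff]
      linarith
    · have e0 : VZ (tv 7 0) 2 = 6 := by decide
      have e1 : VZ (tv 7 1) 2 = 9 := by decide
      have e2 : VZ (tv 7 2) 2 = 3 := by decide
      rw [e0, e1, e2]
      simp only [triSeg, triVert, Pi.add_apply, Pi.smul_apply, smul_eq_mul]
      norm_num [Fin.ext_iff]
      linarith
  rw [show (⟨cmb 7 co, cmb_mem hco hsum⟩ : ↥(stdSimplex ℝ (Fin 3)))
      = ptB ((2 + co 1) / 3) hT0 hT1 from Subtype.ext hpt]
  exact Relation.EqvGen.symm _ _ (Relation.EqvGen.rel _ _ (relAB ((2 + co 1) / 3) hT0 hT1))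

lemma bdry8 (co : Fin 3 → ℝ) (hco : ∀ k, 0 ≤ co k) (hsum : co 0 + co 1 + co 2 = 1)
    (hz : ∀ k : Fin 3, 4 ≤ lbl (tv 8 k) → co k = 0) :
    ∃ t, ∃ (h0 : 0 ≤ t) (h1 : t ≤ 1),
      Relation.EqvGen dunceRel ⟨cmb 8 co, cmb_mem hco hsum⟩ (ptA t h0 h1) := by
  have c0 := hco 0; have c1 := hco 1; have c2 := hco 2
  have z2 : co 2 = 0 := hz 2 (by decide)
  have hT0 : 0 ≤ co 0 / 3 := by linarith
  have hT1 : co 0 / 3 ≤ 1 := by linarith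
  refine ⟨co 0 / 3, hT0, hT1, ?_⟩
  have hpt : cmb 8 co = triSeg 0 2 (co 0 / 3) := by
    apply cmb_eq_pt
    · have e0 : VZ (tv 8 0) 0 = 6 := by decide
      have e1 : VZ (tv 8 1) 0 = 9 := by decide
      have e2 : VZ (tv 8 2) 0 = 5 := by decide
      rw [e0, e1, e2]
      simp only [triSeg, triVert, Pi.add_apply, Pi.smul_apply, smul_eq_mul]
      norm_num [Fin.ext_iff]
      linarith
    · have e0 : VZ (tv 8 0) 1 = 0 := by decide
      have e1 : VZ (tv 8 1) 1 = 0 := by decide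
      have e2 : VZ (tv 8 2) 1 = 2 := by decide
      rw [e0, e1, e2]
      simp only [triSeg, triVert, Pi.add_apply, Pi.smul_apply, smul_eq_mul]
      norm_num [Fin.ext_iff]
      linarith
    · have e0 : VZ (tv 8 0) 2 = 3 := by decide
      have e1 : VZ (tv 8 1) 2 = 0 := by decide
      have e2 : VZ (tv 8 2) 2 = 2 := by decide
      rw [e0, e1, e2]
      simp only [triSeg, triVert, Pi.add_apply, Pi.smul_apply, smul_eq_mul]
      norm_num [Fin.ext_iff]
      linarith
  rw [show (⟨cmb 8 co, cmb_mem hco hsum⟩ : ↥(stdSimplex ℝ (Fin 3)))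
      = ptC (co 0 / 3) hT0 hT1 from Subtype.ext hpt]
  exact Relation.EqvGen.symm _ _ (Relation.EqvGen.rel _ _ (relAC (co 0 / 3) hT0 hT1))

lemma bdry9 (co : Fin 3 → ℝ) (hco : ∀ k, 0 ≤ co k) (hsum : co 0 + co 1 + co 2 = 1)
    (hz : ∀ k : Fin 3, 4 ≤ lbl (tv 9 k) → co k = 0) :
    ∃ t, ∃ (h0 : 0 ≤ t) (h1 : t ≤ 1),
      Relation.EqvGen dunceRel ⟨cmb 9 co, cmb_mem hco hsum⟩ (ptA t h0 h1) := by
  have c0 := hco 0; have c1 := hco 1; have c2 := hco 2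
  have z1 : co 1 = 0 := hz 1 (by decide)
  have z2 : co 2 = 0 := hz 2 (by decide)
  have hT0 : 0 ≤ (0:ℝ) := by linarith
  have hT1 : (0:ℝ) ≤ 1 := by linarith
  refine ⟨(0:ℝ), hT0, hT1, ?_⟩
  have hpt : cmb 9 co = triSeg 0 1 ((0:ℝ)) := by
    apply cmb_eq_pt
    · have e0 : VZ (tv 9 0) 0 = 9 := by decide
      have e1 : VZ (tv 9 1) 0 = 4 := by decide
      have e2 : VZ (tv 9 2) 0 = 5 := by decide
      rw [e0, e1, e2]
      simp only [triSeg, triVert, Pi.add_apply, Pi.smul_apply, smul_eq_mul]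
      norm_num [Fin.ext_iff]
      linarith
    · have e0 : VZ (tv 9 0) 1 = 0 := by decide
      have e1 : VZ (tv 9 1) 1 = 4 := by decide
      have e2 : VZ (tv 9 2) 1 = 2 := by decide
      rw [e0, e1, e2]
      simp only [triSeg, triVert, Pi.add_apply, Pi.smul_apply, smul_eq_mul]
      norm_num [Fin.ext_iff]
      linarith
    · have e0 : VZ (tv 9 0) 2 = 0 := by decide
      have e1 : VZ (tv 9 1) 2 = 1 := by decide
      have e2 : VZ (tv 9 2) 2 = 2 := by decide
      rw [e0, e1, e2]
      simp only [triSeg, triVert, Pi.add_apply, Pi.smul_apply, smul_eq_mul]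
      norm_num [Fin.ext_iff]
      linarith
  rw [show (⟨cmb 9 co, cmb_mem hco hsum⟩ : ↥(stdSimplex ℝ (Fin 3)))
      = ptA ((0:ℝ)) hT0 hT1 from Subtype.ext hpt]
  exact Relation.EqvGen.refl _

lemma bdry10 (co : Fin 3 → ℝ) (hco : ∀ k, 0 ≤ co k) (hsum : co 0 + co 1 + co 2 = 1)
    (hz : ∀ k : Fin 3, 4 ≤ lbl (tv 10 k) → co k = 0) :
    ∃ t, ∃ (h0 : 0 ≤ t) (h1 : t ≤ 1),
      Relation.EqvGen dunceRel ⟨cmb 10 co, cmb_mem hco hsum⟩ (ptA t h0 h1) := by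
  have c0 := hco 0; have c1 := hco 1; have c2 := hco 2
  have z1 : co 1 = 0 := hz 1 (by decide)
  have z2 : co 2 = 0 := hz 2 (by decide)
  have hT0 : 0 ≤ (1:ℝ)/3 := by linarith
  have hT1 : (1:ℝ)/3 ≤ 1 := by linarith
  refine ⟨(1:ℝ)/3, hT0, hT1, ?_⟩
  have hpt : cmb 10 co = triSeg 0 2 ((1:ℝ)/3) := by
    apply cmb_eq_pt
    · have e0 : VZ (tv 10 0) 0 = 6 := by decide
      have e1 : VZ (tv 10 1) 0 = 5 := by decide
      have e2 : VZ (tv 10 2) 0 = 3 := by decide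
      rw [e0, e1, e2]
      simp only [triSeg, triVert, Pi.add_apply, Pi.smul_apply, smul_eq_mul]
      norm_num [Fin.ext_iff]
      linarith
    · have e0 : VZ (tv 10 0) 1 = 0 := by decide
      have e1 : VZ (tv 10 1) 1 = 2 := by decide
      have e2 : VZ (tv 10 2) 1 = 1 := by decide
      rw [e0, e1, e2]
      simp only [triSeg, triVert, Pi.add_apply, Pi.smul_apply, smul_eq_mul]
      norm_num [Fin.ext_iff]
      linarith
    · have e0 : VZ (tv 10 0) 2 = 3 := by decide
      have e1 : VZ (tv 10 1) 2 = 2 := by decide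
      have e2 : VZ (tv 10 2) 2 = 5 := by decide
      rw [e0, e1, e2]
      simp only [triSeg, triVert, Pi.add_apply, Pi.smul_apply, smul_eq_mul]
      norm_num [Fin.ext_iff]
      linarith
  rw [show (⟨cmb 10 co, cmb_mem hco hsum⟩ : ↥(stdSimplex ℝ (Fin 3)))
      = ptC ((1:ℝ)/3) hT0 hT1 from Subtype.ext hpt]
  exact Relation.EqvGen.symm _ _ (Relation.EqvGen.rel _ _ (relAC ((1:ℝ)/3) hT0 hT1))

lemma bdry11 (co : Fin 3 → ℝ) (hco : ∀ k, 0 ≤ co k) (hsum : co 0 + co 1 + co 2 = 1)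
    (hz : ∀ k : Fin 3, 4 ≤ lbl (tv 11 k) → co k = 0) :
    ∃ t, ∃ (h0 : 0 ≤ t) (h1 : t ≤ 1),
      Relation.EqvGen dunceRel ⟨cmb 11 co, cmb_mem hco hsum⟩ (ptA t h0 h1) := by
  have c0 := hco 0; have c1 := hco 1; have c2 := hco 2
  have z0 : co 0 = 0 := hz 0 (by decide)
  have z1 : co 1 = 0 := hz 1 (by decide)
  have z2 : co 2 = 0 := hz 2 (by decide)
  exact absurd hsum (by rw [z0, z1, z2]; norm_num)

lemma bdry12 (co : Fin 3 → ℝ) (hco : ∀ k, 0 ≤ co k) (hsum : co 0 + co 1 + co 2 = 1)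
    (hz : ∀ k : Fin 3, 4 ≤ lbl (tv 12 k) → co k = 0) :
    ∃ t, ∃ (h0 : 0 ≤ t) (h1 : t ≤ 1),
      Relation.EqvGen dunceRel ⟨cmb 12 co, cmb_mem hco hsum⟩ (ptA t h0 h1) := by
  have c0 := hco 0; have c1 := hco 1; have c2 := hco 2
  have z0 : co 0 = 0 := hz 0 (by decide)
  have z1 : co 1 = 0 := hz 1 (by decide)
  have z2 : co 2 = 0 := hz 2 (by decide)
  exact absurd hsum (by rw [z0, z1, z2]; norm_num)

lemma bdry13 (co : Fin 3 → ℝ) (hco : ∀ k, 0 ≤ co k) (hsum : co 0 + co 1 + co 2 = 1)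
    (hz : ∀ k : Fin 3, 4 ≤ lbl (tv 13 k) → co k = 0) :
    ∃ t, ∃ (h0 : 0 ≤ t) (h1 : t ≤ 1),
      Relation.EqvGen dunceRel ⟨cmb 13 co, cmb_mem hco hsum⟩ (ptA t h0 h1) := by
  have c0 := hco 0; have c1 := hco 1; have c2 := hco 2
  have z2 : co 2 = 0 := hz 2 (by decide)
  have hT0 : 0 ≤ (1 + co 0) / 3 := by linarith
  have hT1 : (1 + co 0) / 3 ≤ 1 := by linarith
  refine ⟨(1 + co 0) / 3, hT0, hT1, ?_⟩
  have hpt : cmb 13 co = triSeg 0 2 ((1 + co 0) / 3) := by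
    apply cmb_eq_pt
    · have e0 : VZ (tv 13 0) 0 = 3 := by decide
      have e1 : VZ (tv 13 1) 0 = 6 := by decide
      have e2 : VZ (tv 13 2) 0 = 3 := by decide
      rw [e0, e1, e2]
      simp only [triSeg, triVert, Pi.add_apply, Pi.smul_apply, smul_eq_mul]
      norm_num [Fin.ext_iff]
      linarith
    · have e0 : VZ (tv 13 0) 1 = 0 := by decide
      have e1 : VZ (tv 13 1) 1 = 0 := by decide
      have e2 : VZ (tv 13 2) 1 = 1 := by decide
      rw [e0, e1, e2]
      simp only [triSeg, triVert, Pi.add_apply, Pi.smul_apply, smul_eq_mul]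
      norm_num [Fin.ext_iff]
      linarith
    · have e0 : VZ (tv 13 0) 2 = 6 := by decide
      have e1 : VZ (tv 13 1) 2 = 3 := by decide
      have e2 : VZ (tv 13 2) 2 = 5 := by decide
      rw [e0, e1, e2]
      simp only [triSeg, triVert, Pi.add_apply, Pi.smul_apply, smul_eq_mul]
      norm_num [Fin.ext_iff]
      linarith
  rw [show (⟨cmb 13 co, cmb_mem hco hsum⟩ : ↥(stdSimplex ℝ (Fin 3)))
      = ptC ((1 + co 0) / 3) hT0 hT1 from Subtype.ext hpt]
  exact Relation.EqvGen.symm _ _ (Relation.EqvGen.rel _ _ (relAC ((1 + co 0) / 3) hT0 hT1))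

lemma bdry14 (co : Fin 3 → ℝ) (hco : ∀ k, 0 ≤ co k) (hsum : co 0 + co 1 + co 2 = 1)
    (hz : ∀ k : Fin 3, 4 ≤ lbl (tv 14 k) → co k = 0) :
    ∃ t, ∃ (h0 : 0 ≤ t) (h1 : t ≤ 1),
      Relation.EqvGen dunceRel ⟨cmb 14 co, cmb_mem hco hsum⟩ (ptA t h0 h1) := by
  have c0 := hco 0; have c1 := hco 1; have c2 := hco 2
  have z2 : co 2 = 0 := hz 2 (by decide)
  have hT0 : 0 ≤ (3 - co 1) / 3 := by linarith
  have hT1 : (3 - co 1) / 3 ≤ 1 := by linarith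
  refine ⟨(3 - co 1) / 3, hT0, hT1, ?_⟩
  have hpt : cmb 14 co = triSeg 0 2 ((3 - co 1) / 3) := by
    apply cmb_eq_pt
    · have e0 : VZ (tv 14 0) 0 = 0 := by decide
      have e1 : VZ (tv 14 1) 0 = 3 := by decide
      have e2 : VZ (tv 14 2) 0 = 3 := by decide
      rw [e0, e1, e2]
      simp only [triSeg, triVert, Pi.add_apply, Pi.smul_apply, smul_eq_mul]
      norm_num [Fin.ext_iff]
      linarith
    · have e0 : VZ (tv 14 0) 1 = 0 := by decide
      have e1 : VZ (tv 14 1) 1 = 0 := by decide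
      have e2 : VZ (tv 14 2) 1 = 1 := by decide
      rw [e0, e1, e2]
      simp only [triSeg, triVert, Pi.add_apply, Pi.smul_apply, smul_eq_mul]
      norm_num [Fin.ext_iff]
      linarith
    · have e0 : VZ (tv 14 0) 2 = 9 := by decide
      have e1 : VZ (tv 14 1) 2 = 6 := by decide
      have e2 : VZ (tv 14 2) 2 = 5 := by decide
      rw [e0, e1, e2]
      simp only [triSeg, triVert, Pi.add_apply, Pi.smul_apply, smul_eq_mul]
      norm_num [Fin.ext_iff]
      linarith
  rw [show (⟨cmb 14 co, cmb_mem hco hsum⟩ : ↥(stdSimplex ℝ (Fin 3)))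
      = ptC ((3 - co 1) / 3) hT0 hT1 from Subtype.ext hpt]
  exact Relation.EqvGen.symm _ _ (Relation.EqvGen.rel _ _ (relAC ((3 - co 1) / 3) hT0 hT1))

lemma bdry15 (co : Fin 3 → ℝ) (hco : ∀ k, 0 ≤ co k) (hsum : co 0 + co 1 + co 2 = 1)
    (hz : ∀ k : Fin 3, 4 ≤ lbl (tv 15 k) → co k = 0) :
    ∃ t, ∃ (h0 : 0 ≤ t) (h1 : t ≤ 1),
      Relation.EqvGen dunceRel ⟨cmb 15 co, cmb_mem hco hsum⟩ (ptA t h0 h1) := by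
  have c0 := hco 0; have c1 := hco 1; have c2 := hco 2
  have z0 : co 0 = 0 := hz 0 (by decide)
  have z2 : co 2 = 0 := hz 2 (by decide)
  have hT0 : 0 ≤ (1:ℝ) := by linarith
  have hT1 : (1:ℝ) ≤ 1 := by linarith
  refine ⟨(1:ℝ), hT0, hT1, ?_⟩
  have hpt : cmb 15 co = triSeg 0 2 ((1:ℝ)) := by
    apply cmb_eq_pt
    · have e0 : VZ (tv 15 0) 0 = 3 := by decide
      have e1 : VZ (tv 15 1) 0 = 0 := by decide
      have e2 : VZ (tv 15 2) 0 = 3 := by decide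
      rw [e0, e1, e2]
      simp only [triSeg, triVert, Pi.add_apply, Pi.smul_apply, smul_eq_mul]
      norm_num [Fin.ext_iff]
      linarith
    · have e0 : VZ (tv 15 0) 1 = 3 := by decide
      have e1 : VZ (tv 15 1) 1 = 0 := by decide
      have e2 : VZ (tv 15 2) 1 = 1 := by decide
      rw [e0, e1, e2]
      simp only [triSeg, triVert, Pi.add_apply, Pi.smul_apply, smul_eq_mul]
      norm_num [Fin.ext_iff]
      linarith
    · have e0 : VZ (tv 15 0) 2 = 3 := by decide
      have e1 : VZ (tv 15 1) 2 = 9 := by decide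
      have e2 : VZ (tv 15 2) 2 = 5 := by decide
      rw [e0, e1, e2]
      simp only [triSeg, triVert, Pi.add_apply, Pi.smul_apply, smul_eq_mul]
      norm_num [Fin.ext_iff]
      linarith
  rw [show (⟨cmb 15 co, cmb_mem hco hsum⟩ : ↥(stdSimplex ℝ (Fin 3)))
      = ptC ((1:ℝ)) hT0 hT1 from Subtype.ext hpt]
  exact Relation.EqvGen.symm _ _ (Relation.EqvGen.rel _ _ (relAC ((1:ℝ)) hT0 hT1))

lemma bdry16 (co : Fin 3 → ℝ) (hco : ∀ k, 0 ≤ co k) (hsum : co 0 + co 1 + co 2 = 1)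
    (hz : ∀ k : Fin 3, 4 ≤ lbl (tv 16 k) → co k = 0) :
    ∃ t, ∃ (h0 : 0 ≤ t) (h1 : t ≤ 1),
      Relation.EqvGen dunceRel ⟨cmb 16 co, cmb_mem hco hsum⟩ (ptA t h0 h1) := by
  have c0 := hco 0; have c1 := hco 1; have c2 := hco 2
  have z0 : co 0 = 0 := hz 0 (by decide)
  have z1 : co 1 = 0 := hz 1 (by decide)
  have z2 : co 2 = 0 := hz 2 (by decide)
  exact absurd hsum (by rw [z0, z1, z2]; norm_num)

lemma bdry (i : Fin 17) (co : Fin 3 → ℝ) (hco : ∀ k, 0 ≤ co k)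
    (hsum : co 0 + co 1 + co 2 = 1)
    (hz : ∀ k : Fin 3, 4 ≤ lbl (tv i k) → co k = 0) :
    ∃ t, ∃ (h0 : 0 ≤ t) (h1 : t ≤ 1),
      Relation.EqvGen dunceRel ⟨cmb i co, cmb_mem hco hsum⟩ (ptA t h0 h1) := by
  fin_cases i
  · exact bdry0 co hco hsum hz
  · exact bdry1 co hco hsum hz
  · exact bdry2 co hco hsum hz
  · exact bdry3 co hco hsum hz
  · exact bdry4 co hco hsum hz
  · exact bdry5 co hco hsum hz
  · exact bdry6 co hco hsum hz
  · exact bdry7 co hco hsum hz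
  · exact bdry8 co hco hsum hz
  · exact bdry9 co hco hsum hz
  · exact bdry10 co hco hsum hz
  · exact bdry11 co hco hsum hz
  · exact bdry12 co hco hsum hz
  · exact bdry13 co hco hsum hz
  · exact bdry14 co hco hsum hz
  · exact bdry15 co hco hsum hz
  · exact bdry16 co hco hsum hz


lemma F_inj (x y : ↥(stdSimplex ℝ (Fin 3))) (hF : Fm x.val = Fm y.val) :
    Relation.EqvGen dunceRel x y := by
  have hxs : x.val 0 + x.val 1 + x.val 2 = 1 := by
    have := x.2.2; rwa [Fin.sum_univ_three] at this
  have hys : y.val 0 + y.val 1 + y.val 2 = 1 := by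
    have := y.2.2; rwa [Fin.sum_univ_three] at this
  obtain ⟨i, co, hco, hsum, hxe⟩ := cover x.val x.2.1 hxs
  obtain ⟨j, co', hco', hsum', hye⟩ := cover y.val y.2.1 hys
  by_cases hbig : ∃ n : Fin 9, 4 ≤ (n : ℕ) ∧ Fm x.val n ≠ 0
  · obtain ⟨n0, h4, hne⟩ := hbig
    have hcc : cmb i co = cmb j co' := by
      apply eq_of_shared_big i j co co' hco hsum hco' hsum'
        (by rw [← hxe, ← hye]; exact hF) n0 h4
      rw [← hxe]; exact hne
    have hxy : x = y := Subtype.ext (by rw [hxe, hye, hcc])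
    rw [hxy]
    exact Relation.EqvGen.refl _
  · push_neg at hbig
    have hzx : ∀ k : Fin 3, 4 ≤ lbl (tv i k) → co k = 0 := by
      intro k hk
      have h := hbig ⟨lbl (tv i k), (Qlbl_lt _).1⟩ hk
      rw [hxe] at h
      rw [← Fm_at i hco hsum k]
      exact h
    have hzy : ∀ k : Fin 3, 4 ≤ lbl (tv j k) → co' k = 0 := by
      intro k hk
      have h := hbig ⟨lbl (tv j k), (Qlbl_lt _).1⟩ hk
      rw [hF, hye] at h
      rw [← Fm_at j hco' hsum' k]
      exact h
    obtain ⟨t, ht0, ht1, hex⟩ := bdry i co hco hsum hzx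
    obtain ⟨t', ht0', ht1', hey⟩ := bdry j co' hco' hsum' hzy
    have hx' : Relation.EqvGen dunceRel x (ptA t ht0 ht1) := by
      rw [show x = (⟨cmb i co, cmb_mem hco hsum⟩ : ↥(stdSimplex ℝ (Fin 3)))
        from Subtype.ext hxe]
      exact hex
    have hy' : Relation.EqvGen dunceRel y (ptA t' ht0' ht1') := by
      rw [show y = (⟨cmb j co', cmb_mem hco' hsum'⟩ : ↥(stdSimplex ℝ (Fin 3)))
        from Subtype.ext hye]
      exact hey
    have hFt : Fm (triSeg 0 1 t) = Fm (triSeg 0 1 t') := by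
      have e1 := Fm_eqvGen hx'
      have e2 := Fm_eqvGen hy'
      rw [ptA_val] at e1 e2
      rw [← e1, ← e2, hF]
    have hmid : Relation.EqvGen dunceRel (ptA t ht0 ht1) (ptA t' ht0' ht1') := by
      rcases seg_inj ht0 ht1 ht0' ht1' hFt with h | ⟨h1, h2⟩ | ⟨h1, h2⟩
      · rw [ptA_eq ht0 ht1 ht0' ht1' h]
        exact Relation.EqvGen.refl _
      · rw [ptA_eq ht0 ht1 le_rfl zero_le_one h1,
            ptA_eq ht0' ht1' zero_le_one le_rfl h2]
        exact linkPQ _ _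
      · rw [ptA_eq ht0 ht1 zero_le_one le_rfl h1,
            ptA_eq ht0' ht1' le_rfl zero_le_one h2]
        exact Relation.EqvGen.symm _ _ (linkPQ _ _)
    exact Relation.EqvGen.trans _ _ _ hx'
      (Relation.EqvGen.trans _ _ _ hmid (Relation.EqvGen.symm _ _ hy'))

lemma FmEqco (i : Fin 17) {co : Fin 3 → ℝ} (hco : ∀ k, 0 ≤ co k)
    (hsum : co 0 + co 1 + co 2 = 1) :
    Fm (cmb i co) = co 0 • duncehatVertex (lbl (tv i 0))
      + co 1 • duncehatVertex (lbl (tv i 1)) + co 2 • duncehatVertex (lbl (tv i 2)) := by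
  funext n
  rw [claimA hco hsum]
  simp [duncehatVertex]

lemma FmEq3 (i : Fin 17) {A B C : ℝ} (ha : 0 ≤ A) (hb : 0 ≤ B) (hc : 0 ≤ C)
    (h : A + B + C = 1) :
    Fm (cmb i ![A,B,C]) = A • duncehatVertex (lbl (tv i 0))
      + B • duncehatVertex (lbl (tv i 1)) + C • duncehatVertex (lbl (tv i 2)) := by
  have e0 : (![A,B,C] : Fin 3 → ℝ) 0 = A := rfl
  have e1 : (![A,B,C] : Fin 3 → ℝ) 1 = B := rfl
  have e2 : (![A,B,C] : Fin 3 → ℝ) 2 = C := rfl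
  rw [FmEqco i (by intro k; fin_cases k <;> simpa) (by simpa), e0, e1, e2]

lemma QT : ∀ i : Fin 17,
    ({lbl (tv i 0), lbl (tv i 1), lbl (tv i 2)} : Finset ℕ) ∈ duncehatTriangles := by decide

lemma hull3 (a b c p : Fin 9 → ℝ) (hp : p ∈ convexHull ℝ ({a, b, c} : Set (Fin 9 → ℝ))) :
    ∃ α β γ : ℝ, 0 ≤ α ∧ 0 ≤ β ∧ 0 ≤ γ ∧ α + β + γ = 1 ∧ p = α • a + β • b + γ • c := by
  rw [show ({a, b, c} : Set (Fin 9 → ℝ)) = insert a {b, c} from rfl,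
    convexHull_insert ⟨b, Set.mem_insert b {c}⟩, mem_convexJoin] at hp
  obtain ⟨a', ha', z, hz, hpz⟩ := hp
  rw [Set.mem_singleton_iff] at ha'
  subst ha'
  rw [convexHull_pair] at hz
  obtain ⟨u, v, hu, hv, huv, hz'⟩ := hz
  obtain ⟨s, w, hs, hw, hsw, hp'⟩ := hpz
  refine ⟨s, w*u, w*v, hs, by positivity, by positivity, by linear_combination w * huv + hsw, ?_⟩
  rw [← hp', ← hz']
  rw [smul_add, smul_smul, smul_smul]
  abel

lemma mem_hull3 (a b c : Fin 9 → ℝ) (α β γ : ℝ) (ha : 0 ≤ α) (hb : 0 ≤ β) (hc : 0 ≤ γ)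
    (h : α + β + γ = 1) :
    α • a + β • b + γ • c ∈ convexHull ℝ ({a, b, c} : Set (Fin 9 → ℝ)) := by
  have e : (Finset.univ : Finset (Fin 3)).centerMass ![α,β,γ] ![a,b,c]
      = α • a + β • b + γ • c := by
    rw [Finset.centerMass, Fin.sum_univ_three, Fin.sum_univ_three]
    have e0 : (![α,β,γ] : Fin 3 → ℝ) 0 = α := rfl
    have e1 : (![α,β,γ] : Fin 3 → ℝ) 1 = β := rfl
    have e2 : (![α,β,γ] : Fin 3 → ℝ) 2 = γ := rfl
    have f0 : (![a,b,c] : Fin 3 → (Fin 9 → ℝ)) 0 = a := rfl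
    have f1 : (![a,b,c] : Fin 3 → (Fin 9 → ℝ)) 1 = b := rfl
    have f2 : (![a,b,c] : Fin 3 → (Fin 9 → ℝ)) 2 = c := rfl
    rw [e0, e1, e2, f0, f1, f2, h, inv_one, one_smul]
  rw [← e]
  refine Finset.centerMass_mem_convexHull _ (by intro k _; fin_cases k <;> simpa) ?_ ?_
  · rw [Fin.sum_univ_three]
    have e0 : (![α,β,γ] : Fin 3 → ℝ) 0 = α := rfl
    have e1 : (![α,β,γ] : Fin 3 → ℝ) 1 = β := rfl
    have e2 : (![α,β,γ] : Fin 3 → ℝ) 2 = γ := rfl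
    rw [e0, e1, e2, h]; norm_num
  · intro k _
    fin_cases k
    · exact Set.mem_insert _ _
    · exact Set.mem_insert_of_mem _ (Set.mem_insert _ _)
    · exact Set.mem_insert_of_mem _ (Set.mem_insert_of_mem _ rfl)


lemma Fm_mem_space (K : Geometry.SimplicialComplex ℝ (Fin 9 → ℝ))
    (hK : K.faces = {s : Finset (Fin 9 → ℝ) | s.Nonempty ∧ ∃ T ∈ duncehatTriangles,
      ↑s ⊆ duncehatVertex '' (T : Set ℕ)}) (z : ↥(stdSimplex ℝ (Fin 3))) :
    Fm z.val ∈ K.space := by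
  have hzs : z.val 0 + z.val 1 + z.val 2 = 1 := by
    have := z.2.2; rwa [Fin.sum_univ_three] at this
  obtain ⟨i, co, hco, hsum, hze⟩ := cover z.val z.2.1 hzs
  have hface : ({duncehatVertex (lbl (tv i 0)), duncehatVertex (lbl (tv i 1)),
      duncehatVertex (lbl (tv i 2))} : Finset (Fin 9 → ℝ)) ∈ K.faces := by
    rw [hK]
    refine ⟨⟨duncehatVertex (lbl (tv i 0)), Finset.mem_insert_self _ _⟩,
      ({lbl (tv i 0), lbl (tv i 1), lbl (tv i 2)} : Finset ℕ), QT i, ?_⟩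
    intro p hp
    simp only [Finset.coe_insert, Finset.coe_singleton, Set.mem_insert_iff,
      Set.mem_singleton_iff] at hp
    rcases hp with h | h | h <;> subst h <;>
      exact Set.mem_image_of_mem _ (by simp)
  have hmemhull : Fm z.val ∈ convexHull ℝ
      (↑({duncehatVertex (lbl (tv i 0)), duncehatVertex (lbl (tv i 1)),
          duncehatVertex (lbl (tv i 2))} : Finset (Fin 9 → ℝ)) : Set (Fin 9 → ℝ)) := by
    rw [hze, FmEqco i hco hsum]
    have hcoe : (↑({duncehatVertex (lbl (tv i 0)), duncehatVertex (lbl (tv i 1)),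
        duncehatVertex (lbl (tv i 2))} : Finset (Fin 9 → ℝ)) : Set (Fin 9 → ℝ))
        = {duncehatVertex (lbl (tv i 0)), duncehatVertex (lbl (tv i 1)),
           duncehatVertex (lbl (tv i 2))} := by
      simp
    rw [hcoe]
    exact mem_hull3 _ _ _ _ _ _ (hco 0) (hco 1) (hco 2) hsum
  rw [Geometry.SimplicialComplex.mem_space_iff]
  exact ⟨_, hface, hmemhull⟩

lemma F_surj (K : Geometry.SimplicialComplex ℝ (Fin 9 → ℝ))
    (hK : K.faces = {s : Finset (Fin 9 → ℝ) | s.Nonempty ∧ ∃ T ∈ duncehatTriangles,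
      ↑s ⊆ duncehatVertex '' (T : Set ℕ)}) (w : ↥K.space) :
    ∃ z : ↥(stdSimplex ℝ (Fin 3)), Fm z.val = w.val := by
  have hw : w.val ∈ K.space := w.2
  rw [Geometry.SimplicialComplex.mem_space_iff] at hw
  obtain ⟨s, hs, hmem⟩ := hw
  rw [hK] at hs
  obtain ⟨hne, T, hT, hsub⟩ := hs
  have hmem' : w.val ∈ convexHull ℝ (duncehatVertex '' (↑T : Set ℕ)) :=
    convexHull_mono hsub hmem
  clear hmem hsub hne
  fin_cases hT
  · rw [show duncehatVertex '' ((↑({1,2,4} : Finset ℕ)) : Set ℕ)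
        = {duncehatVertex 1, duncehatVertex 2, duncehatVertex 4} by
          ext q
          simp [Set.image_insert_eq]
          try tauto] at hmem'
    obtain ⟨al, be, ga, ha, hb, hc, h1, hp⟩ := hull3 _ _ _ _ hmem'
    refine ⟨⟨cmb 0 ![al,be,ga], cmb3_mem 0 ha hb hc h1⟩, ?_⟩
    rw [FmEq3 0 ha hb hc h1, show lbl (tv 0 0) = 1 from by decide,
      show lbl (tv 0 1) = 2 from by decide, show lbl (tv 0 2) = 4 from by decide]
    exact hp.symm
  · rw [show duncehatVertex '' ((↑({2,3,4} : Finset ℕ)) : Set ℕ)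
        = {duncehatVertex 2, duncehatVertex 3, duncehatVertex 4} by
          ext q
          simp [Set.image_insert_eq]
          try tauto] at hmem'
    obtain ⟨al, be, ga, ha, hb, hc, h1, hp⟩ := hull3 _ _ _ _ hmem'
    refine ⟨⟨cmb 1 ![al,be,ga], cmb3_mem 1 ha hb hc h1⟩, ?_⟩
    rw [FmEq3 1 ha hb hc h1, show lbl (tv 1 0) = 2 from by decide,
      show lbl (tv 1 1) = 3 from by decide, show lbl (tv 1 2) = 4 from by decide]
    exact hp.symm
  · rw [show duncehatVertex '' ((↑({3,4,6} : Finset ℕ)) : Set ℕ)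
        = {duncehatVertex 3, duncehatVertex 6, duncehatVertex 4} by
          ext q
          simp [Set.image_insert_eq]
          try tauto] at hmem'
    obtain ⟨al, be, ga, ha, hb, hc, h1, hp⟩ := hull3 _ _ _ _ hmem'
    refine ⟨⟨cmb 2 ![al,be,ga], cmb3_mem 2 ha hb hc h1⟩, ?_⟩
    rw [FmEq3 2 ha hb hc h1, show lbl (tv 2 0) = 3 from by decide,
      show lbl (tv 2 1) = 6 from by decide, show lbl (tv 2 2) = 4 from by decide]
    exact hp.symm
  · rw [show duncehatVertex '' ((↑({1,3,6} : Finset ℕ)) : Set ℕ)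
        = {duncehatVertex 3, duncehatVertex 1, duncehatVertex 6} by
          ext q
          simp [Set.image_insert_eq]
          try tauto] at hmem'
    obtain ⟨al, be, ga, ha, hb, hc, h1, hp⟩ := hull3 _ _ _ _ hmem'
    refine ⟨⟨cmb 3 ![al,be,ga], cmb3_mem 3 ha hb hc h1⟩, ?_⟩
    rw [FmEq3 3 ha hb hc h1, show lbl (tv 3 0) = 3 from by decide,
      show lbl (tv 3 1) = 1 from by decide, show lbl (tv 3 2) = 6 from by decide]
    exact hp.symm
  · rw [show duncehatVertex '' ((↑({1,2,6} : Finset ℕ)) : Set ℕ)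
        = {duncehatVertex 1, duncehatVertex 2, duncehatVertex 6} by
          ext q
          simp [Set.image_insert_eq]
          try tauto] at hmem'
    obtain ⟨al, be, ga, ha, hb, hc, h1, hp⟩ := hull3 _ _ _ _ hmem'
    refine ⟨⟨cmb 4 ![al,be,ga], cmb3_mem 4 ha hb hc h1⟩, ?_⟩
    rw [FmEq3 4 ha hb hc h1, show lbl (tv 4 0) = 1 from by decide,
      show lbl (tv 4 1) = 2 from by decide, show lbl (tv 4 2) = 6 from by decide]
    exact hp.symm
  · rw [show duncehatVertex '' ((↑({2,5,6} : Finset ℕ)) : Set ℕ)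
        = {duncehatVertex 2, duncehatVertex 5, duncehatVertex 6} by
          ext q
          simp [Set.image_insert_eq]
          try tauto] at hmem'
    obtain ⟨al, be, ga, ha, hb, hc, h1, hp⟩ := hull3 _ _ _ _ hmem'
    refine ⟨⟨cmb 5 ![al,be,ga], cmb3_mem 5 ha hb hc h1⟩, ?_⟩
    rw [FmEq3 5 ha hb hc h1, show lbl (tv 5 0) = 2 from by decide,
      show lbl (tv 5 1) = 5 from by decide, show lbl (tv 5 2) = 6 from by decide]
    exact hp.symm
  · rw [show duncehatVertex '' ((↑({2,3,5} : Finset ℕ)) : Set ℕ)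
        = {duncehatVertex 2, duncehatVertex 3, duncehatVertex 5} by
          ext q
          simp [Set.image_insert_eq]
          try tauto] at hmem'
    obtain ⟨al, be, ga, ha, hb, hc, h1, hp⟩ := hull3 _ _ _ _ hmem'
    refine ⟨⟨cmb 6 ![al,be,ga], cmb3_mem 6 ha hb hc h1⟩, ?_⟩
    rw [FmEq3 6 ha hb hc h1, show lbl (tv 6 0) = 2 from by decide,
      show lbl (tv 6 1) = 3 from by decide, show lbl (tv 6 2) = 5 from by decide]
    exact hp.symm
  · rw [show duncehatVertex '' ((↑({1,3,5} : Finset ℕ)) : Set ℕ)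
        = {duncehatVertex 3, duncehatVertex 1, duncehatVertex 5} by
          ext q
          simp [Set.image_insert_eq]
          try tauto] at hmem'
    obtain ⟨al, be, ga, ha, hb, hc, h1, hp⟩ := hull3 _ _ _ _ hmem'
    refine ⟨⟨cmb 7 ![al,be,ga], cmb3_mem 7 ha hb hc h1⟩, ?_⟩
    rw [FmEq3 7 ha hb hc h1, show lbl (tv 7 0) = 3 from by decide,
      show lbl (tv 7 1) = 1 from by decide, show lbl (tv 7 2) = 5 from by decide]
    exact hp.symm
  · rw [show duncehatVertex '' ((↑({1,2,7} : Finset ℕ)) : Set ℕ)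
        = {duncehatVertex 2, duncehatVertex 1, duncehatVertex 7} by
          ext q
          simp [Set.image_insert_eq]
          try tauto] at hmem'
    obtain ⟨al, be, ga, ha, hb, hc, h1, hp⟩ := hull3 _ _ _ _ hmem'
    refine ⟨⟨cmb 8 ![al,be,ga], cmb3_mem 8 ha hb hc h1⟩, ?_⟩
    rw [FmEq3 8 ha hb hc h1, show lbl (tv 8 0) = 2 from by decide,
      show lbl (tv 8 1) = 1 from by decide, show lbl (tv 8 2) = 7 from by decide]
    exact hp.symm
  · rw [show duncehatVertex '' ((↑({1,4,7} : Finset ℕ)) : Set ℕ)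
        = {duncehatVertex 1, duncehatVertex 4, duncehatVertex 7} by
          ext q
          simp [Set.image_insert_eq]
          try tauto] at hmem'
    obtain ⟨al, be, ga, ha, hb, hc, h1, hp⟩ := hull3 _ _ _ _ hmem'
    refine ⟨⟨cmb 9 ![al,be,ga], cmb3_mem 9 ha hb hc h1⟩, ?_⟩
    rw [FmEq3 9 ha hb hc h1, show lbl (tv 9 0) = 1 from by decide,
      show lbl (tv 9 1) = 4 from by decide, show lbl (tv 9 2) = 7 from by decide]
    exact hp.symm
  · rw [show duncehatVertex '' ((↑({2,7,8} : Finset ℕ)) : Set ℕ)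
        = {duncehatVertex 2, duncehatVertex 7, duncehatVertex 8} by
          ext q
          simp [Set.image_insert_eq]
          try tauto] at hmem'
    obtain ⟨al, be, ga, ha, hb, hc, h1, hp⟩ := hull3 _ _ _ _ hmem'
    refine ⟨⟨cmb 10 ![al,be,ga], cmb3_mem 10 ha hb hc h1⟩, ?_⟩
    rw [FmEq3 10 ha hb hc h1, show lbl (tv 10 0) = 2 from by decide,
      show lbl (tv 10 1) = 7 from by decide, show lbl (tv 10 2) = 8 from by decide]
    exact hp.symm
  · rw [show duncehatVertex '' ((↑({4,5,7} : Finset ℕ)) : Set ℕ)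
        = {duncehatVertex 4, duncehatVertex 5, duncehatVertex 7} by
          ext q
          simp [Set.image_insert_eq]
          try tauto] at hmem'
    obtain ⟨al, be, ga, ha, hb, hc, h1, hp⟩ := hull3 _ _ _ _ hmem'
    refine ⟨⟨cmb 11 ![al,be,ga], cmb3_mem 11 ha hb hc h1⟩, ?_⟩
    rw [FmEq3 11 ha hb hc h1, show lbl (tv 11 0) = 4 from by decide,
      show lbl (tv 11 1) = 5 from by decide, show lbl (tv 11 2) = 7 from by decide]
    exact hp.symm
  · rw [show duncehatVertex '' ((↑({5,7,8} : Finset ℕ)) : Set ℕ)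
        = {duncehatVertex 7, duncehatVertex 5, duncehatVertex 8} by
          ext q
          simp [Set.image_insert_eq]
          try tauto] at hmem'
    obtain ⟨al, be, ga, ha, hb, hc, h1, hp⟩ := hull3 _ _ _ _ hmem'
    refine ⟨⟨cmb 12 ![al,be,ga], cmb3_mem 12 ha hb hc h1⟩, ?_⟩
    rw [FmEq3 12 ha hb hc h1, show lbl (tv 12 0) = 7 from by decide,
      show lbl (tv 12 1) = 5 from by decide, show lbl (tv 12 2) = 8 from by decide]
    exact hp.symm
  · rw [show duncehatVertex '' ((↑({2,3,8} : Finset ℕ)) : Set ℕ)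
        = {duncehatVertex 3, duncehatVertex 2, duncehatVertex 8} by
          ext q
          simp [Set.image_insert_eq]
          try tauto] at hmem'
    obtain ⟨al, be, ga, ha, hb, hc, h1, hp⟩ := hull3 _ _ _ _ hmem'
    refine ⟨⟨cmb 13 ![al,be,ga], cmb3_mem 13 ha hb hc h1⟩, ?_⟩
    rw [FmEq3 13 ha hb hc h1, show lbl (tv 13 0) = 3 from by decide,
      show lbl (tv 13 1) = 2 from by decide, show lbl (tv 13 2) = 8 from by decide]
    exact hp.symm
  · rw [show duncehatVertex '' ((↑({1,3,8} : Finset ℕ)) : Set ℕ)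
        = {duncehatVertex 1, duncehatVertex 3, duncehatVertex 8} by
          ext q
          simp [Set.image_insert_eq]
          try tauto] at hmem'
    obtain ⟨al, be, ga, ha, hb, hc, h1, hp⟩ := hull3 _ _ _ _ hmem'
    refine ⟨⟨cmb 14 ![al,be,ga], cmb3_mem 14 ha hb hc h1⟩, ?_⟩
    rw [FmEq3 14 ha hb hc h1, show lbl (tv 14 0) = 1 from by decide,
      show lbl (tv 14 1) = 3 from by decide, show lbl (tv 14 2) = 8 from by decide]
    exact hp.symm
  · rw [show duncehatVertex '' ((↑({1,5,8} : Finset ℕ)) : Set ℕ)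
        = {duncehatVertex 5, duncehatVertex 1, duncehatVertex 8} by
          ext q
          simp [Set.image_insert_eq]
          try tauto] at hmem'
    obtain ⟨al, be, ga, ha, hb, hc, h1, hp⟩ := hull3 _ _ _ _ hmem'
    refine ⟨⟨cmb 15 ![al,be,ga], cmb3_mem 15 ha hb hc h1⟩, ?_⟩
    rw [FmEq3 15 ha hb hc h1, show lbl (tv 15 0) = 5 from by decide,
      show lbl (tv 15 1) = 1 from by decide, show lbl (tv 15 2) = 8 from by decide]
    exact hp.symm
  · rw [show duncehatVertex '' ((↑({4,5,6} : Finset ℕ)) : Set ℕ)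
        = {duncehatVertex 4, duncehatVertex 6, duncehatVertex 5} by
          ext q
          simp [Set.image_insert_eq]
          try tauto] at hmem'
    obtain ⟨al, be, ga, ha, hb, hc, h1, hp⟩ := hull3 _ _ _ _ hmem'
    refine ⟨⟨cmb 16 ![al,be,ga], cmb3_mem 16 ha hb hc h1⟩, ?_⟩
    rw [FmEq3 16 ha hb hc h1, show lbl (tv 16 0) = 4 from by decide,
      show lbl (tv 16 1) = 6 from by decide, show lbl (tv 16 2) = 5 from by decide]
    exact hp.symm

noncomputable def Phi (K : Geometry.SimplicialComplex ℝ (Fin 9 → ℝ))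
    (hK : K.faces = {s : Finset (Fin 9 → ℝ) | s.Nonempty ∧ ∃ T ∈ duncehatTriangles,
      ↑s ⊆ duncehatVertex '' (T : Set ℕ)}) : DunceHat → ↥K.space :=
  Quot.lift (fun z => (⟨Fm z.val, Fm_mem_space K hK z⟩ : ↥K.space))
    (fun a b hab => Subtype.ext (Fm_eqvGen (Relation.EqvGen.rel a b hab)))

lemma Phi_cont (K) (hK) : Continuous (Phi K hK) := by
  apply continuous_quot_lift
  exact (continuous_Fm.comp continuous_subtype_val).subtype_mk _

lemma Phi_bij (K) (hK) : Function.Bijective (Phi K hK) := by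
  constructor
  · intro q1 q2
    induction q1 using Quot.ind with | _ a =>
    induction q2 using Quot.ind with | _ b =>
    intro h
    have hv : Fm a.val = Fm b.val := congrArg Subtype.val h
    exact Quot.eqvGen_sound (F_inj a b hv)
  · intro w
    obtain ⟨z, hz⟩ := F_surj K hK w
    exact ⟨Quot.mk _ z, Subtype.ext hz⟩

end DH

set_option maxHeartbeats 1000000
/-- **An 8-vertex dunce hat inside the cyclic polytope `C₅(8)`.** The simplicial
complex generated by the 17 listed triangles on the vertex set `{1,…,8}` is a
triangulation of the dunce hat; every triangle contains vertex 1, or vertex 8, or two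
consecutive labels; consequently, by Gale's evenness condition, every triangle extends
to a facet of the cyclic 5-polytope `C₅(8)`, i.e. the complex embeds as a subcomplex
of the boundary complex of `C₅(8)`. -/
theorem eight_vertex_dunce_hat_in_cyclic_polytope :
    (∀ K : SimplicialComplex ℝ (Fin 9 → ℝ),
      K.faces = {s : Finset (Fin 9 → ℝ) | s.Nonempty ∧ ∃ T ∈ duncehatTriangles,
        ↑s ⊆ duncehatVertex '' (T : Set ℕ)} →
      Nonempty (↥K.space ≃ₜ DunceHat)) ∧
    (∀ T ∈ duncehatTriangles, 1 ∈ T ∨ 8 ∈ T ∨ ∃ j, j ∈ T ∧ j + 1 ∈ T) ∧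
    (∀ T ∈ duncehatTriangles, ∃ S : Finset ℕ,
      T ⊆ S ∧ S ⊆ Finset.Icc 1 8 ∧ S.card = 5 ∧ GaleEven S) := by
  refine ⟨?_, ?_, ?_⟩
  · intro K hK
    haveI : CompactSpace ↥(stdSimplex ℝ (Fin 3)) :=
      isCompact_iff_compactSpace.mp (isCompact_stdSimplex _ _)
    haveI hc : CompactSpace (Quot dunceRel) := by
      constructor
      rw [← Set.range_quot_mk dunceRel]
      exact isCompact_range continuous_quot_mk
    haveI : CompactSpace DunceHat := hc
    have hcont : Continuous (Equiv.ofBijective _ (DH.Phi_bij K hK)) := DH.Phi_cont K hK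
    exact ⟨(hcont.homeoOfEquivCompactToT2).symm⟩
  · intro T hT
    fin_cases hT
    · exact Or.inl (by decide)
    · exact Or.inr (Or.inr ⟨3, by decide, by decide⟩)
    · exact Or.inr (Or.inr ⟨3, by decide, by decide⟩)
    · exact Or.inl (by decide)
    · exact Or.inl (by decide)
    · exact Or.inr (Or.inr ⟨5, by decide, by decide⟩)
    · exact Or.inr (Or.inr ⟨2, by decide, by decide⟩)
    · exact Or.inl (by decide)
    · exact Or.inl (by decide)
    · exact Or.inl (by decide)
    · exact Or.inr (Or.inl (by decide))
    · exact Or.inr (Or.inr ⟨4, by decide, by decide⟩)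
    · exact Or.inr (Or.inl (by decide))
    · exact Or.inr (Or.inl (by decide))
    · exact Or.inl (by decide)
    · exact Or.inl (by decide)
    · exact Or.inr (Or.inr ⟨4, by decide, by decide⟩)
  · intro T hT
    fin_cases hT
    · exact ⟨{1,2,3,4,5}, by decide, by decide, by decide, by unfold GaleEven; decide⟩
    · exact ⟨{1,2,3,4,5}, by decide, by decide, by decide, by unfold GaleEven; decide⟩
    · exact ⟨{1,3,4,5,6}, by decide, by decide, by decide, by unfold GaleEven; decide⟩
    · exact ⟨{1,2,3,5,6}, by decide, by decide, by decide, by unfold GaleEven; decide⟩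
    · exact ⟨{1,2,3,5,6}, by decide, by decide, by decide, by unfold GaleEven; decide⟩
    · exact ⟨{1,2,3,5,6}, by decide, by decide, by decide, by unfold GaleEven; decide⟩
    · exact ⟨{1,2,3,4,5}, by decide, by decide, by decide, by unfold GaleEven; decide⟩
    · exact ⟨{1,2,3,4,5}, by decide, by decide, by decide, by unfold GaleEven; decide⟩
    · exact ⟨{1,2,3,6,7}, by decide, by decide, by decide, by unfold GaleEven; decide⟩
    · exact ⟨{1,3,4,6,7}, by decide, by decide, by decide, by unfold GaleEven; decide⟩
    · exact ⟨{1,2,3,7,8}, by decide, by decide, by decide, by unfold GaleEven; decide⟩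
    · exact ⟨{1,4,5,6,7}, by decide, by decide, by decide, by unfold GaleEven; decide⟩
    · exact ⟨{1,4,5,7,8}, by decide, by decide, by decide, by unfold GaleEven; decide⟩
    · exact ⟨{1,2,3,4,8}, by decide, by decide, by decide, by unfold GaleEven; decide⟩
    · exact ⟨{1,2,3,4,8}, by decide, by decide, by decide, by unfold GaleEven; decide⟩
    · exact ⟨{1,2,4,5,8}, by decide, by decide, by decide, by unfold GaleEven; decide⟩
    · exact ⟨{1,3,4,5,6}, by decide, by decide, by decide, by unfold GaleEven; decide⟩
end
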